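/- arXiv:1808.01404 — 4 statements merged into one kernel-verified Lean document; each statement's English description precedes it below -/
import Mathlib

section
/- Let p, q ≥ 0, and let c, α, β, γ be complex numbers with Re(c) > Re(γ) > 0, Re(α) > 0 and Re(β) > 0. Then the extended (p,q)-Mittag-Leffler function has the integral representation E^{γ,c}_{α,β}(z; p, q) = (1/B(γ, c−γ)) ∫₀¹ t^{γ−1} (1−t)^{c−γ−1} exp(−p/t − q/(1−t)) E^c_{α,β}(t z) dt for every complex z. -/
open MeasureTheory Complex

/-- The extended beta function `B(x, y; p, q) = ∫₀¹ t^(x-1) (1-t)^(y-1) exp(-p/t - q/(1-t)) dt`. -/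
noncomputable def extBeta (p q x y : ℂ) : ℂ :=
  ∫ t in (0:ℝ)..1, (t : ℂ) ^ (x - 1) * (1 - (t : ℂ)) ^ (y - 1) *
    Complex.exp (-(p / t) - q / (1 - (t : ℂ)))

/-- The classical beta function `B(x, y) = Γ(x)Γ(y)/Γ(x+y)`. -/
noncomputable def cBeta (x y : ℂ) : ℂ :=
  Complex.Gamma x * Complex.Gamma y / Complex.Gamma (x + y)

/-- The Pochhammer symbol `(c)ₙ = c (c+1) ⋯ (c+n-1)`. -/
noncomputable def poch (c : ℂ) (n : ℕ) : ℂ :=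
  ∏ i ∈ Finset.range n, (c + i)

/-- The Prabhakar Mittag-Leffler function `E^c_{α,β}(z) = Σ (c)ₙ zⁿ / (Γ(αn+β) n!)`. -/
noncomputable def prabhakarML (α β c z : ℂ) : ℂ :=
  ∑' n : ℕ, poch c n * z ^ n / (Complex.Gamma (α * n + β) * n.factorial)

/-- The extended (p,q)-Mittag-Leffler function
`E^{γ,c}_{α,β}(z; p, q) = Σ [B(γ+n, c-γ; p, q)/B(γ, c-γ)] (c)ₙ zⁿ / (Γ(αn+β) n!)`. -/
noncomputable def extML (α β γ c p q z : ℂ) : ℂ :=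
  ∑' n : ℕ, extBeta p q (γ + n) (c - γ) / cBeta γ (c - γ) * poch c n * z ^ n /
    (Complex.Gamma (α * n + β) * n.factorial)



open Filter Topology

lemma sum_inv_sq_le (x : ℝ) (hx : 1 ≤ x) (n : ℕ) :
    ∑ j ∈ Finset.range (n+1), 1/(x+j)^2 ≤ 2/x - 1/(x+n) := by
  have hx0 : 0 < x := by linarith
  induction n with
  | zero =>
    norm_num [Finset.sum_range_one]
    have h1 : (x^2)⁻¹ ≤ x⁻¹ := by
      rw [inv_le_inv₀ (by positivity) hx0]
      nlinarith
    have : 2/x - x⁻¹ = x⁻¹ := by field_simp; ring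
    linarith [h1]
  | succ n ih =>
    rw [Finset.sum_range_succ]
    have hxn : (0:ℝ) < x + n := by positivity
    have hxn1 : (0:ℝ) < x + (n+1) := by positivity
    have key : 1/(x+(n+1):ℝ)^2 ≤ 1/(x+n) - 1/(x+(n+1)) := by
      rw [div_sub_div _ _ (ne_of_gt hxn) (ne_of_gt hxn1), div_le_div_iff₀ (by positivity) (by positivity)]
      ring_nf
      nlinarith
    push_cast
    push_cast at ih
    linarith

lemma norm_Gamma_ge (x y : ℝ) (hx : 1 ≤ x) :
    Real.Gamma x * Real.exp (-(y^2/x)) ≤ ‖Complex.Gamma (↑x + ↑y * Complex.I)‖ := by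
  set s : ℂ := ↑x + ↑y * Complex.I with hs
  have hsre : s.re = x := by simp [hs]
  have key : ∀ n : ℕ, 1 ≤ n →
      Real.GammaSeq x n * Real.exp (-(y^2/x)) ≤ ‖Complex.GammaSeq s n‖ := by
    intro n hn
    have hn0 : (0:ℝ) < n := by exact_mod_cast hn
    -- pointwise bound on factors
    have hfac : ∀ j ∈ Finset.range (n+1),
        ‖s + (j:ℂ)‖ ≤ (x + j) * Real.exp (y^2/2 * (1/(x+j)^2)) := by
      intro j _
      have hxj : (0:ℝ) < x + j := by positivity
      have hb : (0:ℝ) ≤ (x + j) * Real.exp (y^2/2 * (1/(x+j)^2)) := by positivity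
      refine le_of_pow_le_pow_left₀ two_ne_zero hb ?_
      have hsq : ‖s + (j:ℂ)‖^2 = (x+j)^2 + y^2 := by
        rw [Complex.sq_norm, Complex.normSq_apply]
        simp [hs]
        ring
      have harg : ((2:ℕ):ℝ) * (y^2/2*(1/(x+j)^2)) = y^2/(x+j)^2 := by
        push_cast; field_simp
      rw [hsq, mul_pow, ← Real.exp_nat_mul, harg]
      have h1u : 1 + y^2/(x+j)^2 ≤ Real.exp (y^2/(x+j)^2) := by
        have := Real.add_one_le_exp (y^2/(x+j)^2); linarith
      have : (x+j)^2 * (1 + y^2/(x+j)^2) = (x+j)^2 + y^2 := by field_simp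
      nlinarith [Real.exp_pos (y^2/(x+j)^2), sq_nonneg (x+j),
        mul_le_mul_of_nonneg_left h1u (sq_nonneg (x+j))]
    -- product bound
    have hprodpos : (0:ℝ) < ∏ j ∈ Finset.range (n+1), (x + j) := by
      apply Finset.prod_pos; intro j _; positivity
    have hQpos : (0:ℝ) < ∏ j ∈ Finset.range (n+1), ‖s + (j:ℂ)‖ := by
      apply Finset.prod_pos; intro j _
      have : (s + (j:ℂ)).re = x + j := by simp [hs]
      have hre : 0 < (s + (j:ℂ)).re := by rw [this]; positivity
      exact lt_of_lt_of_le hre (Complex.re_le_norm _)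
    have hprod : (∏ j ∈ Finset.range (n+1), ‖s + (j:ℂ)‖) ≤
        (∏ j ∈ Finset.range (n+1), (x + j)) * Real.exp (y^2/x) := by
      calc (∏ j ∈ Finset.range (n+1), ‖s + (j:ℂ)‖)
          ≤ ∏ j ∈ Finset.range (n+1), (x + j) * Real.exp (y^2/2 * (1/(x+j)^2)) :=
            Finset.prod_le_prod (fun j _ => norm_nonneg _) hfac
        _ = (∏ j ∈ Finset.range (n+1), (x + j)) *
              Real.exp (∑ j ∈ Finset.range (n+1), y^2/2 * (1/(x+j)^2)) := by
            rw [Finset.prod_mul_distrib, Real.exp_sum]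
        _ ≤ (∏ j ∈ Finset.range (n+1), (x + j)) * Real.exp (y^2/x) := by
            apply mul_le_mul_of_nonneg_left _ hprodpos.le
            apply Real.exp_le_exp.2
            rw [← Finset.mul_sum]
            have h1 := sum_inv_sq_le x hx n
            have h2 : (0:ℝ) < x + n := by positivity
            have h3 : (0:ℝ) ≤ y^2/2 := by positivity
            calc y^2/2 * ∑ j ∈ Finset.range (n+1), 1/(x+j)^2
                ≤ y^2/2 * (2/x) := by
                  apply mul_le_mul_of_nonneg_left _ h3
                  have : 0 < 1/(x+n) := by positivity
                  linarith
              _ = y^2/x := by field_simp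
    -- norm of GammaSeq
    have hnorm : ‖Complex.GammaSeq s n‖ =
        (n:ℝ)^x * n.factorial / ∏ j ∈ Finset.range (n+1), ‖s + (j:ℂ)‖ := by
      rw [Complex.GammaSeq, norm_div, norm_mul, norm_prod]
      congr 2
      · rw [show (n:ℂ) = ((n:ℝ):ℂ) by norm_num,
          Complex.norm_cpow_eq_rpow_re_of_pos hn0, hsre]
      · simp
    rw [hnorm, Real.GammaSeq]
    have hA : (0:ℝ) ≤ (n:ℝ)^x * n.factorial := by positivity
    have heq : (n:ℝ)^x * n.factorial / (∏ j ∈ Finset.range (n+1), (x + j)) *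
        Real.exp (-(y^2/x)) = (n:ℝ)^x * n.factorial /
          ((∏ j ∈ Finset.range (n+1), (x + j)) * Real.exp (y^2/x)) := by
      rw [Real.exp_neg, inv_eq_one_div, div_mul_div_comm, mul_one]
    rw [heq]
    exact div_le_div_of_nonneg_left hA hQpos hprod
  have t1 : Tendsto (fun n => Real.GammaSeq x n * Real.exp (-(y^2/x))) atTop
      (𝓝 (Real.Gamma x * Real.exp (-(y^2/x)))) :=
    (Real.GammaSeq_tendsto_Gamma x).mul_const _
  have t2 : Tendsto (fun n => ‖Complex.GammaSeq s n‖) atTop (𝓝 ‖Complex.Gamma s‖) :=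
    (Complex.GammaSeq_tendsto_Gamma s).norm
  exact le_of_tendsto_of_tendsto t1 t2 (eventually_atTop.2 ⟨1, key⟩)

lemma gamma_real_lb (N : ℕ) (hN : 3 ≤ N) (t : ℝ) (ht : (N:ℝ) + 1 ≤ t) :
    Real.Gamma N * Real.exp ((t - N) * Real.log ((N:ℝ) - 1)) ≤ Real.Gamma t := by
  have hN1 : (3:ℝ) ≤ N := by exact_mod_cast hN
  have hx : (N:ℝ) - 1 ∈ Set.Ioi (0:ℝ) := by simp; linarith
  have hy : (N:ℝ) ∈ Set.Ioi (0:ℝ) := by simp; linarith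
  have hz : t ∈ Set.Ioi (0:ℝ) := by simp; linarith
  have hxy : (N:ℝ) - 1 < N := by linarith
  have hyz : (N:ℝ) < t := by linarith
  have hslope := Real.convexOn_log_Gamma.slope_mono_adjacent hx hz hxy hyz
  have hGN1 : Real.Gamma ((N:ℝ) - 1) > 0 := Real.Gamma_pos_of_pos (by linarith)
  have hGN : Real.Gamma (N:ℝ) > 0 := Real.Gamma_pos_of_pos (by linarith)
  have hGt : Real.Gamma t > 0 := Real.Gamma_pos_of_pos (by linarith)
  have hGamma_eq : Real.Gamma (N:ℝ) = ((N:ℝ) - 1) * Real.Gamma ((N:ℝ) - 1) := by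
    have hne : (N:ℝ) - 1 ≠ 0 := by intro h; rw [sub_eq_zero] at h; rw [h] at hN1; linarith
    have := Real.Gamma_add_one (s := (N:ℝ) - 1) hne
    rw [show (N:ℝ) - 1 + 1 = N by ring] at this
    exact this
  have hlogdiff : (Real.log ∘ Real.Gamma) (N:ℝ) - (Real.log ∘ Real.Gamma) ((N:ℝ)-1)
      = Real.log ((N:ℝ) - 1) := by
    simp only [Function.comp_apply]
    rw [hGamma_eq, Real.log_mul (by linarith) (ne_of_gt hGN1)]
    ring
  rw [show (N:ℝ) - ((N:ℝ)-1) = 1 by ring, div_one, hlogdiff] at hslope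
  have hlog : Real.log (Real.Gamma (N:ℝ)) + (t - N) * Real.log ((N:ℝ)-1)
      ≤ Real.log (Real.Gamma t) := by
    have htN : 0 < t - N := by linarith
    rw [le_div_iff₀ htN] at hslope
    simp only [Function.comp_apply] at hslope ⊢
    nlinarith [hslope]
  calc Real.Gamma (N:ℝ) * Real.exp ((t - N) * Real.log ((N:ℝ)-1))
      = Real.exp (Real.log (Real.Gamma (N:ℝ)) + (t - N) * Real.log ((N:ℝ)-1)) := by
        rw [Real.exp_add, Real.exp_log hGN]
    _ ≤ Real.exp (Real.log (Real.Gamma t)) := Real.exp_le_exp.2 hlog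
    _ = Real.Gamma t := Real.exp_log hGt

lemma norm_poch_le (c : ℂ) (n : ℕ) :
    ‖poch c n‖ ≤ (1 + ‖c‖)^n * n.factorial := by
  rw [poch, norm_prod]
  calc ∏ i ∈ Finset.range n, ‖c + (i:ℂ)‖
      ≤ ∏ i ∈ Finset.range n, (1 + ‖c‖) * (1 + i) := by
        apply Finset.prod_le_prod (fun i _ => norm_nonneg _)
        intro i _
        have h1 : ‖c + (i:ℂ)‖ ≤ ‖c‖ + i := by
          calc ‖c + (i:ℂ)‖ ≤ ‖c‖ + ‖(i:ℂ)‖ := norm_add_le _ _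
            _ = ‖c‖ + i := by rw [Complex.norm_natCast]
        have h2 : (0:ℝ) ≤ ‖c‖ := norm_nonneg c
        have h3 : (0:ℝ) ≤ (i:ℝ) := Nat.cast_nonneg i
        nlinarith
  _ = (1 + ‖c‖)^n * n.factorial := by
        rw [Finset.prod_mul_distrib, Finset.prod_const, Finset.card_range]
        congr 1
        have : ∀ i : ℕ, (1:ℝ) + i = ((i + 1 : ℕ) : ℝ) := by intro i; push_cast; ring
        rw [Finset.prod_congr rfl (fun i _ => this i), ← Nat.cast_prod,
          Finset.prod_range_add_one_eq_factorial]

set_option maxHeartbeats 1000000 in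
lemma summable_ml (c α β z : ℂ) (hα : 0 < α.re) (hβ : 0 ≤ β.re) :
    Summable (fun n : ℕ =>
      ‖poch c n * z ^ n / (Complex.Gamma (α * n + β) * (n.factorial : ℂ))‖) := by
  -- constants
  set K : ℝ := (2*α.im^2 + 2*β.im^2) / α.re with hK
  have hK0 : 0 ≤ K := by positivity
  set R : ℝ := Real.log (1 + ‖c‖) + Real.log (‖z‖ + 1) + K with hR
  -- choose N
  obtain ⟨N, hN3, hNlog⟩ : ∃ N : ℕ, 3 ≤ N ∧ R + 1 ≤ α.re * Real.log ((N:ℝ) - 1) := by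
    obtain ⟨M, hM⟩ := exists_nat_ge (Real.exp ((R+1)/α.re) + 1)
    refine ⟨max 3 (M+1), le_max_left _ _, ?_⟩
    have h1 : Real.exp ((R+1)/α.re) ≤ (max 3 (M+1) : ℕ) - 1 := by
      have h2 : (M:ℝ) + 1 ≤ ((max 3 (M+1) : ℕ) : ℝ) := by
        have := le_max_right 3 (M+1)
        exact_mod_cast Nat.cast_le.2 this |>.trans_eq' (by push_cast; ring)
      nlinarith [hM]
    have h3 : (R+1)/α.re ≤ Real.log ((max 3 (M+1) : ℕ) - 1) := by
      rw [← Real.log_exp ((R+1)/α.re)]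
      apply Real.log_le_log (Real.exp_pos _) h1
    calc R + 1 = α.re * ((R+1)/α.re) := by field_simp
      _ ≤ α.re * Real.log ((max 3 (M+1) : ℕ) - 1) :=
          mul_le_mul_of_nonneg_left h3 hα.le
  have hN1R : (3:ℝ) ≤ (N:ℝ) := by exact_mod_cast hN3
  have hGN : 0 < Real.Gamma (N:ℝ) := Real.Gamma_pos_of_pos (by linarith)
  have hL0 : 0 ≤ Real.log ((N:ℝ) - 1) := Real.log_nonneg (by linarith)
  set L : ℝ := Real.log ((N:ℝ) - 1) with hLdef
  set D : ℝ := Real.exp ((N:ℝ) * L) / Real.Gamma (N:ℝ) with hD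
  -- eventual bound
  have hbound : ∀ᶠ n : ℕ in atTop,
      ‖poch c n * z ^ n / (Complex.Gamma (α * n + β) * (n.factorial : ℂ))‖
        ≤ D * Real.exp (-(n:ℝ)) := by
    obtain ⟨n₀, hn₀⟩ := exists_nat_ge (((N:ℝ) + 1) / α.re)
    filter_upwards [eventually_ge_atTop (max 1 n₀)] with n hn
    have hn1 : 1 ≤ n := le_trans (le_max_left _ _) hn
    have hn1R : (1:ℝ) ≤ n := by exact_mod_cast hn1
    have hnn0 : (n₀:ℝ) ≤ n := by exact_mod_cast le_trans (le_max_right _ _) hn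
    set x : ℝ := α.re * n + β.re with hxdef
    set y : ℝ := α.im * n + β.im with hydef
    have hxN : (N:ℝ) + 1 ≤ x := by
      have h1 : ((N:ℝ) + 1) / α.re ≤ (n:ℝ) := le_trans hn₀ hnn0
      have h2 : (N:ℝ) + 1 ≤ α.re * n := by
        rw [div_le_iff₀ hα] at h1; linarith [h1]
      simp only [hxdef]; linarith
    have hx1 : (1:ℝ) ≤ x := by linarith
    have hx0 : (0:ℝ) < x := by linarith
    have hyK : y^2 / x ≤ K * n := by
      rw [div_le_iff₀ hx0]
      have hn2 : (1:ℝ) ≤ (n:ℝ)^2 := by nlinarith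
      have h1 : y^2 ≤ (2*α.im^2 + 2*β.im^2) * n^2 := by
        simp only [hydef]
        nlinarith [sq_nonneg (α.im*(n:ℝ) - β.im),
          mul_le_mul_of_nonneg_left hn2 (sq_nonneg β.im)]
      have h2 : K * n * x ≥ K * n * (α.re * n) := by
        have : α.re * n ≤ x := by simp only [hxdef]; linarith
        have hKn : 0 ≤ K * n := by positivity
        nlinarith
      have h3 : K * n * (α.re * n) = (2*α.im^2 + 2*β.im^2) * n^2 := by
        simp only [hK]; field_simp
      linarith
    have hsx : α * n + β = (x:ℂ) + (y:ℂ) * Complex.I := by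
      apply Complex.ext <;> simp [hxdef, hydef]
    have hGamma1 : Real.Gamma x * Real.exp (-(y^2/x)) ≤ ‖Complex.Gamma (α * n + β)‖ := by
      rw [hsx]; exact norm_Gamma_ge x y hx1
    have hGamma2 : Real.Gamma (N:ℝ) * Real.exp ((x - N) * L) ≤ Real.Gamma x :=
      gamma_real_lb N hN3 x hxN
    have hexpy : Real.exp (-(K * n)) ≤ Real.exp (-(y^2/x)) := Real.exp_le_exp.2 (by linarith)
    have hGlb : Real.Gamma (N:ℝ) * Real.exp ((x - N) * L - K * n)
        ≤ ‖Complex.Gamma (α * n + β)‖ := by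
      have h1 : Real.Gamma (N:ℝ) * Real.exp ((x - N) * L - K * n)
          = (Real.Gamma (N:ℝ) * Real.exp ((x - N) * L)) * Real.exp (-(K * n)) := by
        rw [mul_assoc, ← Real.exp_add]; ring_nf
      rw [h1]
      calc (Real.Gamma (N:ℝ) * Real.exp ((x - N) * L)) * Real.exp (-(K * n))
          ≤ Real.Gamma x * Real.exp (-(K * n)) :=
            mul_le_mul_of_nonneg_right hGamma2 (Real.exp_pos _).le
        _ ≤ Real.Gamma x * Real.exp (-(y^2/x)) :=
            mul_le_mul_of_nonneg_left hexpy (Real.Gamma_pos_of_pos hx0).le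
        _ ≤ ‖Complex.Gamma (α * n + β)‖ := hGamma1
    -- now the norm estimate
    have hnorm : ‖poch c n * z ^ n / (Complex.Gamma (α * n + β) * (n.factorial : ℂ))‖
        = ‖poch c n‖ * ‖z‖^n / (‖Complex.Gamma (α * n + β)‖ * n.factorial) := by
      rw [norm_div, norm_mul, norm_mul, norm_pow]
      congr 2
      rw [Complex.norm_natCast]
    rw [hnorm]
    have hzb : ‖z‖^n ≤ (‖z‖+1)^n := pow_le_pow_left₀ (norm_nonneg z) (by linarith) n
    have hnum : ‖poch c n‖ * ‖z‖^n ≤ (1 + ‖c‖)^n * n.factorial * (‖z‖+1)^n := by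
      calc ‖poch c n‖ * ‖z‖^n ≤ ((1 + ‖c‖)^n * n.factorial) * (‖z‖+1)^n :=
        mul_le_mul (norm_poch_le c n) hzb (by positivity) (by positivity)
      _ = (1 + ‖c‖)^n * n.factorial * (‖z‖+1)^n := by ring
    have hdenom : Real.Gamma (N:ℝ) * Real.exp ((x - N) * L - K * n) * n.factorial
        ≤ ‖Complex.Gamma (α * n + β)‖ * n.factorial := by
      apply mul_le_mul_of_nonneg_right hGlb (by positivity)
    have hdpos : (0:ℝ) < Real.Gamma (N:ℝ) * Real.exp ((x - N) * L - K * n) * n.factorial := by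
      have := Nat.factorial_pos n
      positivity
    calc ‖poch c n‖ * ‖z‖^n / (‖Complex.Gamma (α * n + β)‖ * n.factorial)
        ≤ ((1 + ‖c‖)^n * n.factorial * (‖z‖+1)^n) /
            (Real.Gamma (N:ℝ) * Real.exp ((x - N) * L - K * n) * n.factorial) := by
          apply div_le_div₀ (by positivity) hnum hdpos hdenom
      _ = ((1 + ‖c‖)^n * (‖z‖+1)^n) /
            (Real.Gamma (N:ℝ) * Real.exp ((x - N) * L - K * n)) := by
          rw [mul_comm ((1 + ‖c‖)^n) (n.factorial:ℝ), mul_assoc, mul_comm (Real.Gamma (N:ℝ) * Real.exp ((x - N) * L - K * n)) (n.factorial:ℝ)]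
          rw [mul_div_mul_left _ _ (by exact_mod_cast (Nat.factorial_pos n).ne' : ((n.factorial:ℝ)) ≠ 0)]
      _ ≤ D * Real.exp (-(n:ℝ)) := by
          have hc1 : (0:ℝ) < 1 + ‖c‖ := by positivity
          have hz1 : (0:ℝ) < ‖z‖ + 1 := by positivity
          have e1 : (1 + ‖c‖)^n = Real.exp (n * Real.log (1 + ‖c‖)) := by
            rw [Real.exp_nat_mul, Real.exp_log hc1]
          have e2 : (‖z‖+1)^n = Real.exp (n * Real.log (‖z‖+1)) := by
            rw [Real.exp_nat_mul, Real.exp_log hz1]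
          have gen : ∀ (A B C G : ℝ), Real.exp A * Real.exp B / (G * Real.exp C)
              = Real.exp (A + B - C) / G := by
            intro A B C G
            rw [Real.exp_sub, Real.exp_add, div_div, mul_comm (Real.exp C) G]
          have lhs_eq : Real.exp ((n:ℝ) * Real.log (1 + ‖c‖)) *
              Real.exp ((n:ℝ) * Real.log (‖z‖+1)) /
              (Real.Gamma (N:ℝ) * Real.exp ((x - N) * L - K * n)) =
              Real.exp ((n:ℝ) * Real.log (1 + ‖c‖) + (n:ℝ) * Real.log (‖z‖+1)
                - ((x - N) * L - K * n)) / Real.Gamma (N:ℝ) := gen _ _ _ _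
          have rhs_eq : D * Real.exp (-(n:ℝ)) =
              Real.exp ((N:ℝ) * L - n) / Real.Gamma (N:ℝ) := by
            rw [hD, Real.exp_sub, div_mul_eq_mul_div, mul_comm]
            rw [Real.exp_neg]
            field_simp
          rw [e1, e2, lhs_eq, rhs_eq]
          rw [div_le_div_iff₀ hGN hGN]
          apply mul_le_mul_of_nonneg_right _ hGN.le
          apply Real.exp_le_exp.2
          have key : (R + 1) * n ≤ α.re * L * n :=
            mul_le_mul_of_nonneg_right hNlog (by positivity)
          have hbl : 0 ≤ β.re * L := mul_nonneg hβ hL0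
          have hxexp : x = α.re * n + β.re := hxdef
          simp only [hR] at key
          nlinarith [key, hbl]
  -- conclude summability
  have hgeo : Summable (fun n : ℕ => Real.exp (-1) ^ n) :=
    summable_geometric_of_lt_one (Real.exp_pos _).le
      (Real.exp_lt_one_iff.2 (by norm_num))
  apply summable_of_isBigO_nat hgeo
  rw [Asymptotics.isBigO_iff]
  refine ⟨D, ?_⟩
  filter_upwards [hbound] with n hn
  have h1 : Real.exp (-1:ℝ) ^ n = Real.exp (-(n:ℝ)) := by
    rw [← Real.exp_nat_mul]; ring_nf
  rw [Real.norm_of_nonneg (norm_nonneg _), Real.norm_of_nonneg (by positivity)]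
  rw [h1]
  exact hn

set_option maxHeartbeats 1000000 in
/-- integral representation of the extended (p,q)-Mittag-Leffler function. -/
theorem extML_integral_repr (p q : ℝ) (hp : 0 ≤ p) (hq : 0 ≤ q)
    (c α β γ : ℂ) (hcγ : γ.re < c.re) (hγ : 0 < γ.re)
    (hα : 0 < α.re) (hβ : 0 < β.re) (z : ℂ) :
    extML α β γ c p q z =
      (1 / cBeta γ (c - γ)) *
        ∫ t in (0:ℝ)..1, (t : ℂ) ^ (γ - 1) * (1 - (t : ℂ)) ^ (c - γ - 1) *
          Complex.exp (-((p : ℂ) / t) - (q : ℂ) / (1 - (t : ℂ))) *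
          prabhakarML α β c (t * z) := by
  have hcγ' : 0 < (c - γ).re := by rw [Complex.sub_re]; linarith
  set w : ℝ → ℂ := fun t => (t:ℂ)^(γ-1) * (1-(t:ℂ))^(c-γ-1) *
    Complex.exp (-((p:ℂ)/(t:ℂ)) - (q:ℂ)/(1-(t:ℂ))) with hw
  set F : ℕ → ℝ → ℂ := fun n t =>
    w t * (poch c n * ((t:ℂ)*z)^n / (Complex.Gamma (α*n+β) * (n.factorial:ℂ))) with hF
  -- the beta-type integrand
  set h : ℝ → ℂ := fun t => (t:ℂ)^(γ-1) * (1-(t:ℂ))^(c-γ-1) with hh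
  have hbeta : IntegrableOn h (Set.Ioc 0 1) := by
    have := Complex.betaIntegral_convergent hγ hcγ'
    rwa [intervalIntegrable_iff_integrableOn_Ioc_of_le zero_le_one] at this
  -- continuity on Ioo, hence measurability
  have hcont : ∀ n, ContinuousOn (F n) (Set.Ioo 0 1) := by
    intro n t ht
    apply ContinuousAt.continuousWithinAt
    obtain ⟨ht0, ht1⟩ := ht
    have hc1 : ContinuousAt (fun s : ℝ => (s:ℂ)^(γ-1)) t :=
      Complex.continuousAt_ofReal_cpow_const t _ (Or.inr (ne_of_gt ht0))
    have hc2 : ContinuousAt (fun s : ℝ => (1-(s:ℂ))^(c-γ-1)) t := by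
      have key : ContinuousAt (fun u : ℝ => ((u:ℂ))^(c-γ-1)) (1 - t) :=
        Complex.continuousAt_ofReal_cpow_const _ _ (Or.inr (by linarith [ht1]))
      have hsub : ContinuousAt (fun s : ℝ => 1 - s) t := by fun_prop
      have := key.comp hsub
      simp only [Function.comp_def] at this
      convert this using 2 with s
      push_cast; ring
    have hc3 : ContinuousAt (fun s : ℝ =>
        Complex.exp (-((p:ℂ)/(s:ℂ)) - (q:ℂ)/(1-(s:ℂ)))) t := by
      apply Complex.continuous_exp.continuousAt.comp
      apply ContinuousAt.sub
      · apply ContinuousAt.neg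
        exact (continuousAt_const.div Complex.continuous_ofReal.continuousAt
          (by exact_mod_cast ne_of_gt ht0))
      · apply continuousAt_const.div
        · fun_prop
        · intro hcon
          have : (t:ℝ) = 1 := by
            have := sub_eq_zero.mp hcon
            exact_mod_cast this.symm
          linarith
    have hc4 : ContinuousAt (fun s : ℝ => ((s:ℂ)*z)^n) t := by fun_prop
    simp only [hF, hw]
    exact (((hc1.mul hc2).mul hc3).mul ((continuousAt_const.mul hc4).div_const _))
  have hmeas : ∀ n, AEStronglyMeasurable (F n) (volume.restrict (Set.Ioc 0 1)) := by
    intro n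
    rw [← Measure.restrict_congr_set MeasureTheory.Ioo_ae_eq_Ioc]
    exact (hcont n).aestronglyMeasurable measurableSet_Ioo
  -- pointwise bound on Ioc
  have hbound : ∀ n, ∀ t ∈ Set.Ioc (0:ℝ) 1, ‖F n t‖ ≤
      ‖poch c n * z ^ n / (Complex.Gamma (α * n + β) * (n.factorial : ℂ))‖ * ‖h t‖ := by
    intro n t ht
    obtain ⟨ht0, ht1⟩ := ht
    have hFt : ‖F n t‖ = ‖h t‖ * (‖Complex.exp (-((p:ℂ)/(t:ℂ)) - (q:ℂ)/(1-(t:ℂ)))‖ *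
        ‖poch c n * ((t:ℂ)*z)^n / (Complex.Gamma (α*n+β) * (n.factorial:ℂ))‖) := by
      simp only [hF, hw, hh, norm_mul]
      ring
    rw [hFt]
    have hexp : ‖Complex.exp (-((p:ℂ)/(t:ℂ)) - (q:ℂ)/(1-(t:ℂ)))‖ ≤ 1 := by
      rw [Complex.norm_exp]
      apply Real.exp_le_one_iff.2
      have e1 : (-((p:ℂ)/(t:ℂ)) - (q:ℂ)/(1-(t:ℂ))).re = -(p/t) - q/(1-t) := by
        have : ((p:ℂ)/(t:ℂ)) = ((p/t : ℝ) : ℂ) := by push_cast; ring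
        have h2 : ((q:ℂ)/(1-(t:ℂ))) = ((q/(1-t) : ℝ) : ℂ) := by push_cast; ring
        rw [this, h2, Complex.sub_re, Complex.neg_re, Complex.ofReal_re, Complex.ofReal_re]
      rw [e1]
      have h3 : 0 ≤ p/t := div_nonneg hp ht0.le
      have h4 : 0 ≤ q/(1-t) := by
        rcases eq_or_lt_of_le ht1 with h|h
        · simp [h]
        · exact div_nonneg hq (by linarith)
      linarith
    have hpow : ‖poch c n * ((t:ℂ)*z)^n / (Complex.Gamma (α*n+β) * (n.factorial:ℂ))‖ ≤
        ‖poch c n * z ^ n / (Complex.Gamma (α * n + β) * (n.factorial : ℂ))‖ := by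
      simp only [norm_div, norm_mul, norm_pow, mul_pow]
      rw [div_eq_mul_inv, div_eq_mul_inv]
      apply mul_le_mul_of_nonneg_right _ (by positivity)
      apply mul_le_mul_of_nonneg_left _ (norm_nonneg _)
      have htn : ‖(t:ℂ)‖^n ≤ 1 := by
        apply pow_le_one₀ (norm_nonneg _)
        rw [Complex.norm_real, Real.norm_eq_abs, abs_of_pos ht0]
        exact ht1
      calc ‖(t:ℂ)‖^n * ‖z‖^n ≤ 1 * ‖z‖^n :=
            mul_le_mul_of_nonneg_right htn (by positivity)
        _ = ‖z‖^n := one_mul _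
    calc ‖h t‖ * (‖Complex.exp (-((p:ℂ)/(t:ℂ)) - (q:ℂ)/(1-(t:ℂ)))‖ *
          ‖poch c n * ((t:ℂ)*z)^n / (Complex.Gamma (α*n+β) * (n.factorial:ℂ))‖)
        ≤ ‖h t‖ * (1 * ‖poch c n * z ^ n / (Complex.Gamma (α * n + β) * (n.factorial : ℂ))‖) :=
          mul_le_mul_of_nonneg_left
            (mul_le_mul hexp hpow (norm_nonneg _) zero_le_one) (norm_nonneg _)
      _ = ‖poch c n * z ^ n / (Complex.Gamma (α * n + β) * (n.factorial : ℂ))‖ * ‖h t‖ := by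
          ring
  -- integrability of each F n
  have hintF : ∀ n, IntegrableOn (F n) (Set.Ioc 0 1) := by
    intro n
    apply Integrable.mono' (hbeta.norm.const_mul
      (‖poch c n * z ^ n / (Complex.Gamma (α * n + β) * (n.factorial : ℂ))‖)) (hmeas n)
    exact (ae_restrict_iff' measurableSet_Ioc).2
      (Eventually.of_forall (fun t ht => hbound n t ht))
  -- summability of the integrals of norms
  have hsum : Summable (fun n => ∫ t in Set.Ioc (0:ℝ) 1, ‖F n t‖) := by
    apply Summable.of_nonneg_of_le
      (fun n => integral_nonneg (fun t => norm_nonneg _)) ?_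
      ((summable_ml c α β z hα hβ.le).mul_right
        (∫ t in Set.Ioc (0:ℝ) 1, ‖h t‖))
    intro n
    calc ∫ t in Set.Ioc (0:ℝ) 1, ‖F n t‖
        ≤ ∫ t in Set.Ioc (0:ℝ) 1,
            ‖poch c n * z ^ n / (Complex.Gamma (α * n + β) * (n.factorial : ℂ))‖ * ‖h t‖ := by
          apply integral_mono_ae (hintF n).norm (hbeta.norm.const_mul _)
          exact (ae_restrict_iff' measurableSet_Ioc).2
            (Eventually.of_forall (fun t ht => hbound n t ht))
      _ = ‖poch c n * z ^ n / (Complex.Gamma (α * n + β) * (n.factorial : ℂ))‖ *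
            ∫ t in Set.Ioc (0:ℝ) 1, ‖h t‖ := by
          rw [integral_const_mul]
  -- swap sum and integral
  have hswap := MeasureTheory.integral_tsum_of_summable_integral_norm hintF hsum
  -- value of each integral
  have hterm : ∀ n : ℕ, ∫ t in Set.Ioc (0:ℝ) 1, F n t =
      extBeta p q (γ + n) (c - γ) *
        (poch c n * z ^ n / (Complex.Gamma (α * n + β) * (n.factorial : ℂ))) := by
    intro n
    rw [extBeta, intervalIntegral.integral_of_le zero_le_one]
    have hpt : ∀ t ∈ Set.Ioc (0:ℝ) 1, F n t =
        ((t:ℂ)^(γ + n - 1) * (1-(t:ℂ))^(c-γ-1) *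
          Complex.exp (-((p:ℂ)/(t:ℂ)) - (q:ℂ)/(1-(t:ℂ)))) *
        (poch c n * z ^ n / (Complex.Gamma (α * n + β) * (n.factorial : ℂ))) := by
      intro t ht
      have ht0' : (t:ℂ) ≠ 0 := Complex.ofReal_ne_zero.mpr (ne_of_gt ht.1)
      simp only [hF, hw, div_eq_mul_inv]
      rw [mul_pow, ← Complex.cpow_natCast (t:ℂ) n,
        show (γ + (n:ℂ) - 1) = (γ - 1) + (n:ℂ) by ring, Complex.cpow_add _ _ ht0']
      ring
    rw [setIntegral_congr_fun measurableSet_Ioc hpt, integral_mul_const]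
  -- assemble
  have hlhs : extML α β γ c p q z = (1 / cBeta γ (c - γ)) *
      ∑' n : ℕ, ∫ t in Set.Ioc (0:ℝ) 1, F n t := by
    rw [extML, ← tsum_mul_left]
    apply tsum_congr
    intro n
    rw [hterm n]
    simp only [div_eq_mul_inv, one_div]
    ring
  rw [hlhs, hswap]
  congr 1
  rw [intervalIntegral.integral_of_le zero_le_one]
  apply setIntegral_congr_fun measurableSet_Ioc
  intro t _
  have hpr : prabhakarML α β c ((t:ℂ) * z) = ∑' n : ℕ,
      poch c n * ((t:ℂ)*z) ^ n / (Complex.Gamma (α * n + β) * (n.factorial : ℂ)) := rfl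
  simp only [hF, hw]
  rw [hpr, ← tsum_mul_left]
end

section
/- Let p, q ≥ 0, and let c, α, β, γ be complex numbers with Re(c) > Re(γ) > 0, Re(α) > 0 and Re(β) > 0. Then for every complex z the functional-differential recurrence E^{γ,c}_{α,β}(z; p, q) = β · E^{γ,c}_{α,β+1}(z; p, q) + α z · (d/dz) E^{γ,c}_{α,β+1}(z; p, q) holds, where d/dz denotes the complex derivative. -/
open MeasureTheory Complex

open Real Filter Set Metric

lemma aux_sinh_le (t : ℝ) (ht : 0 ≤ t) : Real.sinh t ≤ t * Real.exp t := by
  rw [Real.sinh_eq]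
  have h0 : Real.exp t * Real.exp (-t) = 1 := by rw [← Real.exp_add]; simp
  have h1 : (-2*t) + 1 ≤ Real.exp (-2*t) := Real.add_one_le_exp _
  have h2 : Real.exp (-2*t) = Real.exp (-t) * Real.exp (-t) := by
    rw [← Real.exp_add]; ring_nf
  have h3 : Real.exp (-t) ≤ 1 := Real.exp_le_one_iff.2 (by linarith)
  nlinarith [Real.exp_pos t, Real.exp_pos (-t)]

lemma aux_cosh_le (t : ℝ) : Real.cosh t ≤ Real.exp |t| := by
  rw [Real.cosh_eq]
  have h1 : Real.exp t ≤ Real.exp |t| := Real.exp_le_exp.2 (le_abs_self t)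
  have h2 : Real.exp (-t) ≤ Real.exp |t| := Real.exp_le_exp.2 (neg_le_abs t)
  linarith

lemma aux_norm_sin_le (z : ℂ) : ‖Complex.sin z‖ ≤ (|z.re| + |z.im|) * Real.exp |z.im| := by
  have key : ∀ (x y : ℝ), ‖Complex.sin ((x:ℂ) + (y:ℂ) * Complex.I)‖ ≤ (|x| + |y|) * Real.exp |y| := by
    intro x y
    rw [Complex.sin_add, Complex.cos_mul_I, Complex.sin_mul_I]
    have e1 : Complex.sin (x:ℂ) = (Real.sin x : ℂ) := (Complex.ofReal_sin _).symm
    have e2 : Complex.cos (x:ℂ) = (Real.cos x : ℂ) := (Complex.ofReal_cos _).symm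
    have e3 : Complex.cosh ((y:ℂ)) = (Real.cosh y : ℂ) := by
      rw [← Complex.ofReal_cosh]
    have e4 : Complex.sinh ((y:ℂ)) = (Real.sinh y : ℂ) := by
      rw [← Complex.ofReal_sinh]
    rw [e1, e2, e3, e4]
    have b1 : ‖(Real.sin x : ℂ) * (Real.cosh y : ℂ)‖ ≤ |x| * Real.exp |y| := by
      simp only [norm_mul, Complex.norm_real, Real.norm_eq_abs]
      apply mul_le_mul Real.abs_sin_le_abs ?_ (abs_nonneg _) (abs_nonneg _)
      rw [abs_of_pos (Real.cosh_pos y)]; exact aux_cosh_le _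
    have b2 : ‖(Real.cos x : ℂ) * ((Real.sinh y : ℂ) * Complex.I)‖ ≤ |y| * Real.exp |y| := by
      simp only [norm_mul, Complex.norm_real, Complex.norm_I, mul_one, Real.norm_eq_abs]
      have : |Real.cos x| * |Real.sinh y| ≤ 1 * (|y| * Real.exp |y|) := by
        apply mul_le_mul (Real.abs_cos_le_one x) ?_ (abs_nonneg _) one_pos.le
        rw [Real.abs_sinh]
        exact aux_sinh_le _ (abs_nonneg _)
      linarith [this]
    calc ‖(Real.sin x : ℂ) * (Real.cosh y : ℂ) + (Real.cos x : ℂ) * ((Real.sinh y : ℂ) * Complex.I)‖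
        ≤ ‖(Real.sin x : ℂ) * (Real.cosh y : ℂ)‖ + ‖(Real.cos x : ℂ) * ((Real.sinh y : ℂ) * Complex.I)‖ := norm_add_le _ _
      _ ≤ |x| * Real.exp |y| + |y| * Real.exp |y| := add_le_add b1 b2
      _ = (|x| + |y|) * Real.exp |y| := by ring
  have := key z.re z.im
  rwa [Complex.re_add_im] at this

lemma aux_norm_Gamma_le_two {z : ℂ} (h1 : 1 ≤ z.re) (h2 : z.re ≤ 2) :
    ‖Complex.Gamma z‖ ≤ 2 := by
  have hre : 0 < z.re := lt_of_lt_of_le one_pos h1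
  rw [Complex.Gamma_eq_integral hre, Complex.GammaIntegral]
  have hint : Integrable (fun x : ℝ => Real.exp (-x) * x ^ ((1:ℝ) - 1) + Real.exp (-x) * x ^ ((2:ℝ) - 1)) (volume.restrict (Ioi 0)) :=
    (Real.GammaIntegral_convergent one_pos).add (Real.GammaIntegral_convergent two_pos)
  have hbound : ∀ᵐ x : ℝ ∂(volume.restrict (Ioi 0)),
      ‖(↑(Real.exp (-x)) : ℂ) * (↑x : ℂ) ^ (z - 1)‖ ≤
        Real.exp (-x) * x ^ ((1:ℝ) - 1) + Real.exp (-x) * x ^ ((2:ℝ) - 1) := by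
    filter_upwards [ae_restrict_mem measurableSet_Ioi] with x hx
    have hx0 : (0:ℝ) < x := hx
    rw [norm_mul, Complex.norm_real, Real.norm_eq_abs, abs_of_pos (Real.exp_pos _),
      Complex.norm_cpow_eq_rpow_re_of_pos hx0]
    have hzre : (z - 1).re = z.re - 1 := by simp
    rw [hzre]
    rcases le_total x 1 with hx1 | hx1
    · have : x ^ (z.re - 1) ≤ x ^ ((1:ℝ) - 1) :=
        Real.rpow_le_rpow_of_exponent_ge hx0 hx1 (by linarith)
      have h2' : 0 ≤ Real.exp (-x) * x ^ ((2:ℝ)-1) := by positivity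
      nlinarith [Real.exp_pos (-x), this, mul_le_mul_of_nonneg_left this (Real.exp_pos (-x)).le]
    · have : x ^ (z.re - 1) ≤ x ^ ((2:ℝ) - 1) :=
        Real.rpow_le_rpow_of_exponent_le hx1 (by linarith)
      have h1' : 0 ≤ Real.exp (-x) * x ^ ((1:ℝ)-1) := by positivity
      nlinarith [Real.exp_pos (-x), mul_le_mul_of_nonneg_left this (Real.exp_pos (-x)).le]
  calc ‖∫ x : ℝ in Ioi 0, (↑(Real.exp (-x)) : ℂ) * (↑x : ℂ) ^ (z - 1)‖
      ≤ ∫ x : ℝ in Ioi 0, (Real.exp (-x) * x ^ ((1:ℝ) - 1) + Real.exp (-x) * x ^ ((2:ℝ) - 1)) :=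
        norm_integral_le_of_norm_le hint hbound
    _ = (∫ x : ℝ in Ioi 0, Real.exp (-x) * x ^ ((1:ℝ)-1)) + ∫ x : ℝ in Ioi 0, Real.exp (-x) * x ^ ((2:ℝ)-1) :=
        integral_add (Real.GammaIntegral_convergent one_pos) (Real.GammaIntegral_convergent two_pos)
    _ = Real.Gamma 1 + Real.Gamma 2 := by
        rw [Real.Gamma_eq_integral one_pos, Real.Gamma_eq_integral two_pos]
    _ = 2 := by rw [Real.Gamma_one, Real.Gamma_two]; norm_num

lemma aux_Gamma_strip_lower {z : ℂ} (h1 : 1 ≤ z.re) (h2 : z.re ≤ 2) :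
    Real.exp (-(π * |z.im|)) / 8 ≤ ‖Complex.Gamma z‖ := by
  by_cases hz1 : z = 1
  · subst hz1
    simp only [Complex.Gamma_one, norm_one, Complex.one_im, abs_zero, mul_zero, neg_zero,
      Real.exp_zero]
    norm_num
  by_cases hz2 : z = 2
  · subst hz2
    have : Complex.Gamma 2 = 1 := by
      have := Complex.Gamma_nat_eq_factorial 1
      norm_num at this
      convert this using 2 <;> norm_num
    rw [this]
    simp only [norm_one]
    have : (2:ℂ).im = 0 := rfl
    rw [this]
    simp only [abs_zero, mul_zero, neg_zero, Real.exp_zero]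
    norm_num
  -- general case
  have hπ : (0:ℝ) < π := Real.pi_pos
  have hsin : Complex.sin (↑π * z) ≠ 0 := by
    intro h
    rcases Complex.sin_eq_zero_iff.1 h with ⟨k, hk⟩
    have hπne : (↑π : ℂ) ≠ 0 := Complex.ofReal_ne_zero.2 hπ.ne'
    have hzk : z = (k:ℂ) := by
      have h' : (↑π:ℂ) * z = (↑π:ℂ) * (k:ℂ) := by rw [hk]; ring
      exact mul_left_cancel₀ hπne h'
    have hkre : z.re = (k:ℝ) := by rw [hzk]; simp
    have hk1 : (1:ℝ) ≤ (k:ℝ) := hkre ▸ h1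
    have hk2 : ((k:ℝ)) ≤ 2 := hkre ▸ h2
    have : k = 1 ∨ k = 2 := by
      have : (1:ℤ) ≤ k := by exact_mod_cast hk1
      have : k ≤ 2 := by exact_mod_cast hk2
      omega
    rcases this with rfl | rfl
    · exact hz1 (by simpa using hzk)
    · exact hz2 (by simpa using hzk)
  have h1z : (1:ℂ) - z ≠ 0 := sub_ne_zero.2 fun h => hz1 h.symm
  have h2z : (2:ℂ) - z ≠ 0 := sub_ne_zero.2 fun h => hz2 h.symm
  have hG3 : Complex.Gamma (3 - z) = (2 - z) * ((1 - z) * Complex.Gamma (1 - z)) := by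
    have e1 : Complex.Gamma ((1 - z) + 1) = (1 - z) * Complex.Gamma (1 - z) :=
      Complex.Gamma_add_one _ h1z
    have e2 : Complex.Gamma ((2 - z) + 1) = (2 - z) * Complex.Gamma (2 - z) :=
      Complex.Gamma_add_one _ h2z
    have e3 : ((1:ℂ) - z) + 1 = 2 - z := by ring
    have e4 : ((2:ℂ) - z) + 1 = 3 - z := by ring
    rw [e3] at e1
    rw [e4] at e2
    rw [e2, e1]
  have hrefl := Complex.Gamma_mul_Gamma_one_sub z
  have hkey : Complex.Gamma z * Complex.Gamma (3 - z) * Complex.sin (↑π * z)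
      = ↑π * ((2 - z) * (1 - z)) := by
    rw [hG3]
    have : Complex.Gamma z * Complex.Gamma (1 - z) * Complex.sin (↑π * z) = ↑π := by
      rw [hrefl, div_mul_cancel₀ _ hsin]
    calc Complex.Gamma z * ((2 - z) * ((1 - z) * Complex.Gamma (1 - z))) * Complex.sin (↑π * z)
        = (2 - z) * (1 - z) * (Complex.Gamma z * Complex.Gamma (1 - z) * Complex.sin (↑π * z)) := by ring
      _ = (2 - z) * (1 - z) * ↑π := by rw [this]
      _ = ↑π * ((2 - z) * (1 - z)) := by ring
  have hnorm : ‖Complex.Gamma z‖ * ‖Complex.Gamma (3 - z)‖ * ‖Complex.sin (↑π * z)‖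
      = π * (‖(2:ℂ) - z‖ * ‖(1:ℂ) - z‖) := by
    have := congrArg norm hkey
    simpa [norm_mul, Complex.norm_real, abs_of_pos hπ] using this
  have hG3le : ‖Complex.Gamma (3 - z)‖ ≤ 2 := by
    apply aux_norm_Gamma_le_two <;> simp [Complex.sub_re] <;> linarith
  have him2 : |z.im| ≤ ‖(2:ℂ) - z‖ := by
    have : |((2:ℂ) - z).im| ≤ ‖(2:ℂ) - z‖ := Complex.abs_im_le_norm _
    simpa [Complex.sub_im, abs_neg] using this
  have him1 : |z.im| ≤ ‖(1:ℂ) - z‖ := by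
    have : |((1:ℂ) - z).im| ≤ ‖(1:ℂ) - z‖ := Complex.abs_im_le_norm _
    simpa [Complex.sub_im, abs_neg] using this
  have hre1 : |z.re - 1| ≤ ‖(1:ℂ) - z‖ := by
    have : |((1:ℂ) - z).re| ≤ ‖(1:ℂ) - z‖ := Complex.abs_re_le_norm _
    rw [Complex.sub_re] at this
    rwa [show |z.re - 1| = |(1:ℂ).re - z.re| by rw [Complex.one_re]; rw [abs_sub_comm]]
  have hre2 : |z.re - 2| ≤ ‖(2:ℂ) - z‖ := by
    have : |((2:ℂ) - z).re| ≤ ‖(2:ℂ) - z‖ := Complex.abs_re_le_norm _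
    rw [Complex.sub_re] at this
    have h2re : ((2:ℂ)).re = 2 := by norm_num
    rw [h2re] at this
    rwa [abs_sub_comm] at this
  set E := Real.exp (π * |z.im|) with hE
  have hEpos : 0 < E := Real.exp_pos _
  rw [Real.exp_neg]
  rcases le_total z.re (3/2) with hhalf | hhalf
  · -- use sin (πz) = - sin (π(z-1))
    set S := |z.re - 1| + |z.im| with hS
    have hSpos : 0 < S := by
      have hgt : |(z-1).re| + |(z-1).im| > 0 := by
        by_contra hcon
        push_neg at hcon
        have h1' : (z-1).re = 0 := by
          have := abs_nonneg (z-1).re; have := abs_nonneg (z-1).im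
          have : |(z-1).re| = 0 := by linarith
          exact abs_eq_zero.1 this
        have h2' : (z-1).im = 0 := by
          have := abs_nonneg (z-1).re; have := abs_nonneg (z-1).im
          have : |(z-1).im| = 0 := by linarith
          exact abs_eq_zero.1 this
        exact (sub_ne_zero.2 hz1) (Complex.ext h1' h2')
      have e1 : (z-1).re = z.re - 1 := by simp [Complex.sub_re]
      have e2 : (z-1).im = z.im := by simp [Complex.sub_im]
      rw [e1, e2] at hgt
      exact hgt
    have hsin_eq : ‖Complex.sin (↑π * z)‖ = ‖Complex.sin (↑π * (z - 1))‖ := by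
      have : ↑π * z = ↑π * (z - 1) + ↑π := by ring
      rw [this, Complex.sin_add]
      have hcπ : Complex.cos (↑π : ℂ) = -1 := by
        rw [show ((↑π : ℂ)) = ((π:ℝ):ℂ) from rfl, ← Complex.ofReal_cos, Real.cos_pi]; norm_num
      have hsπ : Complex.sin (↑π : ℂ) = 0 := by
        rw [show ((↑π : ℂ)) = ((π:ℝ):ℂ) from rfl, ← Complex.ofReal_sin, Real.sin_pi]; norm_num
      rw [hcπ, hsπ]
      simp [norm_neg]
    have hsinle : ‖Complex.sin (↑π * z)‖ ≤ π * S * E := by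
      rw [hsin_eq]
      have := aux_norm_sin_le (↑π * (z - 1))
      have hre : (↑π * (z - 1)).re = π * (z.re - 1) := by simp [Complex.sub_re]
      have him : (↑π * (z - 1)).im = π * z.im := by simp [Complex.sub_im]
      rw [hre, him] at this
      rw [abs_mul, abs_mul, abs_of_pos hπ] at this
      calc ‖Complex.sin (↑π * (z-1))‖ ≤ (π * |z.re - 1| + π * |z.im|) * Real.exp (π * |z.im|) := this
        _ = π * S * E := by rw [hS, hE]; ring
    have hlow : π * (1/2) * (S/2) ≤ π * (‖(2:ℂ) - z‖ * ‖(1:ℂ) - z‖) := by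
      have hn2 : (1:ℝ)/2 ≤ ‖(2:ℂ) - z‖ := by
        have : ((2:ℂ) - z).re ≤ |((2:ℂ) - z).re| := le_abs_self _
        have h' := Complex.abs_re_le_norm ((2:ℂ) - z)
        have : (2:ℝ) - z.re ≤ ‖(2:ℂ) - z‖ := by
          have h2re : ((2:ℂ) - z).re = 2 - z.re := by simp [Complex.sub_re]
          calc (2:ℝ) - z.re = ((2:ℂ) - z).re := h2re.symm
            _ ≤ |((2:ℂ) - z).re| := le_abs_self _
            _ ≤ ‖(2:ℂ) - z‖ := Complex.abs_re_le_norm _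
        linarith
      have hn1 : S/2 ≤ ‖(1:ℂ) - z‖ := by
        rw [hS]
        linarith [hre1, him1]
      have := mul_le_mul hn2 hn1 (by positivity) (norm_nonneg _)
      nlinarith
    have hup : ‖Complex.Gamma z‖ * ‖Complex.Gamma (3 - z)‖ * ‖Complex.sin (↑π * z)‖
        ≤ ‖Complex.Gamma z‖ * (2 * (π * S * E)) := by
      have := mul_le_mul hG3le hsinle (norm_nonneg _) (by norm_num)
      calc ‖Complex.Gamma z‖ * ‖Complex.Gamma (3 - z)‖ * ‖Complex.sin (↑π * z)‖
          = ‖Complex.Gamma z‖ * (‖Complex.Gamma (3 - z)‖ * ‖Complex.sin (↑π * z)‖) := by ring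
        _ ≤ ‖Complex.Gamma z‖ * (2 * (π * S * E)) :=
            mul_le_mul_of_nonneg_left this (norm_nonneg _)
    have hfinal : π * (1/2) * (S/2) ≤ ‖Complex.Gamma z‖ * (2 * (π * S * E)) := by
      calc π * (1/2) * (S/2) ≤ π * (‖(2:ℂ) - z‖ * ‖(1:ℂ) - z‖) := hlow
        _ = ‖Complex.Gamma z‖ * ‖Complex.Gamma (3 - z)‖ * ‖Complex.sin (↑π * z)‖ := hnorm.symm
        _ ≤ ‖Complex.Gamma z‖ * (2 * (π * S * E)) := hup
    -- conclude  E⁻¹ / 8 ≤ ‖Γ z‖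
    have hx : π * S * 1 ≤ π * S * (8 * E * ‖Complex.Gamma z‖) := by nlinarith [hfinal]
    have h1le : (1:ℝ) ≤ 8 * E * ‖Complex.Gamma z‖ :=
      le_of_mul_le_mul_left (by linarith) (mul_pos hπ hSpos)
    rw [hE] at h1le
    rw [inv_eq_one_div, div_div, div_le_iff₀ (by positivity)]
    linarith
  · -- use sin (πz) = sin (π(z-2))
    set S := |z.re - 2| + |z.im| with hS
    have hSpos : 0 < S := by
      have : z - 2 ≠ 0 := sub_ne_zero.2 hz2
      have hgt : |(z-2).re| + |(z-2).im| > 0 := by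
        by_contra hcon
        push_neg at hcon
        have h1' : (z-2).re = 0 := by
          have := abs_nonneg (z-2).re; have := abs_nonneg (z-2).im
          have : |(z-2).re| = 0 := by linarith
          exact abs_eq_zero.1 this
        have h2' : (z-2).im = 0 := by
          have := abs_nonneg (z-2).re; have := abs_nonneg (z-2).im
          have : |(z-2).im| = 0 := by linarith
          exact abs_eq_zero.1 this
        exact (sub_ne_zero.2 hz2) (Complex.ext h1' h2')
      have e1 : (z-2).re = z.re - 2 := by simp [Complex.sub_re]
      have e2 : (z-2).im = z.im := by simp [Complex.sub_im]
      rw [e1, e2] at hgt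
      exact hgt
    have hsin_eq : ‖Complex.sin (↑π * z)‖ = ‖Complex.sin (↑π * (z - 2))‖ := by
      have : ↑π * z = ↑π * (z - 2) + (↑π + ↑π) := by ring
      rw [this, ← add_assoc, Complex.sin_add, Complex.sin_add]
      have hcπ : Complex.cos (↑π : ℂ) = -1 := by
        rw [show ((↑π : ℂ)) = ((π:ℝ):ℂ) from rfl, ← Complex.ofReal_cos, Real.cos_pi]; norm_num
      have hsπ : Complex.sin (↑π : ℂ) = 0 := by
        rw [show ((↑π : ℂ)) = ((π:ℝ):ℂ) from rfl, ← Complex.ofReal_sin, Real.sin_pi]; norm_num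
      rw [hcπ, hsπ]
      simp [norm_neg]
    have hsinle : ‖Complex.sin (↑π * z)‖ ≤ π * S * E := by
      rw [hsin_eq]
      have := aux_norm_sin_le (↑π * (z - 2))
      have hre : (↑π * (z - 2)).re = π * (z.re - 2) := by simp [Complex.sub_re]
      have him : (↑π * (z - 2)).im = π * z.im := by simp [Complex.sub_im]
      rw [hre, him] at this
      rw [abs_mul, abs_mul, abs_of_pos hπ] at this
      calc ‖Complex.sin (↑π * (z-2))‖ ≤ (π * |z.re - 2| + π * |z.im|) * Real.exp (π * |z.im|) := this
        _ = π * S * E := by rw [hS, hE]; ring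
    have hlow : π * (1/2) * (S/2) ≤ π * (‖(2:ℂ) - z‖ * ‖(1:ℂ) - z‖) := by
      have hn1 : (1:ℝ)/2 ≤ ‖(1:ℂ) - z‖ := by
        have : (z.re - 1 : ℝ) ≤ ‖(1:ℂ) - z‖ := by
          calc (z.re - 1 : ℝ) = -(((1:ℂ) - z).re) := by simp [Complex.sub_re]
            _ ≤ |((1:ℂ) - z).re| := neg_le_abs _
            _ ≤ ‖(1:ℂ) - z‖ := Complex.abs_re_le_norm _
        linarith
      have hn2 : S/2 ≤ ‖(2:ℂ) - z‖ := by
        rw [hS]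
        linarith [hre2, him2]
      have := mul_le_mul hn2 hn1 (by positivity) (norm_nonneg _)
      nlinarith
    have hup : ‖Complex.Gamma z‖ * ‖Complex.Gamma (3 - z)‖ * ‖Complex.sin (↑π * z)‖
        ≤ ‖Complex.Gamma z‖ * (2 * (π * S * E)) := by
      have := mul_le_mul hG3le hsinle (norm_nonneg _) (by norm_num)
      calc ‖Complex.Gamma z‖ * ‖Complex.Gamma (3 - z)‖ * ‖Complex.sin (↑π * z)‖
          = ‖Complex.Gamma z‖ * (‖Complex.Gamma (3 - z)‖ * ‖Complex.sin (↑π * z)‖) := by ring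
        _ ≤ ‖Complex.Gamma z‖ * (2 * (π * S * E)) :=
            mul_le_mul_of_nonneg_left this (norm_nonneg _)
    have hfinal : π * (1/2) * (S/2) ≤ ‖Complex.Gamma z‖ * (2 * (π * S * E)) := by
      calc π * (1/2) * (S/2) ≤ π * (‖(2:ℂ) - z‖ * ‖(1:ℂ) - z‖) := hlow
        _ = ‖Complex.Gamma z‖ * ‖Complex.Gamma (3 - z)‖ * ‖Complex.sin (↑π * z)‖ := hnorm.symm
        _ ≤ ‖Complex.Gamma z‖ * (2 * (π * S * E)) := hup
    have hx : π * S * 1 ≤ π * S * (8 * E * ‖Complex.Gamma z‖) := by nlinarith [hfinal]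
    have h1le : (1:ℝ) ≤ 8 * E * ‖Complex.Gamma z‖ :=
      le_of_mul_le_mul_left (by linarith) (mul_pos hπ hSpos)
    rw [hE] at h1le
    rw [inv_eq_one_div, div_div, div_le_iff₀ (by positivity)]
    linarith

lemma aux_Gamma_shift (k : ℕ) : ∀ (z : ℂ), 1 ≤ z.re →
    (k.factorial : ℝ) * ‖Complex.Gamma z‖ ≤ ‖Complex.Gamma (z + k)‖ := by
  induction k with
  | zero => intro z hz; simp
  | succ k ih =>
    intro z hz
    have hne : z + k ≠ 0 := by
      intro h
      have : (z + k).re = 0 := by rw [h]; simp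
      rw [Complex.add_re, Complex.natCast_re] at this
      have : (0:ℝ) ≤ (k:ℝ) := Nat.cast_nonneg k
      linarith
    have heq : Complex.Gamma (z + (k+1:ℕ)) = (z + k) * Complex.Gamma (z + k) := by
      have := Complex.Gamma_add_one (z + k) hne
      rw [← this]
      congr 1
      push_cast
      ring
    rw [heq, norm_mul]
    have hnk : (k:ℝ) + 1 ≤ ‖z + (k:ℂ)‖ := by
      have : (z + (k:ℂ)).re ≤ |(z + (k:ℂ)).re| := le_abs_self _
      have h2 : |(z + (k:ℂ)).re| ≤ ‖z + (k:ℂ)‖ := Complex.abs_re_le_norm _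
      have h3 : (z + (k:ℂ)).re = z.re + k := by rw [Complex.add_re, Complex.natCast_re]
      linarith
    have hih := ih z hz
    calc ((k+1).factorial : ℝ) * ‖Complex.Gamma z‖
        = ((k:ℝ)+1) * ((k.factorial : ℝ) * ‖Complex.Gamma z‖) := by
          rw [Nat.factorial_succ]; push_cast; ring
      _ ≤ ((k:ℝ)+1) * ‖Complex.Gamma (z + k)‖ := by
          apply mul_le_mul_of_nonneg_left hih (by positivity)
      _ ≤ ‖z + (k:ℂ)‖ * ‖Complex.Gamma (z + k)‖ :=
          mul_le_mul_of_nonneg_right hnk (norm_nonneg _)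

lemma aux_Gamma_growth {w : ℂ} (k : ℕ) (hk1 : 1 ≤ w.re - k) (hk2 : w.re - k ≤ 2) :
    (k.factorial : ℝ) * (Real.exp (-(π * |w.im|)) / 8) ≤ ‖Complex.Gamma w‖ := by
  set z := w - k with hz
  have hzre : z.re = w.re - k := by simp [hz, Complex.sub_re, Complex.natCast_re]
  have hzim : z.im = w.im := by simp [hz, Complex.sub_im, Complex.natCast_im]
  have h1 : 1 ≤ z.re := by rw [hzre]; exact hk1
  have hstrip := aux_Gamma_strip_lower h1 (by rw [hzre]; exact hk2)
  rw [hzim] at hstrip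
  have hshift := aux_Gamma_shift k z h1
  have hzk : z + k = w := by rw [hz]; ring
  rw [hzk] at hshift
  calc (k.factorial : ℝ) * (Real.exp (-(π * |w.im|)) / 8)
      ≤ (k.factorial : ℝ) * ‖Complex.Gamma z‖ :=
        mul_le_mul_of_nonneg_left hstrip (by positivity)
    _ ≤ ‖Complex.Gamma w‖ := hshift

lemma aux_summable {α β : ℂ} (hα : 0 < α.re) (hβ : 0 < β.re) {Q : ℝ} (hQ : 0 ≤ Q) :
    Summable (fun n : ℕ => ((n:ℝ)+1) * Q ^ n / ‖Complex.Gamma (α*n + β)‖) := by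
  set a := α.re with ha
  have hx : ∀ n : ℕ, (α*(n:ℂ) + β).re = a*n + β.re := by
    intro n
    simp [Complex.add_re, Complex.mul_re, Complex.natCast_re, Complex.natCast_im, ha]
  have hxim : ∀ n : ℕ, |(α*(n:ℂ) + β).im| ≤ |α.im| *n + |β.im| := by
    intro n
    have : (α*(n:ℂ) + β).im = α.im*n + β.im := by
      simp [Complex.add_im, Complex.mul_im, Complex.natCast_re, Complex.natCast_im]
    rw [this]
    calc |α.im*n + β.im| ≤ |α.im*n| + |β.im| := abs_add_le _ _
      _ = |α.im| *n + |β.im| := by rw [abs_mul, Nat.abs_cast]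
  set k : ℕ → ℕ := fun n => ⌊a*n + β.re⌋₊ - 1 with hkdef
  set N₀ : ℕ := ⌈a⁻¹⌉₊ with hN₀
  -- basic facts for n ≥ N₀
  have hbasic : ∀ n : ℕ, N₀ ≤ n → 1 ≤ a*n + β.re ∧ ((k n : ℝ)) = (⌊a*n + β.re⌋₊ : ℝ) - 1
      ∧ 1 ≤ (a*n + β.re) - k n ∧ (a*n + β.re) - k n ≤ 2 ∧ (a*n+β.re) - 2 ≤ (k n : ℝ) := by
    intro n hn
    have hna : a⁻¹ ≤ (n:ℝ) := le_trans (Nat.le_ceil _) (by exact_mod_cast hn)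
    have h1 : 1 ≤ a * n := by
      rw [show (1:ℝ) = a * a⁻¹ by field_simp]
      exact mul_le_mul_of_nonneg_left hna hα.le
    have hx1 : 1 ≤ a*n + β.re := by linarith
    have hfl1 : 1 ≤ ⌊a*n + β.re⌋₊ := Nat.le_floor (by exact_mod_cast hx1)
    have hkc : ((k n : ℝ)) = (⌊a*n + β.re⌋₊ : ℝ) - 1 := by
      rw [hkdef]
      push_cast [Nat.cast_sub hfl1]
      ring
    have hfle : (⌊a*n + β.re⌋₊ : ℝ) ≤ a*n + β.re := Nat.floor_le (by linarith)
    have hflt : a*n + β.re < (⌊a*n + β.re⌋₊ : ℝ) + 1 := Nat.lt_floor_add_one _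
    refine ⟨hx1, hkc, by rw [hkc]; linarith, by rw [hkc]; linarith, by rw [hkc]; linarith⟩
  -- k n tends to infinity
  have hk_tend : Tendsto k atTop atTop := by
    rw [Filter.tendsto_atTop]
    intro b
    have hb : Tendsto (fun n : ℕ => a * (n:ℝ) + β.re - 2) atTop atTop := by
      have h1 : Tendsto (fun n : ℕ => (n:ℝ)) atTop atTop := tendsto_natCast_atTop_atTop
      have h2 := h1.const_mul_atTop hα
      have h3 := tendsto_atTop_add_const_right atTop (β.re - 2) h2
      exact h3.congr (fun n => by ring)
    have hev : ∀ᶠ n : ℕ in atTop, (b:ℝ) ≤ a * (n:ℝ) + β.re - 2 := hb.eventually_ge_atTop _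
    filter_upwards [hev, eventually_ge_atTop N₀] with n h1 h2
    have hB := hbasic n h2
    have : (b:ℝ) ≤ (k n : ℝ) := le_trans h1 (by linarith [hB.2.2.2.2])
    exact_mod_cast this
  set m : ℕ := ⌈a⁻¹⌉₊ with hm
  have hminv : a⁻¹ ≤ (m:ℝ) := Nat.le_ceil _
  set y : ℝ := 4*(Q+1)*Real.exp (π*|α.im|) with hy
  have hy1 : 1 ≤ y := by
    have h1 : (1:ℝ) ≤ 4*(Q+1) := by linarith
    have h2 : (1:ℝ) ≤ Real.exp (π*|α.im|) := Real.one_le_exp (by positivity)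
    nlinarith
  set C : ℝ := 8*Real.exp (π*|β.im|) with hC
  have hCpos : 0 < C := by positivity
  set T : ℝ := y^m with hT
  have hT1 : 1 ≤ T := one_le_pow₀ hy1
  set D : ℝ := C*T^2 with hD
  have hDpos : 0 < D := by positivity
  -- factorial domination
  have hfact : ∀ᶠ j in atTop, D * T^j ≤ (j.factorial : ℝ) := by
    have htend := FloorSemiring.tendsto_pow_div_factorial_atTop T
    have hev := htend.eventually_lt_const (show (0:ℝ) < 1/D by positivity)
    filter_upwards [hev] with j hj
    have hjf : (0:ℝ) < (j.factorial : ℝ) := by exact_mod_cast j.factorial_pos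
    rw [div_lt_iff₀ hjf] at hj
    have h2 := mul_lt_mul_of_pos_left hj hDpos
    rw [show D * (1/D * (j.factorial:ℝ)) = (j.factorial:ℝ) by field_simp] at h2
    exact h2.le
  obtain ⟨J, hJ⟩ := eventually_atTop.1 hfact
  have hkJ : ∀ᶠ n in atTop, J ≤ k n := hk_tend.eventually_ge_atTop J
  -- main eventual bound
  have hmain : ∀ᶠ n : ℕ in atTop, ((n:ℝ)+1) * Q ^ n / ‖Complex.Gamma (α*n + β)‖ ≤ (1/2:ℝ)^n := by
    filter_upwards [hkJ, eventually_ge_atTop N₀] with n hnJ hnN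
    obtain ⟨hx1, hkc, hs1, hs2, hs3⟩ := hbasic n hnN
    set w : ℂ := α*(n:ℂ) + β with hw
    have hwre : w.re - k n = (a*n + β.re) - k n := by rw [hw, hx n]
    have hgrow := aux_Gamma_growth (w := w) (k n) (by rw [hwre]; exact hs1) (by rw [hwre]; exact hs2)
    have hA : |w.im| ≤ |α.im| *n + |β.im| := hxim n
    have hexp : Real.exp (-(π * (|α.im| *n + |β.im|))) ≤ Real.exp (-(π * |w.im|)) := by
      apply Real.exp_le_exp.2
      have : π * |w.im| ≤ π * (|α.im| *n + |β.im|) :=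
        mul_le_mul_of_nonneg_left hA Real.pi_pos.le
      linarith
    have hlow : ((k n).factorial : ℝ) * (Real.exp (-(π * (|α.im| *n + |β.im|))) / 8)
        ≤ ‖Complex.Gamma w‖ := by
      calc ((k n).factorial : ℝ) * (Real.exp (-(π * (|α.im| *n + |β.im|))) / 8)
          ≤ ((k n).factorial : ℝ) * (Real.exp (-(π * |w.im|)) / 8) := by
            apply mul_le_mul_of_nonneg_left _ (Nat.cast_nonneg _)
            linarith
        _ ≤ ‖Complex.Gamma w‖ := hgrow
    have hlowpos : 0 < ((k n).factorial : ℝ) * (Real.exp (-(π * (|α.im| *n + |β.im|))) / 8) := by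
      have : (0:ℝ) < ((k n).factorial : ℝ) := by exact_mod_cast (k n).factorial_pos
      positivity
    -- reduce to numerator inequality
    rw [div_le_iff₀ (lt_of_lt_of_le hlowpos hlow)]
    -- suffices:  (n+1) Q^n ≤ (1/2)^n * ‖Γ w‖  and we bound ‖Γ w‖ from below
    have hnum : ((n:ℝ)+1) * Q ^ n
        ≤ (1/2:ℝ)^n * (((k n).factorial : ℝ) * (Real.exp (-(π * (|α.im| *n + |β.im|))) / 8)) := by
      rw [Real.exp_neg]
      -- equivalent: (n+1) Q^n * 2^n * 8 * exp(π(...)) ≤ (k n)!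
      have hE : (0:ℝ) < Real.exp (π * (|α.im| *n + |β.im|)) := Real.exp_pos _
      rw [show (1/2:ℝ)^n * (((k n).factorial : ℝ) * ((Real.exp (π * (|α.im| *n + |β.im|)))⁻¹ / 8))
          = ((k n).factorial : ℝ) / (2^n * Real.exp (π * (|α.im| *n + |β.im|)) * 8) by
            rw [div_pow, one_pow]
            field_simp]
      rw [le_div_iff₀ (by positivity)]
      -- LHS ≤ C * y^n ≤ C*T^2 * T^(k n) ≤ (k n)!
      have step1 : ((n:ℝ)+1) * Q ^ n * (2^n * Real.exp (π * (|α.im| *n + |β.im|)) * 8)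
          ≤ C * y^n := by
        have e1 : Real.exp (π * (|α.im| *n + |β.im|))
            = Real.exp (π*|α.im|)^n * Real.exp (π*|β.im|) := by
          rw [← Real.exp_nat_mul, ← Real.exp_add]
          ring_nf
        rw [e1, hC, hy]
        have hn2 : ((n:ℝ)+1) ≤ 2^n := by
          exact_mod_cast Nat.succ_le_of_lt (Nat.lt_two_pow_self (n := n))
        have hQ1 : Q ^ n ≤ (Q+1)^n := pow_le_pow_left₀ hQ (by linarith) n
        have hexp_pos : (0:ℝ) < Real.exp (π*|α.im|) := Real.exp_pos _
        calc ((n:ℝ)+1) * Q ^ n * (2^n * (Real.exp (π*|α.im|)^n * Real.exp (π*|β.im|)) * 8)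
            ≤ (2:ℝ)^n * (Q+1) ^ n * (2^n * (Real.exp (π*|α.im|)^n * Real.exp (π*|β.im|)) * 8) := by
              apply mul_le_mul_of_nonneg_right _ (by positivity)
              exact mul_le_mul hn2 hQ1 (by positivity) (by positivity)
          _ = 8*Real.exp (π*|β.im|) * (4*(Q+1)*Real.exp (π*|α.im|))^n := by
              rw [mul_pow, mul_pow]
              rw [show (4:ℝ)^n = 2^n * 2^n by rw [← mul_pow]; norm_num]
              ring
      have step2 : y^n ≤ T^(k n) * T^2 := by
        have hnle : n ≤ m * (k n + 2) := by
          have hreal : (n:ℝ) ≤ (m:ℝ) * ((k n : ℝ) + 2) := by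
            have h1 : a * n ≤ (k n : ℝ) + 2 := by linarith
            have h2 : (n:ℝ) = (a * n) * a⁻¹ := by field_simp
            rw [h2]
            calc (a*n) * a⁻¹ ≤ ((k n : ℝ) + 2) * a⁻¹ :=
                  mul_le_mul_of_nonneg_right h1 (by positivity)
              _ ≤ ((k n : ℝ) + 2) * m := by
                  apply mul_le_mul_of_nonneg_left hminv (by positivity)
              _ = (m:ℝ) * ((k n:ℝ) + 2) := by ring
          exact_mod_cast (by push_cast; exact hreal : (n:ℝ) ≤ ((m * (k n + 2) : ℕ) : ℝ))
        calc y^n ≤ y^(m * (k n + 2)) := pow_le_pow_right₀ hy1 hnle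
          _ = (y^m)^(k n + 2) := by rw [pow_mul]
          _ = T^(k n) * T^2 := by rw [hT, ← pow_add]
      have step3 : D * T^(k n) ≤ ((k n).factorial : ℝ) := hJ (k n) hnJ
      calc ((n:ℝ)+1) * Q ^ n * (2^n * Real.exp (π * (|α.im| *n + |β.im|)) * 8)
          ≤ C * y^n := step1
        _ ≤ C * (T^(k n) * T^2) := mul_le_mul_of_nonneg_left step2 hCpos.le
        _ = D * T^(k n) := by rw [hD]; ring
        _ ≤ ((k n).factorial : ℝ) := step3
    calc ((n:ℝ)+1) * Q ^ n
        ≤ (1/2:ℝ)^n * (((k n).factorial : ℝ) * (Real.exp (-(π * (|α.im| *n + |β.im|))) / 8)) := hnum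
      _ ≤ (1/2:ℝ)^n * ‖Complex.Gamma w‖ := by
          apply mul_le_mul_of_nonneg_left hlow (by positivity)
  -- conclude summability
  apply summable_of_isBigO_nat (summable_geometric_of_lt_one (by norm_num : (0:ℝ) ≤ 1/2) (by norm_num))
  apply Asymptotics.IsBigO.of_bound 1
  filter_upwards [hmain] with n hn
  have e1 : |((n:ℝ)+1) * Q ^ n / ‖Complex.Gamma (α*(n:ℂ) + β)‖|
      = ((n:ℝ)+1) * Q ^ n / ‖Complex.Gamma (α*(n:ℂ) + β)‖ := abs_of_nonneg (by positivity)
  have e2 : |(1/2:ℝ)^n| = (1/2:ℝ)^n := abs_of_nonneg (by positivity)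
  rw [Real.norm_eq_abs, Real.norm_eq_abs, e1, e2]
  linarith

lemma aux_extBeta_bound {p q : ℝ} (hp : 0 ≤ p) (hq : 0 ≤ q) {γ cc : ℂ}
    (hγ : 0 < γ.re) (hc : 0 < cc.re) (n : ℕ) :
    ‖extBeta p q (γ + n) cc‖ ≤
      |∫ t in (0:ℝ)..1, ‖(t:ℂ) ^ (γ - 1) * (1 - (t:ℂ)) ^ (cc - 1)‖| := by
  rw [extBeta]
  apply intervalIntegral.norm_integral_le_abs_of_norm_le
  · have hIoc : Set.uIoc (0:ℝ) 1 = Set.Ioc (0:ℝ) 1 := Set.uIoc_of_le zero_le_one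
    rw [hIoc]
    filter_upwards [ae_restrict_mem measurableSet_Ioc] with t ht
    obtain ⟨ht0, ht1⟩ := ht
    have hA : ‖(t:ℂ) ^ (γ + (n:ℂ) - 1)‖ ≤ ‖(t:ℂ) ^ (γ - 1)‖ := by
      rw [Complex.norm_cpow_eq_rpow_re_of_pos ht0, Complex.norm_cpow_eq_rpow_re_of_pos ht0]
      apply Real.rpow_le_rpow_of_exponent_ge ht0 ht1
      simp [Complex.sub_re, Complex.add_re, Complex.natCast_re]
    have hE : ‖Complex.exp (-((p:ℂ) / t) - (q:ℂ) / (1 - (t:ℂ)))‖ ≤ 1 := by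
      have : -((p:ℂ) / (t:ℂ)) - (q:ℂ) / (1 - (t:ℂ)) = ((-(p/t) - q/(1-t) : ℝ) : ℂ) := by
        push_cast
        ring
      rw [this, Complex.norm_exp]
      simp only [Complex.ofReal_re]
      apply Real.exp_le_one_iff.2
      have h1 : 0 ≤ p / t := div_nonneg hp ht0.le
      have h2 : 0 ≤ q / (1 - t) := div_nonneg hq (by linarith)
      linarith
    calc ‖(t:ℂ) ^ (γ + (n:ℂ) - 1) * (1 - (t:ℂ)) ^ (cc - 1) *
            Complex.exp (-((p:ℂ) / t) - (q:ℂ) / (1 - (t:ℂ)))‖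
        = ‖(t:ℂ) ^ (γ + (n:ℂ) - 1)‖ * ‖(1 - (t:ℂ)) ^ (cc - 1)‖ *
            ‖Complex.exp (-((p:ℂ) / t) - (q:ℂ) / (1 - (t:ℂ)))‖ := by
          rw [norm_mul, norm_mul]
      _ ≤ ‖(t:ℂ) ^ (γ - 1)‖ * ‖(1 - (t:ℂ)) ^ (cc - 1)‖ * 1 := by
          apply mul_le_mul _ hE (norm_nonneg _) (by positivity)
          exact mul_le_mul_of_nonneg_right hA (norm_nonneg _)
      _ = ‖(t:ℂ) ^ (γ - 1) * (1 - (t:ℂ)) ^ (cc - 1)‖ := by rw [mul_one, norm_mul]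
  · exact (Complex.betaIntegral_convergent hγ hc).norm

/-- coefficient of the series -/
noncomputable def mlE (γ c : ℂ) (p q : ℂ) (n : ℕ) : ℂ :=
  extBeta p q (γ + n) (c - γ) / cBeta γ (c - γ) * poch c n

noncomputable def mlg (α β γ c p q : ℂ) (n : ℕ) (w : ℂ) : ℂ :=
  extBeta p q (γ + n) (c - γ) / cBeta γ (c - γ) * poch c n * w ^ n /
    (Complex.Gamma (α * n + β) * n.factorial)

noncomputable def mlg' (α β γ c p q : ℂ) (n : ℕ) (w : ℂ) : ℂ :=
  extBeta p q (γ + n) (c - γ) / cBeta γ (c - γ) * poch c n * (n * w ^ (n-1)) /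
    (Complex.Gamma (α * n + β) * n.factorial)

lemma mlg_eq (α β γ c p q : ℂ) (n : ℕ) (w : ℂ) :
    mlg α β γ c p q n w = mlE γ c p q n * w ^ n /
      (Complex.Gamma (α * n + β) * n.factorial) := rfl

lemma extML_eq_tsum_mlg (α β γ c p q w : ℂ) :
    extML α β γ c p q w = ∑' n, mlg α β γ c p q n w := rfl

lemma poch_norm_le (c : ℂ) (n : ℕ) : ‖poch c n‖ ≤ (‖c‖+1)^n * n.factorial := by
  rw [poch]
  calc ‖∏ i ∈ Finset.range n, (c + i)‖ = ∏ i ∈ Finset.range n, ‖c + (i:ℂ)‖ := norm_prod _ _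
    _ ≤ ∏ i ∈ Finset.range n, ((‖c‖+1) * ((i:ℝ)+1)) := by
        apply Finset.prod_le_prod (fun i _ => norm_nonneg _)
        intro i _
        calc ‖c + (i:ℂ)‖ ≤ ‖c‖ + ‖(i:ℂ)‖ := norm_add_le _ _
          _ = ‖c‖ + (i:ℝ) := by rw [Complex.norm_natCast]
          _ ≤ (‖c‖+1) * ((i:ℝ)+1) := by nlinarith [norm_nonneg c, Nat.cast_nonneg (α := ℝ) i]
    _ = (‖c‖+1)^n * ∏ i ∈ Finset.range n, ((i:ℝ)+1) := by
        rw [Finset.prod_mul_distrib, Finset.prod_const, Finset.card_range]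
    _ = (‖c‖+1)^n * n.factorial := by
        congr 1
        induction n with
        | zero => simp
        | succ k ih => rw [Finset.prod_range_succ, ih, Nat.factorial_succ]; push_cast; ring

/-- functional-differential recurrence for the extended (p,q)-Mittag-Leffler
function. -/
theorem extML_recurrence (p q : ℝ) (hp : 0 ≤ p) (hq : 0 ≤ q)
    (c α β γ : ℂ) (hcγ : γ.re < c.re) (hγ : 0 < γ.re)
    (hα : 0 < α.re) (hβ : 0 < β.re) (z : ℂ) :
    extML α β γ c p q z =
      β * extML α (β + 1) γ c p q z +
        α * z * deriv (fun w : ℂ => extML α (β + 1) γ c p q w) z := by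
  have hcγ' : 0 < (c - γ).re := by rw [Complex.sub_re]; linarith
  have hβ1 : 0 < (β + 1).re := by rw [Complex.add_re, Complex.one_re]; linarith
  -- real part of α n + β' etc
  have hre : ∀ n : ℕ, (α * n + (β+1)).re = α.re * n + (β.re + 1) := by
    intro n
    simp [Complex.add_re, Complex.mul_re, Complex.natCast_re, Complex.natCast_im, Complex.one_re]
  have hreβ : ∀ n : ℕ, (α * n + β).re = α.re * n + β.re := by
    intro n
    simp [Complex.add_re, Complex.mul_re, Complex.natCast_re, Complex.natCast_im]
  have hΓne : ∀ n : ℕ, Complex.Gamma (α * n + (β+1)) ≠ 0 := by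
    intro n
    apply Complex.Gamma_ne_zero_of_re_pos
    rw [hre n]
    have : (0:ℝ) ≤ α.re * n := by positivity
    linarith
  have hΓβne : ∀ n : ℕ, Complex.Gamma (α * n + β) ≠ 0 := by
    intro n
    apply Complex.Gamma_ne_zero_of_re_pos
    rw [hreβ n]
    have : (0:ℝ) ≤ α.re * n := by positivity
    linarith
  have hwne : ∀ n : ℕ, α * n + β ≠ 0 := by
    intro n h
    have : (α * n + β).re = 0 := by rw [h]; simp
    rw [hreβ n] at this
    have : (0:ℝ) ≤ α.re * n := by positivity
    linarith
  have hΓ1 : ∀ n : ℕ, Complex.Gamma (α * n + (β+1))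
      = (α * n + β) * Complex.Gamma (α * n + β) := by
    intro n
    have := Complex.Gamma_add_one (α * n + β) (hwne n)
    rw [← this]
    congr 1
    ring
  -- bounds
  set B0 : ℝ := |∫ t in (0:ℝ)..1, ‖(t:ℂ) ^ (γ - 1) * (1 - (t:ℂ)) ^ (c - γ - 1)‖| with hB0
  have hB0nonneg : 0 ≤ B0 := abs_nonneg _
  set K : ℝ := B0 * ‖cBeta γ (c - γ)‖⁻¹ with hK
  have hKnonneg : 0 ≤ K := by positivity
  set M : ℝ := ‖c‖ + 1 with hM
  have hM1 : 1 ≤ M := by have := norm_nonneg c; rw [hM]; linarith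
  set R : ℝ := ‖z‖ + 1 with hR
  have hR1 : 1 ≤ R := by have := norm_nonneg z; rw [hR]; linarith
  have hRpos : 0 < R := lt_of_lt_of_le one_pos hR1
  set Q : ℝ := M * R with hQdef
  have hQ : 0 ≤ Q := by positivity
  have hEbound : ∀ n : ℕ, ‖mlE γ c (↑p) (↑q) n‖ ≤ K * M^n * n.factorial := by
    intro n
    rw [mlE, norm_mul, norm_div]
    have h1 : ‖extBeta (↑p) (↑q) (γ + n) (c - γ)‖ ≤ B0 := by
      rw [hB0]
      exact aux_extBeta_bound hp hq hγ hcγ' n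
    have h2 := poch_norm_le c n
    calc ‖extBeta (↑p) (↑q) (γ + n) (c - γ)‖ / ‖cBeta γ (c - γ)‖ * ‖poch c n‖
        ≤ (B0 / ‖cBeta γ (c - γ)‖) * ((‖c‖+1)^n * n.factorial) := by
          apply mul_le_mul _ h2 (norm_nonneg _) (by positivity)
          rw [div_eq_mul_inv, div_eq_mul_inv]
          exact mul_le_mul_of_nonneg_right h1 (inv_nonneg.2 (norm_nonneg _))
      _ = K * M^n * n.factorial := by rw [hK, hM, div_eq_mul_inv]; ring
  -- summable majorant
  set u : ℕ → ℝ := fun n => K * (((n:ℝ)+1) * Q^n / ‖Complex.Gamma (α*n + (β+1))‖) with hu_def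
  have hu : Summable u := (aux_summable hα hβ1 hQ).mul_left K
  -- derivative of each term
  have hderiv : ∀ (n : ℕ) (w : ℂ), HasDerivAt (mlg α (β+1) γ c (↑p) (↑q) n)
      (mlg' α (β+1) γ c (↑p) (↑q) n w) w := by
    intro n w
    have h0 : HasDerivAt (fun w : ℂ => w ^ n) (n * w^(n-1)) w := hasDerivAt_pow n w
    have h1 := h0.const_mul (mlE γ c (↑p) (↑q) n /
      (Complex.Gamma (α * n + (β+1)) * n.factorial))
    have hfun : (fun w : ℂ => mlE γ c (↑p) (↑q) n /
        (Complex.Gamma (α * n + (β+1)) * n.factorial) * w ^ n)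
        = mlg α (β+1) γ c (↑p) (↑q) n := by
      funext x
      rw [mlg_eq]
      ring
    rw [hfun] at h1
    have hval : mlE γ c (↑p) (↑q) n / (Complex.Gamma (α * n + (β+1)) * n.factorial)
        * ((n:ℂ) * w ^ (n-1)) = mlg' α (β+1) γ c (↑p) (↑q) n w := by
      rw [mlg']
      rw [show mlE γ c (↑p) (↑q) n
          = extBeta (↑p) (↑q) (γ + n) (c - γ) / cBeta γ (c - γ) * poch c n from rfl]
      ring
    rwa [hval] at h1
  -- bounds on the ball
  have hnormE : ∀ n : ℕ, ∀ w : ℂ, ‖w‖ ≤ R →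
      ‖mlg' α (β+1) γ c (↑p) (↑q) n w‖ ≤ u n := by
    intro n w hw
    have hΓpos : 0 < ‖Complex.Gamma (α*n + (β+1))‖ := norm_pos_iff.2 (hΓne n)
    have hfacpos : (0:ℝ) < (n.factorial : ℝ) := by exact_mod_cast n.factorial_pos
    have e1 : ‖mlg' α (β+1) γ c (↑p) (↑q) n w‖
        = ‖mlE γ c (↑p) (↑q) n‖ * ((n:ℝ) * ‖w‖^(n-1)) /
          (‖Complex.Gamma (α*n + (β+1))‖ * (n.factorial : ℝ)) := by
      rw [show mlg' α (β+1) γ c (↑p) (↑q) n w = mlE γ c (↑p) (↑q) n * ((n:ℂ) * w ^ (n-1)) /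
          (Complex.Gamma (α * n + (β+1)) * n.factorial) from rfl]
      rw [norm_div, norm_mul, norm_mul, norm_mul, Complex.norm_natCast, norm_pow,
        Complex.norm_natCast]
    rw [e1, hu_def]
    have hnum : ‖mlE γ c (↑p) (↑q) n‖ * ((n:ℝ) * ‖w‖^(n-1))
        ≤ (K * (((n:ℝ)+1) * Q^n)) * (n.factorial : ℝ) := by
      have hb1 := hEbound n
      have hb2 : (n:ℝ) * ‖w‖^(n-1) ≤ ((n:ℝ)+1) * R^n := by
        have hw1 : ‖w‖^(n-1) ≤ R^(n-1) := pow_le_pow_left₀ (norm_nonneg _) hw _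
        have hw2 : R^(n-1) ≤ R^n := pow_le_pow_right₀ hR1 (Nat.sub_le n 1)
        have hn : (n:ℝ) ≤ (n:ℝ)+1 := by linarith
        have hRn : (0:ℝ) ≤ R^n := by positivity
        exact mul_le_mul hn (le_trans hw1 hw2) (by positivity)
          (by linarith [Nat.cast_nonneg (α := ℝ) n])
      calc ‖mlE γ c (↑p) (↑q) n‖ * ((n:ℝ) * ‖w‖^(n-1))
          ≤ (K * M^n * (n.factorial:ℝ)) * (((n:ℝ)+1) * R^n) := by
            apply mul_le_mul hb1 hb2 (by positivity) (by positivity)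
        _ = (K * (((n:ℝ)+1) * Q^n)) * (n.factorial : ℝ) := by
            rw [hQdef, mul_pow]; ring
    rw [div_le_iff₀ (by positivity)]
    calc ‖mlE γ c (↑p) (↑q) n‖ * ((n:ℝ) * ‖w‖^(n-1))
        ≤ (K * (((n:ℝ)+1) * Q^n)) * (n.factorial : ℝ) := hnum
      _ = K * (((n:ℝ)+1) * Q^n / ‖Complex.Gamma (α*n + (β+1))‖) *
            (‖Complex.Gamma (α*n + (β+1))‖ * (n.factorial:ℝ)) := by
          have hcancel : ∀ (a x nn f : ℝ), nn ≠ 0 → a * (x / nn) * (nn * f) = a * x * f := by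
            intro a x nn f hn
            field_simp
          exact (hcancel _ _ _ _ hΓpos.ne').symm
  have hnormG : ∀ n : ℕ, ∀ w : ℂ, ‖w‖ ≤ R → ‖mlg α (β+1) γ c (↑p) (↑q) n w‖ ≤ u n := by
    intro n w hw
    have hΓpos : 0 < ‖Complex.Gamma (α*n + (β+1))‖ := norm_pos_iff.2 (hΓne n)
    have hfacpos : (0:ℝ) < (n.factorial : ℝ) := by exact_mod_cast n.factorial_pos
    have e1 : ‖mlg α (β+1) γ c (↑p) (↑q) n w‖
        = ‖mlE γ c (↑p) (↑q) n‖ * ‖w‖^n /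
          (‖Complex.Gamma (α*n + (β+1))‖ * (n.factorial : ℝ)) := by
      rw [mlg_eq, norm_div, norm_mul, norm_mul, norm_pow, Complex.norm_natCast]
    rw [e1, hu_def]
    have hnum : ‖mlE γ c (↑p) (↑q) n‖ * ‖w‖^n
        ≤ (K * (((n:ℝ)+1) * Q^n)) * (n.factorial : ℝ) := by
      have hb1 := hEbound n
      have hb2 : ‖w‖^n ≤ ((n:ℝ)+1) * R^n := by
        have hw1 : ‖w‖^n ≤ R^n := pow_le_pow_left₀ (norm_nonneg _) hw _
        nlinarith [Nat.cast_nonneg (α := ℝ) n, pow_nonneg (norm_nonneg w) n]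
      calc ‖mlE γ c (↑p) (↑q) n‖ * ‖w‖^n
          ≤ (K * M^n * (n.factorial:ℝ)) * (((n:ℝ)+1) * R^n) := by
            apply mul_le_mul hb1 hb2 (by positivity) (by positivity)
        _ = (K * (((n:ℝ)+1) * Q^n)) * (n.factorial : ℝ) := by
            rw [hQdef, mul_pow]; ring
    rw [div_le_iff₀ (by positivity)]
    calc ‖mlE γ c (↑p) (↑q) n‖ * ‖w‖^n
        ≤ (K * (((n:ℝ)+1) * Q^n)) * (n.factorial : ℝ) := hnum
      _ = K * (((n:ℝ)+1) * Q^n / ‖Complex.Gamma (α*n + (β+1))‖) *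
            (‖Complex.Gamma (α*n + (β+1))‖ * (n.factorial:ℝ)) := by
          have hcancel : ∀ (a x nn f : ℝ), nn ≠ 0 → a * (x / nn) * (nn * f) = a * x * f := by
            intro a x nn f hn
            field_simp
          exact (hcancel _ _ _ _ hΓpos.ne').symm
  -- summability at 0
  have hg0 : Summable (fun n => mlg α (β+1) γ c (↑p) (↑q) n 0) := by
    apply summable_of_ne_finset_zero (s := {0})
    intro n hn
    have hn0 : n ≠ 0 := by simpa using hn
    rw [mlg_eq, zero_pow hn0]
    simp
  -- the derivative of the sum
  have hz_ball : z ∈ Metric.ball (0:ℂ) R := by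
    rw [Metric.mem_ball, dist_zero_right, hR]
    linarith
  have hball_norm : ∀ w : ℂ, w ∈ Metric.ball (0:ℂ) R → ‖w‖ ≤ R := by
    intro w hw
    rw [Metric.mem_ball, dist_zero_right] at hw
    exact hw.le
  have hkey : HasDerivAt (fun w => ∑' n, mlg α (β+1) γ c (↑p) (↑q) n w)
      (∑' n, mlg' α (β+1) γ c (↑p) (↑q) n z) z := by
    apply hasDerivAt_tsum_of_isPreconnected hu Metric.isOpen_ball
      (convex_ball (0:ℂ) R).isPreconnected
      (fun n y _ => hderiv n y)
      (fun n y hy => hnormE n y (hball_norm y hy))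
      (Metric.mem_ball_self hRpos) hg0 hz_ball
  have hML : (fun w => extML α (β+1) γ c (↑p) (↑q) w)
      = fun w => ∑' n, mlg α (β+1) γ c (↑p) (↑q) n w := rfl
  have hderiv_eq : deriv (fun w : ℂ => extML α (β+1) γ c (↑p) (↑q) w) z
      = ∑' n, mlg' α (β+1) γ c (↑p) (↑q) n z := by
    rw [hML]
    exact hkey.deriv
  -- summability of both series at z
  have hzR : ‖z‖ ≤ R := by rw [hR]; linarith
  have hs : Summable (fun n => mlg α (β+1) γ c (↑p) (↑q) n z) :=
    Summable.of_norm_bounded hu (fun n => hnormG n z hzR)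
  have hd : Summable (fun n => mlg' α (β+1) γ c (↑p) (↑q) n z) :=
    Summable.of_norm_bounded hu (fun n => hnormE n z hzR)
  -- termwise identity
  have hterm : ∀ n : ℕ, mlg α β γ c (↑p) (↑q) n z
      = β * mlg α (β+1) γ c (↑p) (↑q) n z + α * z * mlg' α (β+1) γ c (↑p) (↑q) n z := by
    intro n
    have hfacne : ((n.factorial : ℂ)) ≠ 0 := by
      exact_mod_cast n.factorial_ne_zero
    have hpow : (n:ℂ) * (z * z ^ (n-1)) = (n:ℂ) * z ^ n := by
      cases n with
      | zero => simp
      | succ m => rw [show (m+1)-1 = m from rfl, ← pow_succ']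
    rw [mlg_eq, mlg_eq, show mlg' α (β+1) γ c (↑p) (↑q) n z
        = mlE γ c (↑p) (↑q) n * ((n:ℂ) * z ^ (n-1)) /
          (Complex.Gamma (α * n + (β+1)) * n.factorial) from rfl, hΓ1 n,
      mul_assoc (α * (n:ℂ) + β)]
    set E := mlE γ c (↑p) (↑q) n with hEset
    set D := Complex.Gamma (α * (n:ℂ) + β) * ((n.factorial : ℕ) : ℂ) with hDset
    rw [show β * (E * z ^ n / ((α * (n:ℂ) + β) * D))
          + α * z * (E * ((n:ℂ) * z ^ (n-1)) / ((α * (n:ℂ) + β) * D))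
        = (β * (E * z ^ n) + α * (E * ((n:ℂ) * (z * z ^ (n-1))))) / ((α * (n:ℂ) + β) * D)
        from by ring]
    rw [hpow]
    rw [show β * (E * z ^ n) + α * (E * ((n:ℂ) * z ^ n))
        = (α * (n:ℂ) + β) * (E * z ^ n) from by ring]
    rw [mul_div_mul_left _ _ (hwne n)]
  -- final assembly
  rw [extML_eq_tsum_mlg α β γ c (↑p) (↑q) z]
  rw [extML_eq_tsum_mlg α (β+1) γ c (↑p) (↑q) z, hderiv_eq]
  rw [tsum_congr hterm]
  rw [Summable.tsum_add (hs.mul_left β) (hd.mul_left (α * z)), tsum_mul_left, tsum_mul_left]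
end

section
/- Let c, α, β, γ be complex numbers with Re(c) > Re(γ) > 0, Re(α) > 0 and Re(β) > 0. Setting q = p, so that E^{γ,c}_{α,β}(z; p) := E^{γ,c}_{α,β}(z; p, p) is the extended Mittag-Leffler function built from the one-parameter extended beta function β_p, one has for every complex z: ∫₀^∞ E^{γ,c}_{α,β}(z; p) dp = [Γ(c+1−γ) / (Γ(γ) Γ(c−γ))] · Σ_{n=0}^∞ [Γ(c+n) Γ(γ+1+n) / (Γ(α n + β) Γ(c+2+n))] z^n / n!. -/
open MeasureTheory Complex

open Filter Topology
open scoped Real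
set_option maxHeartbeats 1000000

/-- The two-variable kernel. -/
noncomputable def extKer (x y : ℂ) (q : ℝ × ℝ) : ℂ :=
  ((q.2 : ℂ)) ^ (x - 1) * (1 - (q.2 : ℂ)) ^ (y - 1) *
    Complex.exp (-((q.1 : ℂ) / (q.2 : ℂ)) - (q.1 : ℂ) / (1 - (q.2 : ℂ)))

lemma normSq_Gamma_one_add (τ : ℝ) (hτ : τ ≠ 0) :
    Complex.normSq (Complex.Gamma (1 + τ * I)) = π * τ / Real.sinh (π * τ) := by
  have h1 : (starRingEnd ℂ) (Complex.Gamma (1 + τ * I)) = Complex.Gamma (1 - τ * I) := by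
    rw [← Complex.Gamma_conj]; congr 1
    simp [Complex.ext_iff]
  have hτI : (τ : ℂ) * I ≠ 0 := by
    simp [hτ, Complex.I_ne_zero]
  have h3 : Complex.Gamma (1 + τ * I) = τ * I * Complex.Gamma (τ * I) := by
    have := Complex.Gamma_add_one ((τ : ℂ) * I) hτI
    rw [add_comm] at this
    exact this
  have h4 : Complex.Gamma ((τ:ℂ) * I) * Complex.Gamma (1 - τ * I) = π / Complex.sin (π * (τ * I)) :=
    Complex.Gamma_mul_Gamma_one_sub _
  have hsin : Complex.sin (π * (τ * I)) = (Real.sinh (π * τ) : ℂ) * I := by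
    rw [show (π : ℂ) * (τ * I) = ((π * τ : ℝ) : ℂ) * I by push_cast; ring, Complex.sin_mul_I]
    norm_cast
  have hsinh : Real.sinh (π * τ) ≠ 0 := by
    simp only [Real.sinh_ne_zero]
    positivity
  have h5 : Complex.Gamma (1 + τ * I) * Complex.Gamma (1 - τ * I)
      = ((π * τ / Real.sinh (π * τ) : ℝ) : ℂ) := by
    rw [h3, mul_assoc, h4, hsin]
    have hI : (I : ℂ) ≠ 0 := Complex.I_ne_zero
    push_cast
    field_simp
  have h2 : (Complex.normSq (Complex.Gamma (1 + τ * I)) : ℂ)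
      = ((π * τ / Real.sinh (π * τ) : ℝ) : ℂ) := by
    rw [← Complex.mul_conj, h1, h5]
  exact_mod_cast h2

lemma exp_le_norm_Gamma_one_add (τ : ℝ) :
    Real.exp (-(π * |τ|) / 2) ≤ ‖Complex.Gamma (1 + τ * I)‖ := by
  rcases eq_or_ne τ 0 with rfl | hτ
  · simp [Complex.Gamma_one]
  · have key : Real.exp (-(π * |τ|)) ≤ π * τ / Real.sinh (π * τ) := by
    -- reduce to u = π * |τ| > 0
      have hval : π * τ / Real.sinh (π * τ) = π * |τ| / Real.sinh (π * |τ|) := by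
        rcases abs_cases τ with ⟨h, _⟩ | ⟨h, _⟩
        · rw [h]
        · rw [h]; rw [show π * -τ = -(π * τ) by ring, Real.sinh_neg]; ring
      rw [hval]
      set u := π * |τ| with hu
      have hu0 : 0 < u := by positivity
      have hsinh0 : 0 < Real.sinh u := Real.sinh_pos_iff.2 hu0
      rw [le_div_iff₀ hsinh0]
      have hsinh_eq : Real.sinh u = (Real.exp u - Real.exp (-u)) / 2 := Real.sinh_eq u
      have h1 : Real.exp (-u) * Real.exp u = 1 := by
        rw [← Real.exp_add]; simp
      have h2 : Real.exp (-(2*u)) ≥ 1 - 2*u := by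
        have := Real.add_one_le_exp (-(2*u))
        linarith
      have h3 : Real.exp (-u) * Real.exp (-u) = Real.exp (-(2*u)) := by
        rw [← Real.exp_add]; ring_nf
      nlinarith [Real.exp_pos (-u)]
    have habs : ‖Complex.Gamma (1 + τ * I)‖ = Real.sqrt (π * τ / Real.sinh (π * τ)) := by
      rw [Complex.norm_def, normSq_Gamma_one_add τ hτ]
    rw [habs]
    rw [show -(π * |τ|) / 2 = (-(π * |τ|)) / 2 by ring]
    have : Real.exp (-(π * |τ|) / 2) = Real.sqrt (Real.exp (-(π * |τ|))) := by
      rw [show Real.exp (-(π * |τ|)) = (Real.exp (-(π * |τ|) / 2))^2 by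
        rw [sq, ← Real.exp_add]; ring_nf, Real.sqrt_sq (Real.exp_nonneg _)]
    rw [this]
    exact Real.sqrt_le_sqrt key

lemma gammaSeq_comparison {σ : ℝ} (hσ : 1 ≤ σ) (τ : ℝ) {n : ℕ} (hn : 1 ≤ n) :
    Real.GammaSeq σ n * ‖Complex.GammaSeq (1 + τ * I) n‖ ≤
      ‖Complex.GammaSeq ((σ:ℂ) + τ * I) n‖ * Real.GammaSeq 1 n := by
  have hn0 : (0:ℝ) < n := by exact_mod_cast hn
  have hσ0 : (0:ℝ) < σ := lt_of_lt_of_le one_pos hσ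
  -- norms of complex GammaSeq
  have habs : ∀ s : ℂ, 0 < s.re → ‖Complex.GammaSeq s n‖
      = (n:ℝ) ^ s.re * n.factorial / ∏ j ∈ Finset.range (n+1), ‖s + j‖ := by
    intro s hs
    rw [Complex.GammaSeq, norm_div, norm_mul, norm_prod]
    congr 2
    · rw [← Complex.ofReal_natCast, Complex.norm_cpow_eq_rpow_re_of_pos hn0]
    · simp
  have h1 : ‖Complex.GammaSeq (1 + τ * I) n‖
      = (n:ℝ) ^ (1:ℝ) * n.factorial / ∏ j ∈ Finset.range (n+1), ‖1 + τ * I + j‖ := by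
    rw [habs _ (by simp)]; norm_num
  have h2 : ‖Complex.GammaSeq ((σ:ℂ) + τ * I) n‖
      = (n:ℝ) ^ σ * n.factorial / ∏ j ∈ Finset.range (n+1), ‖(σ:ℂ) + τ * I + j‖ := by
    rw [habs _ (by simp [hσ0])]; norm_num
  rw [h1, h2, Real.GammaSeq, Real.GammaSeq]
  -- positivity of all the products
  have hP1 : 0 < ∏ j ∈ Finset.range (n+1), (σ + (j:ℝ)) :=
    Finset.prod_pos fun j _ => by positivity
  have hP2 : 0 < ∏ j ∈ Finset.range (n+1), ‖1 + τ * I + j‖ := by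
    apply Finset.prod_pos
    intro j _
    apply norm_pos_iff.2
    intro h
    have := congrArg Complex.re h
    simp at this
    linarith [this]
  have hP3 : 0 < ∏ j ∈ Finset.range (n+1), ((1:ℝ) + (j:ℝ)) :=
    Finset.prod_pos fun j _ => by positivity
  have hP4 : 0 < ∏ j ∈ Finset.range (n+1), ‖(σ:ℂ) + τ * I + j‖ := by
    apply Finset.prod_pos
    intro j _
    apply norm_pos_iff.2
    intro h
    have := congrArg Complex.re h
    simp at this
    nlinarith [Nat.cast_nonneg (α := ℝ) j]
  have hfac : (0:ℝ) < n.factorial := by exact_mod_cast n.factorial_pos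
  have hNσ : 0 < (n:ℝ) ^ σ * n.factorial := by positivity
  have hN1 : 0 < (n:ℝ) ^ (1:ℝ) * n.factorial := by positivity
  rw [div_mul_div_comm, div_mul_div_comm, div_le_div_iff₀ (mul_pos hP1 hP2) (mul_pos hP4 hP3)]
  have key : (∏ j ∈ Finset.range (n+1), ‖(σ:ℂ) + τ * I + j‖) *
      (∏ j ∈ Finset.range (n+1), ((1:ℝ) + (j:ℝ))) ≤
      (∏ j ∈ Finset.range (n+1), (σ + (j:ℝ))) *
      (∏ j ∈ Finset.range (n+1), ‖1 + τ * I + j‖) := by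
    rw [← Finset.prod_mul_distrib, ← Finset.prod_mul_distrib]
    apply Finset.prod_le_prod
    · intro j _; positivity
    · intro j _
      have hre1 : ((σ:ℂ) + τ * I + j).re = σ + j := by simp
      have him1 : ((σ:ℂ) + τ * I + j).im = τ := by simp
      have hre2 : ((1:ℂ) + τ * I + j).re = 1 + j := by simp
      have him2 : ((1:ℂ) + τ * I + j).im = τ := by simp
      rw [Complex.norm_def, Complex.norm_def, Complex.normSq_apply, Complex.normSq_apply,
        hre1, him1, hre2, him2]
      have hj : (0:ℝ) ≤ j := Nat.cast_nonneg j
      have hsq : (1+(j:ℝ))^2 ≤ (σ+(j:ℝ))^2 := by nlinarith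
      rw [show Real.sqrt ((σ + j) * (σ + j) + τ * τ) * (1 + j)
          = Real.sqrt (((σ + j) * (σ + j) + τ * τ) * (1 + j)^2) by
            rw [Real.sqrt_mul (add_nonneg (mul_self_nonneg _) (mul_self_nonneg _)),
              Real.sqrt_sq (by positivity)],
        show (σ + j) * Real.sqrt ((1 + j) * (1 + j) + τ * τ)
          = Real.sqrt (((1 + j) * (1 + j) + τ * τ) * (σ + j)^2) by
            rw [Real.sqrt_mul (add_nonneg (mul_self_nonneg _) (mul_self_nonneg _)),
              Real.sqrt_sq (by positivity)]; ring]
      apply Real.sqrt_le_sqrt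
      nlinarith [hsq, sq_nonneg τ]
  exact mul_le_mul_of_nonneg_left key (mul_pos hNσ hN1).le

lemma norm_Gamma_lower {s : ℂ} (hs : 1 ≤ s.re) :
    Real.Gamma s.re * Real.exp (-(π * |s.im|) / 2) ≤ ‖Complex.Gamma s‖ := by
  have hσ0 : (0:ℝ) < s.re := lt_of_lt_of_le one_pos hs
  have hseq : (fun n => Real.GammaSeq s.re n * ‖Complex.GammaSeq (1 + s.im * I) n‖)
      ≤ᶠ[atTop] fun n => ‖Complex.GammaSeq ((s.re:ℂ) + s.im * I) n‖ * Real.GammaSeq 1 n :=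
    eventually_atTop.2 ⟨1, fun n hn => gammaSeq_comparison hs s.im hn⟩
  have hL : Tendsto (fun n => Real.GammaSeq s.re n * ‖Complex.GammaSeq (1 + s.im * I) n‖)
      atTop (𝓝 (Real.Gamma s.re * ‖Complex.Gamma (1 + s.im * I)‖)) :=
    (Real.GammaSeq_tendsto_Gamma s.re).mul (Complex.GammaSeq_tendsto_Gamma _).norm
  have hR : Tendsto (fun n => ‖Complex.GammaSeq ((s.re:ℂ) + s.im * I) n‖ * Real.GammaSeq 1 n)
      atTop (𝓝 (‖Complex.Gamma ((s.re:ℂ) + s.im * I)‖ * Real.Gamma 1)) :=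
    (Complex.GammaSeq_tendsto_Gamma _).norm.mul (Real.GammaSeq_tendsto_Gamma 1)
  have h := le_of_tendsto_of_tendsto hL hR hseq
  rw [Real.Gamma_one, mul_one, Complex.re_add_im] at h
  refine le_trans ?_ h
  exact mul_le_mul_of_nonneg_left (exp_le_norm_Gamma_one_add s.im)
    (Real.Gamma_pos_of_pos hσ0).le

lemma norm_Gamma_upper {s : ℂ} (hs : 0 < s.re) : ‖Complex.Gamma s‖ ≤ Real.Gamma s.re := by
  rw [Complex.Gamma_eq_integral hs, Real.Gamma_eq_integral hs, Complex.GammaIntegral]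
  refine (norm_integral_le_integral_norm _).trans_eq ?_
  refine setIntegral_congr_fun measurableSet_Ioi fun x hx => ?_
  simp only [norm_mul, Complex.norm_real,
    Complex.norm_cpow_eq_rpow_re_of_pos hx]
  rw [Real.norm_of_nonneg (Real.exp_nonneg _)]
  simp [Complex.sub_re]

lemma Gamma_ratio_lower {a x : ℝ} (ha : 0 < a) (hx : 2 ≤ x) :
    Real.Gamma x * (x - 1) ^ a ≤ Real.Gamma (x + a) := by
  have hx1 : (1:ℝ) ≤ x - 1 := by linarith
  have hx1' : (0:ℝ) < x - 1 := by linarith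
  have hxpos : (0:ℝ) < x := by linarith
  have hΓx : 0 < Real.Gamma x := Real.Gamma_pos_of_pos hxpos
  have hΓx1 : 0 < Real.Gamma (x - 1) := Real.Gamma_pos_of_pos hx1'
  have hΓxa : 0 < Real.Gamma (x + a) := Real.Gamma_pos_of_pos (by linarith)
  have hslope := Real.convexOn_log_Gamma.slope_mono_adjacent
    (Set.mem_Ioi.2 hx1') (Set.mem_Ioi.2 (by linarith : (0:ℝ) < x + a))
    (by linarith : x - 1 < x) (by linarith : x < x + a)
  simp only [Function.comp] at hslope
  have hrec : Real.Gamma x = (x - 1) * Real.Gamma (x - 1) := by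
    have := Real.Gamma_add_one (ne_of_gt hx1')
    rw [sub_add_cancel] at this
    exact this
  have hlog : Real.log (Real.Gamma x) - Real.log (Real.Gamma (x - 1)) = Real.log (x - 1) := by
    rw [hrec, Real.log_mul (ne_of_gt hx1') (ne_of_gt hΓx1)]
    ring
  rw [show x - (x - 1) = 1 by ring, show x + a - x = a by ring, div_one, hlog] at hslope
  have h2 : a * Real.log (x - 1) + Real.log (Real.Gamma x) ≤ Real.log (Real.Gamma (x + a)) := by
    rw [le_div_iff₀ ha] at hslope
    linarith
  have h3 : Real.log (Real.Gamma x * (x - 1) ^ a)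
      = Real.log (Real.Gamma x) + a * Real.log (x - 1) := by
    rw [Real.log_mul (ne_of_gt hΓx) (by positivity), Real.log_rpow hx1']
  calc Real.Gamma x * (x - 1) ^ a
      = Real.exp (Real.log (Real.Gamma x * (x - 1) ^ a)) := by
        rw [Real.exp_log (by positivity)]
    _ ≤ Real.exp (Real.log (Real.Gamma (x + a))) := by
        apply Real.exp_le_exp.2
        rw [h3]; linarith
    _ = Real.Gamma (x + a) := Real.exp_log hΓxa

lemma summable_A (c α β z : ℂ) (hα : 0 < α.re) (hβ : 0 < β.re) :
    Summable (fun n : ℕ =>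
      ‖poch c n * z ^ n / (Complex.Gamma (α * n + β) * (n.factorial : ℂ))‖) := by
  set a := α.re with ha
  set b := β.re with hb
  set E : ℝ := Real.exp (π * |α.im| / 2) with hE
  set K : ℝ := Real.exp (π * |β.im| / 2) with hK
  have hEpos : 0 < E := Real.exp_pos _
  have hKpos : 0 < K := Real.exp_pos _
  set B : ℕ → ℝ := fun n => (∏ i ∈ Finset.range n, (‖c‖ + 1 + i)) * ‖z‖ ^ n * E ^ n /
      (Real.Gamma (a * n + b) * n.factorial) with hB
  have hre : ∀ n : ℕ, (α * n + β).re = a * n + b := by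
    intro n
    simp [Complex.add_re, Complex.mul_re, Complex.natCast_re, Complex.natCast_im, ha, hb]
  have him : ∀ n : ℕ, (α * n + β).im = α.im * n + β.im := by
    intro n
    simp [Complex.add_im, Complex.mul_im, Complex.natCast_re, Complex.natCast_im]
  have habpos : ∀ n : ℕ, 0 < a * n + b := fun n =>
    add_pos_of_nonneg_of_pos (mul_nonneg hα.le (Nat.cast_nonneg n)) hβ
  have hΓpos : ∀ n : ℕ, 0 < Real.Gamma (a * n + b) := fun n => Real.Gamma_pos_of_pos (habpos n)
  have hfacpos : ∀ n : ℕ, (0:ℝ) < n.factorial := fun n => by exact_mod_cast n.factorial_pos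
  have hPpos : ∀ n : ℕ, 0 < ∏ i ∈ Finset.range n, (‖c‖ + 1 + (i:ℝ)) := by
    intro n
    apply Finset.prod_pos
    intro i _
    positivity
  have hBpos : ∀ n : ℕ, 0 ≤ B n := by
    intro n
    rw [hB]
    positivity
  -- the ratio factor
  set q : ℕ → ℝ := fun n => (‖c‖ + 1 + n) * ‖z‖ * E * Real.Gamma (a * n + b) /
      ((n + 1) * Real.Gamma (a * n + b + a)) with hq
  have hrecB : ∀ n : ℕ, B (n + 1) = B n * q n := by
    intro n
    have h1 : a * ((n:ℕ)+1:ℕ) + b = a * n + b + a := by push_cast; ring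
    have hΓ2 : 0 < Real.Gamma (a * n + b + a) := by
      have := habpos (n+1); rw [h1] at this
      exact Real.Gamma_pos_of_pos this
    rw [hB, hq]
    simp only [Finset.prod_range_succ, pow_succ, Nat.factorial_succ, Nat.cast_mul,
      Nat.cast_add, Nat.cast_one, h1]
    field_simp
    rw [show a * ((n:ℝ) + 1) + b = a * n + b + a by ring]
    ring
  -- eventual smallness of the ratio
  have hab_tendsto : Tendsto (fun n : ℕ => a * n + b - 1) atTop atTop := by
    apply tendsto_atTop_add_const_right
    apply tendsto_atTop_add_const_right
    exact (tendsto_natCast_atTop_atTop (R := ℝ)).const_mul_atTop hα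
  have hw_tendsto : Tendsto (fun n : ℕ => (2 * ‖z‖ * E) * (((a * n + b - 1) ^ a)⁻¹))
      atTop (𝓝 0) := by
    have h0 : Tendsto (fun n : ℕ => ((a * n + b - 1) ^ a)⁻¹) atTop (𝓝 0) :=
      ((tendsto_rpow_atTop hα).comp hab_tendsto).inv_tendsto_atTop
    simpa using h0.const_mul (2 * ‖z‖ * E)
  have hqev : ∀ᶠ n : ℕ in atTop, q n ≤ 1 / 2 := by
    have ev1 : ∀ᶠ n : ℕ in atTop, (2:ℝ) ≤ a * n + b := by
      have := (tendsto_atTop_add_const_right atTop b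
        ((tendsto_natCast_atTop_atTop (R := ℝ)).const_mul_atTop hα)).eventually_ge_atTop 2
      exact this
    have ev2 : ∀ᶠ n : ℕ in atTop, ‖c‖ + 1 ≤ (n:ℝ) :=
      (tendsto_natCast_atTop_atTop (R := ℝ)).eventually_ge_atTop (‖c‖ + 1)
    have ev3 : ∀ᶠ n : ℕ in atTop,
        (2 * ‖z‖ * E) * (((a * n + b - 1) ^ a)⁻¹) < 1 / 2 :=
      hw_tendsto.eventually_lt_const (by norm_num)
    filter_upwards [ev1, ev2, ev3] with n h2n hcn hwn
    have hΓ1 := hΓpos n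
    have hΓ2 : 0 < Real.Gamma (a * n + b + a) := Real.Gamma_pos_of_pos (by linarith)
    have hwpos : (0:ℝ) < (a * n + b - 1) ^ a := Real.rpow_pos_of_pos (by linarith) a
    have hratio : Real.Gamma (a * n + b) * (a * n + b - 1) ^ a ≤ Real.Gamma (a * n + b + a) :=
      Gamma_ratio_lower hα h2n
    have hqle : q n ≤ (2 * ‖z‖ * E) * (((a * n + b - 1) ^ a)⁻¹) := by
      rw [hq]
      rw [div_le_iff₀ (by positivity)]
      calc (‖c‖ + 1 + n) * ‖z‖ * E * Real.Gamma (a * n + b)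
          ≤ (2 * ((n:ℝ) + 1)) * ‖z‖ * E * Real.Gamma (a * n + b) := by
            have h5 : ‖c‖ + 1 + (n:ℝ) ≤ 2 * ((n:ℝ) + 1) := by linarith
            have : (0:ℝ) ≤ ‖z‖ * E * Real.Gamma (a * n + b) := by positivity
            calc (‖c‖ + 1 + n) * ‖z‖ * E * Real.Gamma (a * n + b)
                = (‖c‖ + 1 + n) * (‖z‖ * E * Real.Gamma (a * n + b)) := by ring
              _ ≤ (2 * ((n:ℝ) + 1)) * (‖z‖ * E * Real.Gamma (a * n + b)) :=
                  mul_le_mul_of_nonneg_right h5 this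
              _ = (2 * ((n:ℝ) + 1)) * ‖z‖ * E * Real.Gamma (a * n + b) := by ring
        _ ≤ 2 * ‖z‖ * E * (((a * n + b - 1) ^ a)⁻¹) * (((n:ℝ) + 1) * Real.Gamma (a * n + b + a)) := by
            have h6 : ((n:ℝ) + 1) * (Real.Gamma (a * n + b) * (a * n + b - 1) ^ a)
                ≤ ((n:ℝ) + 1) * Real.Gamma (a * n + b + a) :=
              mul_le_mul_of_nonneg_left hratio (by positivity)
            have h7 : (0:ℝ) ≤ 2 * ‖z‖ * E * (((a * n + b - 1) ^ a)⁻¹) := by positivity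
            calc (2 * ((n:ℝ) + 1)) * ‖z‖ * E * Real.Gamma (a * n + b)
                = (2 * ‖z‖ * E * (((a * n + b - 1) ^ a)⁻¹)) *
                    (((n:ℝ) + 1) * (Real.Gamma (a * n + b) * (a * n + b - 1) ^ a)) := by
                  generalize (a * n + b - 1) ^ a = w at hwpos ⊢
                  field_simp [hwpos.ne']
              _ ≤ (2 * ‖z‖ * E * (((a * n + b - 1) ^ a)⁻¹)) *
                    (((n:ℝ) + 1) * Real.Gamma (a * n + b + a)) :=
                  mul_le_mul_of_nonneg_left h6 h7
    exact hqle.trans hwn.le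
  -- summability of B by the ratio test
  have hBsum : Summable B := by
    apply summable_of_ratio_norm_eventually_le (r := 1/2) (by norm_num)
    filter_upwards [hqev] with n hn
    rw [Real.norm_eq_abs, Real.norm_eq_abs, _root_.abs_of_nonneg (hBpos _), _root_.abs_of_nonneg (hBpos _),
      hrecB n]
    calc B n * q n ≤ B n * (1/2) := mul_le_mul_of_nonneg_left hn (hBpos n)
      _ = 1/2 * B n := by ring
  -- comparison with A
  have hAB : ∀ᶠ n : ℕ in atTop,
      ‖poch c n * z ^ n / (Complex.Gamma (α * n + β) * (n.factorial : ℂ))‖ ≤ K * B n := by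
    have ev1 : ∀ᶠ n : ℕ in atTop, (1:ℝ) ≤ a * n + b := by
      exact (tendsto_atTop_add_const_right atTop b
        ((tendsto_natCast_atTop_atTop (R := ℝ)).const_mul_atTop hα)).eventually_ge_atTop 1
    filter_upwards [ev1] with n h1n
    have hΓne : Complex.Gamma (α * n + β) ≠ 0 := by
      apply Complex.Gamma_ne_zero_of_re_pos
      rw [hre n]; exact habpos n
    have hΓnorm_pos : 0 < ‖Complex.Gamma (α * n + β)‖ := norm_pos_iff.2 hΓne
    -- bound on the Pochhammer symbol
    have hpoch : ‖poch c n‖ ≤ ∏ i ∈ Finset.range n, (‖c‖ + 1 + (i:ℝ)) := by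
      rw [poch, norm_prod]
      apply Finset.prod_le_prod
      · intro i _; positivity
      · intro i _
        calc ‖c + i‖ ≤ ‖c‖ + ‖(i:ℂ)‖ := norm_add_le _ _
          _ = ‖c‖ + (i:ℝ) := by rw [Complex.norm_natCast]
          _ ≤ ‖c‖ + 1 + (i:ℝ) := by linarith
    -- lower bound on the Gamma factor
    have hΓlow : Real.Gamma (a * n + b) ≤ ‖Complex.Gamma (α * n + β)‖ * (E ^ n * K) := by
      have h := norm_Gamma_lower (s := α * n + β) (by rw [hre n]; exact h1n)
      rw [hre n, him n] at h
      set u := |α.im * n + β.im| with hu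
      have hx : Real.exp (-(π * u) / 2) * Real.exp (π * u / 2) = 1 := by
        rw [← Real.exp_add, show -(π * u) / 2 + π * u / 2 = 0 by ring, Real.exp_zero]
      have hexp : Real.exp (π * u / 2) ≤ E ^ n * K := by
        have hub : u ≤ |α.im| * n + |β.im| := by
          rw [hu]
          calc |α.im * n + β.im| ≤ |α.im * n| + |β.im| := abs_add_le _ _
            _ = |α.im| * n + |β.im| := by rw [abs_mul, Nat.abs_cast]
        have : Real.exp (π * u / 2) ≤ Real.exp (π * (|α.im| * n + |β.im|) / 2) := by
          apply Real.exp_le_exp.2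
          have hπ : (0:ℝ) ≤ π := Real.pi_pos.le
          nlinarith
        refine this.trans_eq ?_
        rw [show π * (|α.im| * n + |β.im|) / 2 = (n:ℝ) * (π * |α.im| / 2) + π * |β.im| / 2 by ring,
          Real.exp_add, Real.exp_nat_mul]
      calc Real.Gamma (a * n + b)
          = Real.Gamma (a * n + b) * (Real.exp (-(π * u) / 2) * Real.exp (π * u / 2)) := by
            rw [hx, mul_one]
        _ = (Real.Gamma (a * n + b) * Real.exp (-(π * u) / 2)) * Real.exp (π * u / 2) := by ring
        _ ≤ ‖Complex.Gamma (α * n + β)‖ * Real.exp (π * u / 2) :=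
            mul_le_mul_of_nonneg_right h (Real.exp_nonneg _)
        _ ≤ ‖Complex.Gamma (α * n + β)‖ * (E ^ n * K) :=
            mul_le_mul_of_nonneg_left hexp (norm_nonneg _)
    -- put it together
    have hnorm_eq : ‖poch c n * z ^ n / (Complex.Gamma (α * n + β) * (n.factorial : ℂ))‖
        = ‖poch c n‖ * ‖z‖ ^ n / (‖Complex.Gamma (α * n + β)‖ * n.factorial) := by
      rw [norm_div, norm_mul, norm_mul, norm_pow]
      norm_num
    rw [hnorm_eq]
    have hKB : K * B n = (∏ i ∈ Finset.range n, (‖c‖ + 1 + (i:ℝ))) * ‖z‖ ^ n * (E ^ n * K) /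
        (Real.Gamma (a * n + b) * n.factorial) := by
      rw [hB]; field_simp
    rw [hKB]
    rw [div_le_div_iff₀ (by positivity) (by positivity)]
    calc ‖poch c n‖ * ‖z‖ ^ n * (Real.Gamma (a * n + b) * ↑n.factorial)
        ≤ (∏ i ∈ Finset.range n, (‖c‖ + 1 + (i:ℝ))) * ‖z‖ ^ n *
            (Real.Gamma (a * n + b) * ↑n.factorial) := by
          apply mul_le_mul_of_nonneg_right _ (by positivity)
          exact mul_le_mul_of_nonneg_right hpoch (by positivity)
      _ = ((∏ i ∈ Finset.range n, (‖c‖ + 1 + (i:ℝ))) * ‖z‖ ^ n * ↑n.factorial) *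
            Real.Gamma (a * n + b) := by ring
      _ ≤ ((∏ i ∈ Finset.range n, (‖c‖ + 1 + (i:ℝ))) * ‖z‖ ^ n * ↑n.factorial) *
            (‖Complex.Gamma (α * n + β)‖ * (E ^ n * K)) :=
          mul_le_mul_of_nonneg_left hΓlow (by positivity)
      _ = (∏ i ∈ Finset.range n, (‖c‖ + 1 + (i:ℝ))) * ‖z‖ ^ n * (E ^ n * K) *
            (‖Complex.Gamma (α * n + β)‖ * ↑n.factorial) := by ring
  -- conclude
  obtain ⟨N, hN⟩ := eventually_atTop.1 hAB
  refine (summable_nat_add_iff N).1 ?_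
  refine Summable.of_nonneg_of_le (fun n => norm_nonneg _) (fun n => hN (n + N) (Nat.le_add_left N n)) ?_
  exact (((summable_nat_add_iff N).2 hBsum)).mul_left K

section Kernel

variable (x y : ℂ)

/-- The two-variable Kernel. -/
lemma norm_extKer {p t : ℝ} (ht : t ∈ Set.Ioo (0:ℝ) 1) :
    ‖extKer x y (p, t)‖ = t ^ (x.re - 1) * (1 - t) ^ (y.re - 1) *
      Real.exp (-(p / t) - p / (1 - t)) := by
  obtain ⟨ht0, ht1⟩ := ht
  have h1t : (0:ℝ) < 1 - t := by linarith
  have harg : (-((p:ℂ) / (t:ℂ)) - (p:ℂ) / (1 - (t:ℂ)))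
      = ((-(p / t) - p / (1 - t) : ℝ) : ℂ) := by push_cast; ring
  rw [extKer, norm_mul, norm_mul, harg, Complex.norm_cpow_eq_rpow_re_of_pos ht0,
    show (1 : ℂ) - (t:ℝ) = ((1 - t : ℝ) : ℂ) by push_cast; ring,
    Complex.norm_cpow_eq_rpow_re_of_pos h1t, ← Complex.ofReal_exp, Complex.norm_real,
    Real.norm_of_nonneg (Real.exp_nonneg _)]
  simp [Complex.sub_re]

lemma exp_bound {p t : ℝ} (hp : 0 < p) (ht : t ∈ Set.Ioo (0:ℝ) 1) :
    Real.exp (-(p / t) - p / (1 - t)) ≤ Real.exp (-4 * p) := by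
  obtain ⟨ht0, ht1⟩ := ht
  have h1t : (0:ℝ) < 1 - t := by linarith
  apply Real.exp_le_exp.2
  have hs : p / t + p / (1 - t) = p / (t * (1 - t)) := by
    field_simp
    ring
  have h4 : 4 * p ≤ p / (t * (1 - t)) := by
    rw [le_div_iff₀ (by positivity)]
    nlinarith [mul_nonneg hp.le (sq_nonneg (2*t - 1))]
  linarith [hs, h4]

lemma realBeta_integrableOn {u v : ℝ} (hu : 0 < u) (hv : 0 < v) :
    IntegrableOn (fun t : ℝ => t ^ (u - 1) * (1 - t) ^ (v - 1)) (Set.Ioo (0:ℝ) 1) := by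
  have h := (Complex.betaIntegral_convergent (u := (u:ℂ)) (v := (v:ℂ))
    (by simpa using hu) (by simpa using hv)).norm
  rw [intervalIntegrable_iff_integrableOn_Ioo_of_le zero_le_one] at h
  apply h.congr_fun ?_ measurableSet_Ioo
  intro t ht
  obtain ⟨ht0, ht1⟩ := ht
  have h1t : (0:ℝ) < 1 - t := by linarith
  simp only [norm_mul, Complex.norm_cpow_eq_rpow_re_of_pos ht0,
    show (1 : ℂ) - (t:ℝ) = ((1 - t : ℝ) : ℂ) by push_cast; ring,
    Complex.norm_cpow_eq_rpow_re_of_pos h1t]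
  norm_num

lemma extKer_contOn : ContinuousOn (extKer x y) (Set.Ioi (0:ℝ) ×ˢ Set.Ioo (0:ℝ) 1) := by
  have hofReal2 : Continuous fun q : ℝ × ℝ => ((q.2 : ℂ)) :=
    Complex.continuous_ofReal.comp continuous_snd
  have hofReal1 : Continuous fun q : ℝ × ℝ => ((q.1 : ℂ)) :=
    Complex.continuous_ofReal.comp continuous_fst
  apply ContinuousOn.mul
  apply ContinuousOn.mul
  · apply ContinuousOn.cpow hofReal2.continuousOn continuousOn_const
    intro q hq
    exact Complex.ofReal_mem_slitPlane.2 hq.2.1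
  · apply ContinuousOn.cpow (continuous_const.sub hofReal2).continuousOn continuousOn_const
    intro q hq
    show (1:ℂ) - ((q.2:ℝ):ℂ) ∈ Complex.slitPlane
    rw [show (1 : ℂ) - (q.2:ℝ) = ((1 - q.2 : ℝ) : ℂ) by push_cast; ring]
    exact Complex.ofReal_mem_slitPlane.2 (by linarith [hq.2.2])
  · apply Complex.continuous_exp.comp_continuousOn
    apply ContinuousOn.sub
    · apply ContinuousOn.neg
      apply ContinuousOn.div hofReal1.continuousOn hofReal2.continuousOn
      intro q hq
      exact_mod_cast ne_of_gt hq.2.1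
    · apply ContinuousOn.div hofReal1.continuousOn (continuous_const.sub hofReal2).continuousOn
      intro q hq
      show (1:ℂ) - ((q.2:ℝ):ℂ) ≠ 0
      rw [show (1 : ℂ) - (q.2:ℝ) = ((1 - q.2 : ℝ) : ℂ) by push_cast; ring]
      exact_mod_cast ne_of_gt (by linarith [hq.2.2] : (0:ℝ) < 1 - q.2)

variable {x y : ℂ}

lemma extKer_slice_integrable (hx : 0 < x.re) (hy : 0 < y.re) {p : ℝ} (hp : 0 < p) :
    IntegrableOn (fun t => extKer x y (p, t)) (Set.Ioo (0:ℝ) 1) := by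
  apply Integrable.mono' (realBeta_integrableOn hx hy)
  · -- measurability
    have hmap : Set.MapsTo (fun t : ℝ => (p, t)) (Set.Ioo (0:ℝ) 1)
        (Set.Ioi (0:ℝ) ×ˢ Set.Ioo (0:ℝ) 1) := fun t ht => ⟨hp, ht⟩
    exact ((extKer_contOn x y).comp (Continuous.continuousOn (by fun_prop)) hmap).aestronglyMeasurable
      measurableSet_Ioo
  · refine (ae_restrict_iff' measurableSet_Ioo).2 (Filter.Eventually.of_forall fun t ht => ?_)
    rw [norm_extKer x y ht]
    obtain ⟨ht0, ht1⟩ := ht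
    have h1t : (0:ℝ) < 1 - t := by linarith
    have hexp : Real.exp (-(p / t) - p / (1 - t)) ≤ 1 := by
      apply Real.exp_le_one_iff.2
      have : 0 ≤ p / t := by positivity
      have : 0 ≤ p / (1 - t) := by positivity
      linarith
    calc t ^ (x.re - 1) * (1 - t) ^ (y.re - 1) * Real.exp (-(p / t) - p / (1 - t))
        ≤ t ^ (x.re - 1) * (1 - t) ^ (y.re - 1) * 1 :=
          mul_le_mul_of_nonneg_left hexp (by positivity)
      _ = t ^ (x.re - 1) * (1 - t) ^ (y.re - 1) := mul_one _

lemma extKer_integrable (hx : 0 < x.re) (hy : 0 < y.re) :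
    Integrable (extKer x y)
      ((volume.restrict (Set.Ioi 0)).prod (volume.restrict (Set.Ioo 0 1))) := by
  set C : ℝ := ∫ t in Set.Ioo (0:ℝ) 1, t ^ (x.re - 1) * (1 - t) ^ (y.re - 1) with hC
  have hmeas : AEStronglyMeasurable (extKer x y)
      ((volume.restrict (Set.Ioi 0)).prod (volume.restrict (Set.Ioo 0 1))) := by
    rw [Measure.prod_restrict]
    exact (extKer_contOn x y).aestronglyMeasurable (measurableSet_Ioi.prod measurableSet_Ioo)
  refine (integrable_prod_iff hmeas).2 ⟨?_, ?_⟩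
  · refine (ae_restrict_iff' measurableSet_Ioi).2 (Filter.Eventually.of_forall fun p hp => ?_)
    exact extKer_slice_integrable hx hy hp
  · apply Integrable.mono' (g := fun p => C * Real.exp (-4 * p))
    · exact (exp_neg_integrableOn_Ioi 0 (by norm_num : (0:ℝ) < 4)).const_mul C
    · exact hmeas.norm.integral_prod_right'
    · refine (ae_restrict_iff' measurableSet_Ioi).2 (Filter.Eventually.of_forall fun p hp => ?_)
      have hint : IntegrableOn (fun t => ‖extKer x y (p, t)‖) (Set.Ioo (0:ℝ) 1) :=
        (extKer_slice_integrable hx hy hp).norm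
      have hb : ∀ t ∈ Set.Ioo (0:ℝ) 1,
          ‖extKer x y (p, t)‖ ≤ t ^ (x.re - 1) * (1 - t) ^ (y.re - 1) * Real.exp (-4 * p) := by
        intro t ht
        rw [norm_extKer x y ht]
        apply mul_le_mul_of_nonneg_left (exp_bound hp ht)
        have h1t : (0:ℝ) < 1 - t := by linarith [ht.2]
        have ht0 := ht.1
        positivity
      have h1 : ∫ t in Set.Ioo (0:ℝ) 1, ‖extKer x y (p, t)‖
          ≤ ∫ t in Set.Ioo (0:ℝ) 1,
              t ^ (x.re - 1) * (1 - t) ^ (y.re - 1) * Real.exp (-4 * p) := by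
        apply setIntegral_mono_on hint
          ((realBeta_integrableOn hx hy).mul_const _) measurableSet_Ioo hb
      have h2 : (∫ t in Set.Ioo (0:ℝ) 1,
          t ^ (x.re - 1) * (1 - t) ^ (y.re - 1) * Real.exp (-4 * p))
          = C * Real.exp (-4 * p) := by
        rw [integral_mul_const]
      rw [Real.norm_of_nonneg (integral_nonneg fun t => norm_nonneg _)]
      rw [← h2]
      exact h1

end Kernel

section Values

variable {x y : ℂ}

lemma extBeta_eq_setIntegral (x y : ℂ) (p : ℝ) :
    extBeta p p x y = ∫ t in Set.Ioo (0:ℝ) 1, extKer x y (p, t) := by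
  rw [extBeta, intervalIntegral.integral_of_le zero_le_one,
    MeasureTheory.integral_Ioc_eq_integral_Ioo]
  rfl

lemma extBeta_integrable (hx : 0 < x.re) (hy : 0 < y.re) :
    Integrable (fun p : ℝ => extBeta p p x y) (volume.restrict (Set.Ioi 0)) := by
  have h := (extKer_integrable hx hy).integral_prod_left
  exact h.congr (Filter.Eventually.of_forall fun p => (extBeta_eq_setIntegral x y p).symm)

lemma integral_exp_part {t : ℝ} (ht : t ∈ Set.Ioo (0:ℝ) 1) :
    (∫ p in Set.Ioi (0:ℝ), Complex.exp (-((p:ℂ) / (t:ℂ)) - (p:ℂ) / (1 - (t:ℂ))))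
      = ((t * (1 - t) : ℝ) : ℂ) := by
  obtain ⟨ht0, ht1⟩ := ht
  have h1t : (0:ℝ) < 1 - t := by linarith
  set b : ℝ := (t * (1 - t))⁻¹ with hb
  have hbpos : 0 < b := by positivity
  have harg : ∀ p : ℝ, (-((p:ℂ) / (t:ℂ)) - (p:ℂ) / (1 - (t:ℂ)))
      = ((-(b * p) : ℝ) : ℂ) := by
    intro p
    have : -(p / t) - p / (1 - t) = -(b * p) := by
      rw [hb]
      field_simp
      ring
    rw [← this]
    push_cast
    ring
  have h1 : (fun p : ℝ => Complex.exp (-((p:ℂ) / (t:ℂ)) - (p:ℂ) / (1 - (t:ℂ))))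
      = fun p : ℝ => ((Real.exp (-(b * p)) : ℝ) : ℂ) := by
    funext p
    rw [harg p, Complex.ofReal_exp]
  have h2 : (∫ p in Set.Ioi (0:ℝ), Real.exp (-(b * p))) = b⁻¹ := by
    have h3 := integral_comp_mul_left_Ioi (fun x => Real.exp (-x)) 0 hbpos
    simp only [mul_zero] at h3
    rw [h3, integral_exp_neg_Ioi]
    simp
  have h3 : (∫ p in Set.Ioi (0:ℝ), ((Real.exp (-(b * p)) : ℝ) : ℂ))
      = ((∫ p in Set.Ioi (0:ℝ), Real.exp (-(b * p)) : ℝ) : ℂ) := integral_ofReal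
  rw [h1]
  rw [h3, h2, hb, inv_inv]

lemma integral_extBeta (hx : 0 < x.re) (hy : 0 < y.re) :
    (∫ p in Set.Ioi (0:ℝ), extBeta p p x y) = Complex.betaIntegral (x + 1) (y + 1) := by
  have h0 : (∫ p in Set.Ioi (0:ℝ), extBeta p p x y)
      = ∫ p in Set.Ioi (0:ℝ), ∫ t in Set.Ioo (0:ℝ) 1, extKer x y (p, t) :=
    integral_congr_ae (Filter.Eventually.of_forall fun p => extBeta_eq_setIntegral x y p)
  have hswap : (∫ p in Set.Ioi (0:ℝ), ∫ t in Set.Ioo (0:ℝ) 1, extKer x y (p, t))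
      = ∫ t in Set.Ioo (0:ℝ) 1, ∫ p in Set.Ioi (0:ℝ), extKer x y (p, t) :=
    integral_integral_swap (extKer_integrable hx hy)
  rw [h0, hswap]
  have h1 : ∀ t ∈ Set.Ioo (0:ℝ) 1,
      (∫ p in Set.Ioi (0:ℝ), extKer x y (p, t))
        = (t:ℂ) ^ (x - 1) * (1 - (t:ℂ)) ^ (y - 1) * ((t * (1 - t) : ℝ) : ℂ) := by
    intro t ht
    rw [show (fun p : ℝ => extKer x y (p, t)) = fun p : ℝ =>
        (t:ℂ) ^ (x - 1) * (1 - (t:ℂ)) ^ (y - 1) *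
          Complex.exp (-((p:ℂ) / (t:ℂ)) - (p:ℂ) / (1 - (t:ℂ))) from rfl]
    rw [integral_const_mul, integral_exp_part ht]
  rw [setIntegral_congr_fun measurableSet_Ioo h1]
  rw [Complex.betaIntegral, intervalIntegral.integral_of_le zero_le_one,
    MeasureTheory.integral_Ioc_eq_integral_Ioo]
  apply setIntegral_congr_fun measurableSet_Ioo
  intro t ht
  obtain ⟨ht0, ht1⟩ := ht
  dsimp only
  have htC : (t:ℂ) ≠ 0 := by exact_mod_cast ne_of_gt ht0
  have h1tC : (1:ℂ) - (t:ℝ) ≠ 0 := by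
    rw [show (1 : ℂ) - (t:ℝ) = ((1 - t : ℝ) : ℂ) by push_cast; ring]
    exact_mod_cast ne_of_gt (by linarith : (0:ℝ) < 1 - t)
  have e1 : (t:ℂ) ^ (x + 1 - 1) = (t:ℂ) ^ (x - 1) * (t:ℂ) := by
    rw [show x + 1 - 1 = (x - 1) + 1 by ring, Complex.cpow_add _ _ htC, Complex.cpow_one]
  have e2 : (1 - (t:ℂ)) ^ (y + 1 - 1) = (1 - (t:ℂ)) ^ (y - 1) * (1 - (t:ℂ)) := by
    rw [show y + 1 - 1 = (y - 1) + 1 by ring, Complex.cpow_add _ _ h1tC, Complex.cpow_one]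
  rw [e1, e2]
  push_cast
  ring

lemma integral_norm_extBeta_le (hx : 0 < x.re) (hy : 0 < y.re) :
    (∫ p in Set.Ioi (0:ℝ), ‖extBeta p p x y‖)
      ≤ (∫ t in Set.Ioo (0:ℝ) 1, t ^ (x.re - 1) * (1 - t) ^ (y.re - 1)) * (4:ℝ)⁻¹ := by
  set C : ℝ := ∫ t in Set.Ioo (0:ℝ) 1, t ^ (x.re - 1) * (1 - t) ^ (y.re - 1) with hC
  have key : ∀ p ∈ Set.Ioi (0:ℝ), ‖extBeta p p x y‖ ≤ C * Real.exp (-4 * p) := by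
    intro p hp
    rw [extBeta_eq_setIntegral]
    refine (norm_integral_le_integral_norm _).trans ?_
    have hint : IntegrableOn (fun t => ‖extKer x y (p, t)‖) (Set.Ioo (0:ℝ) 1) :=
      (extKer_slice_integrable hx hy hp).norm
    have hb : ∀ t ∈ Set.Ioo (0:ℝ) 1,
        ‖extKer x y (p, t)‖ ≤ t ^ (x.re - 1) * (1 - t) ^ (y.re - 1) * Real.exp (-4 * p) := by
      intro t ht
      rw [norm_extKer x y ht]
      apply mul_le_mul_of_nonneg_left (exp_bound hp ht)
      have h1t : (0:ℝ) < 1 - t := by linarith [ht.2]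
      have ht0 := ht.1
      positivity
    calc (∫ t in Set.Ioo (0:ℝ) 1, ‖extKer x y (p, t)‖)
        ≤ ∫ t in Set.Ioo (0:ℝ) 1, t ^ (x.re - 1) * (1 - t) ^ (y.re - 1) * Real.exp (-4 * p) :=
          setIntegral_mono_on hint ((realBeta_integrableOn hx hy).mul_const _)
            measurableSet_Ioo hb
      _ = C * Real.exp (-4 * p) := integral_mul_const _ _
  have hmono : (∫ p in Set.Ioi (0:ℝ), ‖extBeta p p x y‖)
      ≤ ∫ p in Set.Ioi (0:ℝ), C * Real.exp (-4 * p) :=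
    setIntegral_mono_on (extBeta_integrable hx hy).norm
      ((exp_neg_integrableOn_Ioi 0 (by norm_num : (0:ℝ) < 4)).const_mul C)
      measurableSet_Ioi key
  refine hmono.trans ?_
  rw [integral_const_mul]
  have h2 : (∫ p in Set.Ioi (0:ℝ), Real.exp (-4 * p)) = (4:ℝ)⁻¹ := by
    have h3 := integral_comp_mul_left_Ioi (fun x => Real.exp (-x)) 0
      (by norm_num : (0:ℝ) < 4)
    simp only [mul_zero] at h3
    rw [show (fun p : ℝ => Real.exp (-4 * p)) = fun p : ℝ => Real.exp (-(4 * p)) by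
      funext p; ring_nf, h3, integral_exp_neg_Ioi]
    simp
  rw [h2, mul_comm]

end Values

lemma Gamma_poch {c : ℂ} (hc : 0 < c.re) (n : ℕ) :
    Complex.Gamma c * poch c n = Complex.Gamma (c + n) := by
  induction n with
  | zero => simp [poch]
  | succ n ih =>
    have hne : c + (n:ℂ) ≠ 0 := by
      intro h
      have h2 : (c + (n:ℂ)).re = 0 := by rw [h]; simp
      simp only [Complex.add_re, Complex.natCast_re] at h2
      nlinarith [Nat.cast_nonneg (α := ℝ) n]
    rw [poch, Finset.prod_range_succ, ← poch, ← mul_assoc, ih]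
    have h3 := Complex.Gamma_add_one (c + n) hne
    rw [show ((n+1 : ℕ) : ℂ) = (n:ℂ) + 1 by push_cast; ring, ← add_assoc, h3]
    ring

lemma term_eval {c α β γ : ℂ} (hcγ : γ.re < c.re) (hγ : 0 < γ.re)
    (hα : 0 < α.re) (hβ : 0 < β.re) (z : ℂ) (n : ℕ) :
    Complex.betaIntegral ((γ + n) + 1) ((c - γ) + 1) *
      (poch c n * z ^ n / (cBeta γ (c - γ) * (Complex.Gamma (α * n + β) * (n.factorial : ℂ))))
    = Complex.Gamma (c + 1 - γ) / (Complex.Gamma γ * Complex.Gamma (c - γ)) *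
        (Complex.Gamma (c + n) * Complex.Gamma (γ + 1 + n) /
          (Complex.Gamma (α * n + β) * Complex.Gamma (c + 2 + n)) * z ^ n / n.factorial) := by
  have hc : 0 < c.re := lt_trans hγ hcγ
  have hn0 : (0:ℝ) ≤ n := Nat.cast_nonneg n
  have h1 : 0 < ((γ + n) + 1).re := by
    simp only [Complex.add_re, Complex.natCast_re, Complex.one_re]
    linarith
  have h2 : 0 < ((c - γ) + 1).re := by
    simp only [Complex.add_re, Complex.sub_re, Complex.one_re]
    linarith
  have hbeta := Complex.Gamma_mul_Gamma_eq_betaIntegral h1 h2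
  rw [show ((γ + n) + 1) + ((c - γ) + 1) = c + (n:ℂ) + 2 by ring] at hbeta
  -- nonvanishing
  have hΓγ : Complex.Gamma γ ≠ 0 := Complex.Gamma_ne_zero_of_re_pos hγ
  have hΓcγ : Complex.Gamma (c - γ) ≠ 0 := by
    apply Complex.Gamma_ne_zero_of_re_pos
    simp only [Complex.sub_re]; linarith
  have hΓc : Complex.Gamma c ≠ 0 := Complex.Gamma_ne_zero_of_re_pos hc
  have hΓαβ : Complex.Gamma (α * n + β) ≠ 0 := by
    apply Complex.Gamma_ne_zero_of_re_pos
    simp only [Complex.add_re, Complex.mul_re, Complex.natCast_re, Complex.natCast_im]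
    nlinarith
  have hΓcn2 : Complex.Gamma (c + n + 2) ≠ 0 := by
    apply Complex.Gamma_ne_zero_of_re_pos
    simp only [Complex.add_re, Complex.natCast_re, Complex.re_ofNat]
    linarith
  have hfac : ((n.factorial : ℂ)) ≠ 0 := by
    exact_mod_cast n.factorial_ne_zero
  have hbeta' : Complex.betaIntegral ((γ + n) + 1) ((c - γ) + 1)
      = Complex.Gamma ((γ + n) + 1) * Complex.Gamma ((c - γ) + 1) / Complex.Gamma (c + n + 2) := by
    rw [eq_div_iff hΓcn2, mul_comm]
    exact hbeta.symm
  have hpoch : poch c n = Complex.Gamma (c + n) / Complex.Gamma c := by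
    rw [eq_div_iff hΓc, mul_comm]
    exact Gamma_poch hc n
  have hcB : cBeta γ (c - γ) = Complex.Gamma γ * Complex.Gamma (c - γ) / Complex.Gamma c := by
    rw [cBeta, show γ + (c - γ) = c by ring]
  -- normalize Gamma arguments
  rw [hbeta', hpoch, hcB,
    show c + 2 + (n:ℂ) = c + n + 2 by ring,
    show γ + 1 + (n:ℂ) = (γ + n) + 1 by ring,
    show c + 1 - γ = (c - γ) + 1 by ring]
  field_simp

/-- the integral over `(0,∞)` in `p` of the extended Mittag-Leffler function of
Özarslan–Yılmaz, `E^{γ,c}_{α,β}(z; p) := E^{γ,c}_{α,β}(z; p, p)`. -/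
theorem extML_single_integral (c α β γ : ℂ) (hcγ : γ.re < c.re) (hγ : 0 < γ.re)
    (hα : 0 < α.re) (hβ : 0 < β.re) (z : ℂ) :
    (∫ p in Set.Ioi (0:ℝ), extML α β γ c p p z) =
      Complex.Gamma (c + 1 - γ) / (Complex.Gamma γ * Complex.Gamma (c - γ)) *
        ∑' n : ℕ, Complex.Gamma (c + n) * Complex.Gamma (γ + 1 + n) /
          (Complex.Gamma (α * n + β) * Complex.Gamma (c + 2 + n)) *
          z ^ n / n.factorial := by
  have hc : 0 < c.re := lt_trans hγ hcγ
  have hρ : 0 < (c - γ).re := by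
    simp only [Complex.sub_re]; linarith
  have hxre : ∀ n : ℕ, 0 < (γ + (n:ℂ)).re := by
    intro n
    simp only [Complex.add_re, Complex.natCast_re]
    have : (0:ℝ) ≤ n := Nat.cast_nonneg n
    linarith
  set f : ℕ → ℝ → ℂ := fun n p =>
    extBeta p p (γ + n) (c - γ) / cBeta γ (c - γ) * poch c n * z ^ n /
      (Complex.Gamma (α * n + β) * n.factorial) with hfdef
  set k : ℕ → ℂ := fun n =>
    poch c n * z ^ n / (cBeta γ (c - γ) * (Complex.Gamma (α * n + β) * n.factorial)) with hkdef
  have hfn : ∀ (n : ℕ) (p : ℝ), f n p = extBeta p p (γ + n) (c - γ) * k n := by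
    intro n p
    rw [hfdef, hkdef]
    ring
  have hmeasf : ∀ n : ℕ, AEStronglyMeasurable (f n) (volume.restrict (Set.Ioi 0)) := by
    intro n
    apply AEStronglyMeasurable.congr
      (((extBeta_integrable (hxre n) hρ).aestronglyMeasurable).mul_const (k n))
    exact Filter.Eventually.of_forall fun p => (hfn n p).symm
  have hfint : ∀ n : ℕ, Integrable (f n) (volume.restrict (Set.Ioi 0)) := by
    intro n
    apply Integrable.congr ((extBeta_integrable (hxre n) hρ).mul_const (k n))
    exact Filter.Eventually.of_forall fun p => (hfn n p).symm
  set Cr : ℝ := ∫ t in Set.Ioo (0:ℝ) 1, t ^ (γ.re - 1) * (1 - t) ^ ((c - γ).re - 1) with hCr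
  have hCr0 : 0 ≤ Cr := by
    rw [hCr]
    apply setIntegral_nonneg measurableSet_Ioo
    intro t ht
    exact mul_nonneg (Real.rpow_nonneg ht.1.le _)
      (Real.rpow_nonneg (by linarith [ht.2]) _)
  have hCmono : ∀ n : ℕ,
      (∫ t in Set.Ioo (0:ℝ) 1, t ^ ((γ + (n:ℂ)).re - 1) * (1 - t) ^ ((c - γ).re - 1)) ≤ Cr := by
    intro n
    apply setIntegral_mono_on (realBeta_integrableOn (hxre n) hρ)
      (realBeta_integrableOn hγ hρ) measurableSet_Ioo
    intro t ht
    apply mul_le_mul_of_nonneg_right _ (Real.rpow_nonneg (by linarith [ht.2]) _)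
    apply Real.rpow_le_rpow_of_exponent_ge ht.1 ht.2.le
    simp only [Complex.add_re, Complex.natCast_re]
    have : (0:ℝ) ≤ n := Nat.cast_nonneg n
    linarith
  have hnorm_int : ∀ n : ℕ,
      (∫ p in Set.Ioi (0:ℝ), ‖f n p‖) ≤ ‖k n‖ * (Cr * 4⁻¹) := by
    intro n
    have h1 : (fun p : ℝ => ‖f n p‖)
        = fun p : ℝ => ‖extBeta p p (γ + n) (c - γ)‖ * ‖k n‖ := by
      funext p
      rw [hfn n p, norm_mul]
    rw [h1, integral_mul_const]
    have h2 : (∫ p in Set.Ioi (0:ℝ), ‖extBeta p p (γ + n) (c - γ)‖) ≤ Cr * 4⁻¹ := by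
      refine (integral_norm_extBeta_le (hxre n) hρ).trans ?_
      exact mul_le_mul_of_nonneg_right (hCmono n) (by norm_num)
    calc (∫ p in Set.Ioi (0:ℝ), ‖extBeta p p (γ + n) (c - γ)‖) * ‖k n‖
        ≤ (Cr * 4⁻¹) * ‖k n‖ := mul_le_mul_of_nonneg_right h2 (norm_nonneg _)
      _ = ‖k n‖ * (Cr * 4⁻¹) := by ring
  have hksum : Summable (fun n : ℕ => ‖k n‖ * (Cr * 4⁻¹)) := by
    have hAsum := summable_A c α β z hα hβ
    have heq : (fun n : ℕ => ‖k n‖ * (Cr * 4⁻¹))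
        = fun n : ℕ => ‖poch c n * z ^ n / (Complex.Gamma (α * n + β) * (n.factorial : ℂ))‖ *
            (‖(cBeta γ (c - γ))⁻¹‖ * (Cr * 4⁻¹)) := by
      funext n
      have : k n = (poch c n * z ^ n / (Complex.Gamma (α * n + β) * (n.factorial : ℂ))) *
          (cBeta γ (c - γ))⁻¹ := by
        rw [hkdef]
        ring
      rw [this, norm_mul]
      ring
    rw [heq]
    exact hAsum.mul_right _
  have hlint : (∑' n : ℕ, ∫⁻ p in Set.Ioi (0:ℝ), ‖f n p‖₊) ≠ ⊤ := by
    have hle : ∀ n : ℕ, (∫⁻ p in Set.Ioi (0:ℝ), ‖f n p‖₊)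
        ≤ ENNReal.ofReal (‖k n‖ * (Cr * 4⁻¹)) := by
      intro n
      have hofr := ofReal_integral_norm_eq_lintegral_enorm (hfint n)
      simp only [enorm_eq_nnnorm] at hofr
      rw [← hofr]
      exact ENNReal.ofReal_le_ofReal (hnorm_int n)
    have h2 : (∑' n : ℕ, ENNReal.ofReal (‖k n‖ * (Cr * 4⁻¹))) ≠ ⊤ := by
      rw [← ENNReal.ofReal_tsum_of_nonneg
        (fun n => mul_nonneg (norm_nonneg _) (by positivity)) hksum]
      exact ENNReal.ofReal_ne_top
    exact ne_top_of_le_ne_top h2 (ENNReal.tsum_le_tsum hle)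
  have hswap := integral_tsum hmeasf hlint
  have hLHS : (∫ p in Set.Ioi (0:ℝ), extML α β γ c p p z)
      = ∫ p in Set.Ioi (0:ℝ), ∑' n : ℕ, f n p := rfl
  rw [hLHS, hswap]
  have hval : ∀ n : ℕ, (∫ p in Set.Ioi (0:ℝ), f n p)
      = Complex.Gamma (c + 1 - γ) / (Complex.Gamma γ * Complex.Gamma (c - γ)) *
        (Complex.Gamma (c + n) * Complex.Gamma (γ + 1 + n) /
          (Complex.Gamma (α * n + β) * Complex.Gamma (c + 2 + n)) * z ^ n / n.factorial) := by
    intro n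
    have h1 : (∫ p in Set.Ioi (0:ℝ), f n p)
        = (∫ p in Set.Ioi (0:ℝ), extBeta p p (γ + n) (c - γ)) * k n := by
      rw [show (fun p : ℝ => f n p) = fun p : ℝ => extBeta p p (γ + n) (c - γ) * k n from
        funext fun p => hfn n p]
      exact integral_mul_const _ _
    rw [h1, integral_extBeta (hxre n) hρ, hkdef]
    exact term_eval hcγ hγ hα hβ z n
  rw [tsum_congr hval, tsum_mul_left]
end

section
/- Let p, q ≥ 0, let α, β, δ, λ be complex numbers with Re(λ) > Re(δ) > 0, Re(α) > 0 and Re(β) > 0, and let x > 0 be real. Then the extended Riemann–Liouville fractional derivative of order δ−λ (with two-parameter exponential regularizer) of the function z^{δ−1} E^{λ}_{α,β}(z) satisfies: (1/Γ(λ−δ)) ∫₀^x τ^{δ−1} E^{λ}_{α,β}(τ) (x−τ)^{λ−δ−1} exp(−p x/τ − q x/(x−τ)) dτ = x^{λ−1} [B(δ, λ−δ)/Γ(λ−δ)] E^{δ,λ}_{α,β}(x; p, q). -/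
set_option maxHeartbeats 1000000


open MeasureTheory Complex Filter Set Topology

lemma gamma_ratio_lb {x r : ℝ} (hx : 1 < x) (hr : 0 < r) :
    Real.Gamma x * (x - 1) ^ r ≤ Real.Gamma (x + r) := by
  have h0 : (0:ℝ) < x - 1 := by linarith
  have hΓx : 0 < Real.Gamma x := Real.Gamma_pos_of_pos (by linarith)
  have hΓx1 : 0 < Real.Gamma (x - 1) := Real.Gamma_pos_of_pos h0
  have hΓxr : 0 < Real.Gamma (x + r) := Real.Gamma_pos_of_pos (by linarith)
  have hs := Real.convexOn_log_Gamma.slope_mono_adjacent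
      (mem_Ioi.mpr h0) (mem_Ioi.mpr (by linarith : (0:ℝ) < x + r))
      (by linarith : x - 1 < x) (by linarith : x < x + r)
  have hfe : Real.Gamma x = (x - 1) * Real.Gamma (x - 1) := by
    have := Real.Gamma_add_one (ne_of_gt h0)
    rw [sub_add_cancel] at this
    exact this
  simp only [Function.comp] at hs
  have hlog : Real.log (Real.Gamma x) - Real.log (Real.Gamma (x - 1)) = Real.log (x - 1) := by
    rw [hfe, Real.log_mul (ne_of_gt h0) (ne_of_gt hΓx1)]; ring
  have h1 : (x - (x - 1)) = (1:ℝ) := by ring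
  have h2 : (x + r - x) = r := by ring
  rw [h1, h2, div_one, hlog] at hs
  -- hs : log (x-1) ≤ (log Γ(x+r) - log Γ x) / r
  have h3 : r * Real.log (x - 1) + Real.log (Real.Gamma x) ≤ Real.log (Real.Gamma (x + r)) := by
    have := (le_div_iff₀ hr).mp hs
    linarith [mul_comm r (Real.log (x-1))]
  calc Real.Gamma x * (x - 1) ^ r
      = Real.exp (Real.log (Real.Gamma x) + r * Real.log (x - 1)) := by
        rw [Real.rpow_def_of_pos h0, Real.exp_add, Real.exp_log hΓx, mul_comm r]
    _ ≤ Real.exp (Real.log (Real.Gamma (x + r))) := by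
        apply Real.exp_le_exp.mpr; linarith
    _ = Real.Gamma (x + r) := Real.exp_log hΓxr

lemma abs_Gamma_lb {z : ℂ} (hz : 0 < z.re) :
    Real.Gamma z.re * Real.exp (-(z.im ^ 2 * (1 / z.re ^ 2 + 1 / z.re))) ≤
      ‖Complex.Gamma z‖ := by
  set X := z.re with hX
  set Y := z.im with hY
  set E := Y ^ 2 * (1 / X ^ 2 + 1 / X) with hE
  have hfac : ∀ j : ℕ, ‖z + j‖ ≤ (X + j) * Real.exp (Y ^ 2 / (X + j) ^ 2) := by
    intro j
    have hXj : 0 < X + (j:ℝ) := by positivity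
    have habs2 : (‖z + j‖) ^ 2 = (X + j) ^ 2 + Y ^ 2 := by
      rw [Complex.sq_norm, Complex.normSq_apply]
      simp only [Complex.add_re, Complex.add_im, Complex.natCast_re, Complex.natCast_im, ← hX, ← hY]
      ring
    have hrhs : 0 ≤ (X + j) * Real.exp (Y ^ 2 / (X + j) ^ 2) := by positivity
    have he : Real.exp (Y ^ 2 / (X + j) ^ 2) ^ 2 = Real.exp (2 * (Y ^ 2 / (X + j) ^ 2)) := by
      rw [sq, ← Real.exp_add]; ring_nf
    have hu : (X + j) ^ 2 * (Y ^ 2 / (X + j) ^ 2) = Y ^ 2 := by field_simp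
    have h2 : (‖z + j‖) ^ 2 ≤ ((X + j) * Real.exp (Y ^ 2 / (X + j) ^ 2)) ^ 2 := by
      rw [habs2, mul_pow, he]
      nlinarith [mul_nonneg (sq_nonneg (X + (j:ℝ)))
        (sub_nonneg.mpr (Real.add_one_le_exp (2 * (Y ^ 2 / (X + j) ^ 2)))), hu,
        sq_nonneg (X + (j:ℝ))]
    calc ‖z + j‖ = Real.sqrt ((‖z + j‖) ^ 2) := by
          rw [Real.sqrt_sq (norm_nonneg _)]
      _ ≤ Real.sqrt (((X + j) * Real.exp (Y ^ 2 / (X + j) ^ 2)) ^ 2) := Real.sqrt_le_sqrt h2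
      _ = (X + j) * Real.exp (Y ^ 2 / (X + j) ^ 2) := Real.sqrt_sq hrhs
  have hsum : ∀ n : ℕ, ∑ j ∈ Finset.range (n + 1), Y ^ 2 / (X + j) ^ 2 ≤ E := by
    intro n
    rw [Finset.sum_range_succ']
    have tele := Finset.sum_range_sub' (fun j : ℕ => Y ^ 2 * (1 / (X + (j:ℝ)))) n
    push_cast at tele
    have hterm : ∀ j ∈ Finset.range n, Y ^ 2 / (X + ((j:ℝ) + 1)) ^ 2 ≤
        Y ^ 2 * (1 / (X + j)) - Y ^ 2 * (1 / (X + (j + 1))) := by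
      intro j _
      have h1 : 0 < X + (j:ℝ) := by positivity
      have h2 : 0 < X + ((j:ℝ) + 1) := by positivity
      have key : 1 / (X + ((j:ℝ) + 1)) ^ 2 ≤ 1 / (X + j) - 1 / (X + (j + 1)) := by
        rw [div_sub_div _ _ (ne_of_gt h1) (ne_of_gt h2)]
        have : (X + (j:ℝ)) * (X + (j + 1)) ≤ (X + ((j:ℝ) + 1)) ^ 2 := by nlinarith
        rw [show (1:ℝ) * (X + ((j:ℝ) + 1)) - (X + (j:ℝ)) * 1 = 1 by ring]
        exact one_div_le_one_div_of_le (by positivity) this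
      calc Y ^ 2 / (X + ((j:ℝ) + 1)) ^ 2 = Y ^ 2 * (1 / (X + ((j:ℝ) + 1)) ^ 2) := by ring
        _ ≤ Y ^ 2 * (1 / (X + j) - 1 / (X + (j + 1))) :=
            mul_le_mul_of_nonneg_left key (sq_nonneg Y)
        _ = Y ^ 2 * (1 / (X + j)) - Y ^ 2 * (1 / (X + (j + 1))) := by ring
    have hbd : ∑ j ∈ Finset.range n, Y ^ 2 / (X + ((j:ℝ) + 1)) ^ 2 ≤ Y ^ 2 * (1 / X) := by
      calc ∑ j ∈ Finset.range n, Y ^ 2 / (X + ((j:ℝ) + 1)) ^ 2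
          ≤ ∑ j ∈ Finset.range n, (Y ^ 2 * (1 / (X + j)) - Y ^ 2 * (1 / (X + (j + 1)))) :=
            Finset.sum_le_sum hterm
        _ = Y ^ 2 * (1 / (X + 0)) - Y ^ 2 * (1 / (X + n)) := tele
        _ ≤ Y ^ 2 * (1 / X) := by
            have : 0 ≤ Y ^ 2 * (1 / (X + (n:ℝ))) := by positivity
            simp only [add_zero]
            linarith
    have cast1 : ∀ j : ℕ, Y ^ 2 / (X + ((j:ℕ) + 1 : ℕ)) ^ 2 = Y ^ 2 / (X + ((j:ℝ) + 1)) ^ 2 := by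
      intro j; push_cast; ring_nf
    calc (∑ j ∈ Finset.range n, Y ^ 2 / (X + ((j + 1 : ℕ)):ℝ) ^ 2) + Y ^ 2 / (X + (0:ℕ)) ^ 2
        = (∑ j ∈ Finset.range n, Y ^ 2 / (X + ((j:ℝ) + 1)) ^ 2) + Y ^ 2 / X ^ 2 := by
          rw [Finset.sum_congr rfl (fun j _ => cast1 j)]
          norm_num
      _ ≤ Y ^ 2 * (1 / X) + Y ^ 2 / X ^ 2 := by linarith
      _ = E := by rw [hE]; ring
  have hn : ∀ n : ℕ, 1 ≤ n →
      Real.GammaSeq X n * Real.exp (-E) ≤ ‖Complex.GammaSeq z n‖ := by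
    intro n hn1
    have hzj : ∀ j : ℕ, (z + j) ≠ 0 := by
      intro j h
      have : (z + j).re = 0 := by rw [h]; simp
      simp only [Complex.add_re, Complex.natCast_re] at this
      have : 0 < z.re + (j:ℝ) := by positivity
      linarith
    have hprodpos : 0 < ∏ j ∈ Finset.range (n + 1), ‖z + j‖ :=
      Finset.prod_pos fun j _ => norm_pos_iff.mpr (hzj j)
    have hXprodpos : 0 < ∏ j ∈ Finset.range (n + 1), (X + (j:ℝ)) :=
      Finset.prod_pos fun j _ => by positivity
    have hprodle : ∏ j ∈ Finset.range (n + 1), ‖z + j‖ ≤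
        (∏ j ∈ Finset.range (n + 1), (X + (j:ℝ))) * Real.exp E := by
      calc ∏ j ∈ Finset.range (n + 1), ‖z + j‖
          ≤ ∏ j ∈ Finset.range (n + 1), ((X + (j:ℝ)) * Real.exp (Y ^ 2 / (X + j) ^ 2)) :=
            Finset.prod_le_prod (fun j _ => norm_nonneg _) (fun j _ => hfac j)
        _ = (∏ j ∈ Finset.range (n + 1), (X + (j:ℝ))) *
              Real.exp (∑ j ∈ Finset.range (n + 1), Y ^ 2 / (X + j) ^ 2) := by
            rw [Finset.prod_mul_distrib, Real.exp_sum]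
        _ ≤ (∏ j ∈ Finset.range (n + 1), (X + (j:ℝ))) * Real.exp E := by
            exact mul_le_mul_of_nonneg_left (Real.exp_le_exp.mpr (hsum n)) (le_of_lt hXprodpos)
    have habsseq : ‖Complex.GammaSeq z n‖ =
        (n:ℝ) ^ X * n.factorial / ∏ j ∈ Finset.range (n + 1), ‖z + j‖ := by
      rw [Complex.GammaSeq, norm_div, norm_mul, norm_prod]
      congr 2
      · rw [show ((n:ℕ):ℂ) = (((n:ℝ)):ℂ) by push_cast; rfl,
          Complex.norm_cpow_eq_rpow_re_of_pos (by exact_mod_cast hn1)]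
      · simp
    rw [habsseq, Real.GammaSeq]
    have hN : 0 ≤ (n:ℝ) ^ X * (n.factorial : ℝ) := by positivity
    rw [div_mul_eq_mul_div, div_le_div_iff₀ (by positivity) hprodpos]
    calc (n:ℝ) ^ X * (n.factorial:ℝ) * Real.exp (-E) *
          ∏ j ∈ Finset.range (n + 1), ‖z + j‖
        ≤ (n:ℝ) ^ X * (n.factorial:ℝ) * Real.exp (-E) *
          ((∏ j ∈ Finset.range (n + 1), (X + (j:ℝ))) * Real.exp E) := by
          exact mul_le_mul_of_nonneg_left hprodle (by positivity)
      _ = (n:ℝ) ^ X * (n.factorial:ℝ) * (∏ j ∈ Finset.range (n + 1), (X + (j:ℝ))) *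
          (Real.exp (-E) * Real.exp E) := by ring
      _ = (n:ℝ) ^ X * (n.factorial:ℝ) * ∏ j ∈ Finset.range (n + 1), (X + (j:ℝ)) := by
          rw [← Real.exp_add, neg_add_cancel, Real.exp_zero, mul_one]
  have t1 : Tendsto (fun n => Real.GammaSeq X n * Real.exp (-E)) atTop
      (𝓝 (Real.Gamma X * Real.exp (-E))) := (Real.GammaSeq_tendsto_Gamma X).mul_const _
  have t2 : Tendsto (fun n => ‖Complex.GammaSeq z n‖) atTop
      (𝓝 (‖Complex.Gamma z‖)) :=
    (continuous_norm.tendsto _).comp (Complex.GammaSeq_tendsto_Gamma z)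
  exact le_of_tendsto_of_tendsto t1 t2 (eventually_atTop.mpr ⟨1, hn⟩)

lemma summable_aux (α β lam : ℂ) (hα : 0 < α.re) (hβ : 0 < β.re) {x : ℝ} (hx : 0 < x) :
    Summable (fun n : ℕ => ‖poch lam n‖ * x ^ n /
      (‖Complex.Gamma (α * n + β)‖ * n.factorial)) := by
  have hm : 0 < min α.re β.re := lt_min hα hβ
  set m : ℝ := min α.re β.re with hmdef
  set M : ℝ := |α.im| + |β.im| with hMdef
  set K : ℝ := M ^ 2 * (1 / m ^ 2 + 1 / m) with hKdef
  have hK0 : 0 ≤ K := by positivity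
  set G : ℕ → ℝ := fun n => Real.Gamma (α.re * n + β.re) with hGdef
  have hXpos : ∀ n : ℕ, 0 < α.re * n + β.re := fun n => by positivity
  have hGpos : ∀ n : ℕ, 0 < G n := fun n => Real.Gamma_pos_of_pos (hXpos n)
  set cb : ℕ → ℝ := fun n =>
    ‖poch lam n‖ * x ^ n * Real.exp (K * (n + 1)) /
      (G n * n.factorial) with hcbdef
  have hcbnn : ∀ n, 0 ≤ cb n := fun n => by
    have := hGpos n; positivity
  have hre : ∀ n : ℕ, (α * n + β).re = α.re * n + β.re := by
    intro n
    simp [Complex.add_re, Complex.mul_re]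
  have him : ∀ n : ℕ, (α * n + β).im = α.im * n + β.im := by
    intro n
    simp [Complex.add_im, Complex.mul_im]
  have habspos : ∀ n : ℕ, 0 < ‖Complex.Gamma (α * n + β)‖ := by
    intro n
    apply norm_pos_iff.mpr
    apply Complex.Gamma_ne_zero_of_re_pos
    rw [hre n]; exact hXpos n
  -- pointwise bound
  have hle : ∀ n : ℕ, ‖poch lam n‖ * x ^ n /
      (‖Complex.Gamma (α * n + β)‖ * n.factorial) ≤ cb n := by
    intro n
    have hlb := abs_Gamma_lb (z := α * n + β) (by rw [hre n]; exact hXpos n)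
    rw [hre n, him n] at hlb
    have hEle : (α.im * n + β.im) ^ 2 *
        (1 / (α.re * n + β.re) ^ 2 + 1 / (α.re * n + β.re)) ≤ K * (n + 1) := by
      set Xn := α.re * n + β.re with hXn
      set Yn := α.im * n + β.im with hYn
      have hXnpos : 0 < Xn := hXpos n
      have h2 : m * (n + 1) ≤ Xn := by
        have h1 : m ≤ α.re := min_le_left _ _
        have h2' : m ≤ β.re := min_le_right _ _
        have : m * n ≤ α.re * n := by
          apply mul_le_mul_of_nonneg_right h1 (Nat.cast_nonneg n)
        rw [hXn]; nlinarith
      have hY : Yn ^ 2 ≤ (M * (n + 1)) ^ 2 := by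
        have h1 : |Yn| ≤ M * (n + 1) := by
          calc |Yn| ≤ |α.im * n| + |β.im| := abs_add_le _ _
            _ = |α.im| * n + |β.im| := by rw [abs_mul, Nat.abs_cast]
            _ ≤ M * (n + 1) := by
                have h1 : 0 ≤ |α.im| := abs_nonneg _
                have h2 : 0 ≤ |β.im| := abs_nonneg _
                have h3 : (0:ℝ) ≤ n := Nat.cast_nonneg n
                rw [hMdef]; nlinarith
        calc Yn ^ 2 = |Yn| ^ 2 := (_root_.sq_abs Yn).symm
          _ ≤ (M * (n + 1)) ^ 2 := by
              apply pow_le_pow_left₀ (abs_nonneg _) h1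
      have hn1pos : (0:ℝ) < (n:ℝ) + 1 := by positivity
      have hmn1 : 0 < m * ((n:ℝ) + 1) := by positivity
      have hd1 : 1 / Xn ≤ (1 / m) / ((n:ℝ) + 1) := by
        rw [div_div]
        exact one_div_le_one_div_of_le hmn1 h2
      have hd2 : 1 / Xn ^ 2 ≤ (1 / m ^ 2) / ((n:ℝ) + 1) := by
        have e1 : 1 / Xn ^ 2 ≤ 1 / (m * ((n:ℝ) + 1)) ^ 2 := by
          apply one_div_le_one_div_of_le (by positivity)
          exact pow_le_pow_left₀ (le_of_lt hmn1) h2 2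
        have e2 : 1 / (m * ((n:ℝ) + 1)) ^ 2 ≤ (1 / m ^ 2) / ((n:ℝ) + 1) := by
          rw [show (1 / m ^ 2) / ((n:ℝ) + 1) = 1 / (m ^ 2 * ((n:ℝ) + 1)) from div_div 1 (m^2) ((n:ℝ)+1), mul_pow]
          apply one_div_le_one_div_of_le (by positivity)
          have hnn : (0:ℝ) ≤ (n:ℝ) := Nat.cast_nonneg n
          have h4 : 0 ≤ m ^ 2 * ((n:ℝ) + 1) * n := by positivity
          nlinarith
        linarith
      calc Yn ^ 2 * (1 / Xn ^ 2 + 1 / Xn)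
          ≤ (M * (n + 1)) ^ 2 * ((1 / m ^ 2) / ((n:ℝ) + 1) + (1 / m) / ((n:ℝ) + 1)) := by
            apply mul_le_mul hY _ (by positivity) (by positivity)
            linarith
        _ = K * (n + 1) := by
            rw [hKdef]
            field_simp
    have hAlb : G n * Real.exp (-(K * (n + 1))) ≤
        ‖Complex.Gamma (α * n + β)‖ := by
      calc G n * Real.exp (-(K * (n + 1)))
          ≤ G n * Real.exp (-((α.im * n + β.im) ^ 2 *
              (1 / (α.re * n + β.re) ^ 2 + 1 / (α.re * n + β.re)))) := by
            apply mul_le_mul_of_nonneg_left _ (le_of_lt (hGpos n))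
            exact Real.exp_le_exp.mpr (by linarith)
        _ ≤ _ := hlb
    have hAlbpos : 0 < G n * Real.exp (-(K * (n + 1))) := by
      have := hGpos n; positivity
    have hfacpos : (0:ℝ) < n.factorial := by exact_mod_cast n.factorial_pos
    have hP : (0:ℝ) ≤ ‖poch lam n‖ * x ^ n := by positivity
    calc ‖poch lam n‖ * x ^ n /
          (‖Complex.Gamma (α * n + β)‖ * n.factorial)
        ≤ ‖poch lam n‖ * x ^ n /
          ((G n * Real.exp (-(K * (n + 1)))) * n.factorial) := by
          apply div_le_div_of_nonneg_left hP (by positivity)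
          exact mul_le_mul_of_nonneg_right hAlb (le_of_lt hfacpos)
      _ = cb n := by
          rw [hcbdef, Real.exp_neg]
          field_simp
  -- summability of cb via ratio test
  have hsumcb : Summable cb := by
    apply summable_of_ratio_norm_eventually_le (r := 1/2) (by norm_num)
    set C : ℝ := 2 * (‖lam‖ + 1) * x * Real.exp K with hCdef
    have hlin : Tendsto (fun n : ℕ => α.re * n + β.re - 1) atTop atTop := by
      have h := tendsto_atTop_add_const_right atTop (β.re - 1)
        (tendsto_natCast_atTop_atTop.const_mul_atTop hα)
      exact Tendsto.congr (fun n => by ring) h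
    have hrp : Tendsto (fun n : ℕ => (α.re * n + β.re - 1) ^ (α.re)) atTop atTop :=
      (tendsto_rpow_atTop hα).comp hlin
    filter_upwards [hrp.eventually_ge_atTop C, hlin.eventually_ge_atTop 1] with n h1 h2
    rw [Real.norm_of_nonneg (hcbnn _), Real.norm_of_nonneg (hcbnn _)]
    set Xn := α.re * n + β.re with hXn
    have hXn1 : 1 < Xn := by linarith
    have hrppos : 0 < (Xn - 1) ^ (α.re) := Real.rpow_pos_of_pos (by linarith) _
    have hg : G n * (Xn - 1) ^ (α.re) ≤ G (n + 1) := by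
      have := gamma_ratio_lb hXn1 hα
      convert this using 2
      push_cast
      ring
    have hpoch : ‖poch lam (n + 1)‖ ≤
        ‖poch lam n‖ * ((‖lam‖ + 1) * (n + 1)) := by
      have : poch lam (n + 1) = poch lam n * (lam + n) := Finset.prod_range_succ _ n
      rw [this, norm_mul]
      apply mul_le_mul_of_nonneg_left _ (norm_nonneg _)
      calc ‖lam + n‖ ≤ ‖lam‖ + ‖(n:ℂ)‖ :=
            norm_add_le _ _
        _ = ‖lam‖ + n := by rw [Complex.norm_natCast]
        _ ≤ (‖lam‖ + 1) * (n + 1) := by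
            have h0 : 0 ≤ ‖lam‖ := norm_nonneg _
            have h3 : (0:ℝ) ≤ n := Nat.cast_nonneg n
            nlinarith
    have hfacpos : (0:ℝ) < n.factorial := by exact_mod_cast n.factorial_pos
    have hGn := hGpos n
    have hGn1 := hGpos (n + 1)
    -- step 1 : cb (n+1) ≤ num / den
    have step1 : cb (n + 1) ≤
        (‖poch lam n‖ * ((‖lam‖ + 1) * (n + 1)) *
          (x ^ n * x) * (Real.exp (K * (n + 1)) * Real.exp K)) /
        ((G n * (Xn - 1) ^ (α.re)) * (n.factorial * (n + 1))) := by
      have hexp : Real.exp (K * ((↑(n + 1):ℝ) + 1)) =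
          Real.exp (K * ((n:ℝ) + 1)) * Real.exp K := by
        rw [← Real.exp_add]; congr 1; push_cast; ring
      have hdenpos : 0 < (G n * (Xn - 1) ^ (α.re)) * ((n.factorial:ℝ) * (n + 1)) := by
        apply mul_pos (mul_pos hGn hrppos) (by positivity)
      apply div_le_div₀ (by positivity) _ hdenpos _
      · calc ‖poch lam (n + 1)‖ * x ^ (n + 1) * Real.exp (K * ((↑(n + 1):ℝ) + 1))
            = ‖poch lam (n + 1)‖ *
                (x ^ n * x * (Real.exp (K * ((n:ℝ) + 1)) * Real.exp K)) := by
              rw [pow_succ, hexp]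
              ring
          _ ≤ ‖poch lam n‖ * ((‖lam‖ + 1) * (n + 1)) *
                (x ^ n * x) * (Real.exp (K * (n + 1)) * Real.exp K) := by
              have := mul_le_mul_of_nonneg_right hpoch
                (le_of_lt (show (0:ℝ) < x ^ n * x * (Real.exp (K * ((n:ℝ) + 1)) * Real.exp K)
                  by positivity))
              calc ‖poch lam (n + 1)‖ *
                    (x ^ n * x * (Real.exp (K * ((n:ℝ) + 1)) * Real.exp K))
                  ≤ ‖poch lam n‖ * ((‖lam‖ + 1) * (n + 1)) *
                    (x ^ n * x * (Real.exp (K * ((n:ℝ) + 1)) * Real.exp K)) := this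
                _ = _ := by ring
      · calc (G n * (Xn - 1) ^ (α.re)) * (n.factorial * (n + 1))
            ≤ G (n + 1) * (n.factorial * (n + 1)) := by
              apply mul_le_mul_of_nonneg_right hg (by positivity)
          _ = G (n + 1) * ((n + 1).factorial) := by
              rw [Nat.factorial_succ]
              push_cast
              ring
    -- step 2
    have key : cb (n + 1) ≤ cb n * (((‖lam‖ + 1) * x * Real.exp K) /
        ((Xn - 1) ^ (α.re))) := by
      refine le_trans step1 (le_of_eq ?_)
      have hiden : (‖poch lam n‖ * ((‖lam‖ + 1) * (n + 1)) *
          (x ^ n * x) * (Real.exp (K * (n + 1)) * Real.exp K)) /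
          ((G n * (Xn - 1) ^ (α.re)) * ((n.factorial:ℝ) * (n + 1))) =
          (‖poch lam n‖ * x ^ n * Real.exp (K * ((n:ℝ) + 1)) /
            (G n * n.factorial)) *
          (((‖lam‖ + 1) * x * Real.exp K * ((n:ℝ) + 1)) /
            ((Xn - 1) ^ (α.re) * ((n:ℝ) + 1))) := by
        rw [div_mul_div_comm]
        ring
      rw [hiden, mul_div_mul_right _ _ (ne_of_gt (show (0:ℝ) < (n:ℝ) + 1 by positivity))]
    have hfrac : ((‖lam‖ + 1) * x * Real.exp K) / ((Xn - 1) ^ (α.re)) ≤ 1 / 2 := by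
      rw [div_le_iff₀ hrppos]
      rw [hCdef] at h1
      linarith
    calc cb (n + 1) ≤ cb n * (((‖lam‖ + 1) * x * Real.exp K) /
          ((Xn - 1) ^ (α.re))) := key
      _ ≤ cb n * (1 / 2) := mul_le_mul_of_nonneg_left hfrac (hcbnn n)
      _ = 1 / 2 * cb n := by ring
  exact Summable.of_nonneg_of_le (fun n => by positivity) hle hsumcb

lemma integrableOn_core {u v : ℂ} (hu : 0 < u.re) (hv : 0 < v.re) {x : ℝ} (hx : 0 < x) :
    IntegrableOn (fun τ : ℝ => (τ:ℂ) ^ (u - 1) * ((x:ℂ) - τ) ^ (v - 1)) (Ioc 0 x) := by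
  have h := (Complex.betaIntegral_convergent hu hv).comp_mul_left (c := x⁻¹)
  rw [zero_div, one_div, inv_inv] at h
  have h3 := h.const_mul ((x:ℂ) ^ (u - 1) * (x:ℂ) ^ (v - 1))
  rw [intervalIntegrable_iff, uIoc_of_le hx.le] at h3
  apply h3.congr_fun _ measurableSet_Ioc
  intro τ hτ
  obtain ⟨hτ0, hτx⟩ := hτ
  have ht0 : 0 ≤ x⁻¹ * τ := by positivity
  have h1t : 0 ≤ 1 - x⁻¹ * τ := by
    rw [sub_nonneg]
    rw [inv_mul_le_iff₀ hx]
    simpa using hτx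
  have hxC : (x:ℂ) ≠ 0 := Complex.ofReal_ne_zero.mpr (ne_of_gt hx)
  have e1 : ((x⁻¹ * τ : ℝ) : ℂ) ^ (u - 1) * ((1:ℂ) - ((x⁻¹ * τ : ℝ) : ℂ)) ^ (v - 1) =
      ((x⁻¹ * τ : ℝ) : ℂ) ^ (u - 1) * (((1 - x⁻¹ * τ : ℝ)) : ℂ) ^ (v - 1) := by
    norm_cast
  calc (x:ℂ) ^ (u - 1) * (x:ℂ) ^ (v - 1) *
        (((x⁻¹ * τ : ℝ) : ℂ) ^ (u - 1) * ((1:ℂ) - ((x⁻¹ * τ : ℝ) : ℂ)) ^ (v - 1))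
      = ((x:ℂ) ^ (u - 1) * ((x⁻¹ * τ : ℝ) : ℂ) ^ (u - 1)) *
        ((x:ℂ) ^ (v - 1) * (((1 - x⁻¹ * τ : ℝ)) : ℂ) ^ (v - 1)) := by
        rw [e1]; ring
    _ = (τ:ℂ) ^ (u - 1) * ((x:ℂ) - τ) ^ (v - 1) := by
        rw [← Complex.mul_cpow_ofReal_nonneg hx.le ht0,
          ← Complex.mul_cpow_ofReal_nonneg hx.le h1t]
        congr 2
        · push_cast
          field_simp
        · push_cast
          field_simp

/-- the extended Riemann–Liouville fractional derivative of order `δ - λ`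
(with two-parameter exponential regularizer) of `z^(δ-1) E^λ_{α,β}(z)` gives the extended
(p,q)-Mittag-Leffler function. -/
theorem extML_fractional_derivative (p q : ℝ) (hp : 0 ≤ p) (hq : 0 ≤ q)
    (α β δ lam : ℂ) (hδlam : δ.re < lam.re) (hδ : 0 < δ.re)
    (hα : 0 < α.re) (hβ : 0 < β.re) (x : ℝ) (hx : 0 < x) :
    (1 / Complex.Gamma (lam - δ)) *
        ∫ τ in (0:ℝ)..x, (τ : ℂ) ^ (δ - 1) * prabhakarML α β lam τ *
          ((x : ℂ) - τ) ^ (lam - δ - 1) *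
          Complex.exp (-((p : ℂ) * x / τ) - (q : ℂ) * x / ((x : ℂ) - τ)) =
      (x : ℂ) ^ (lam - 1) * (cBeta δ (lam - δ) / Complex.Gamma (lam - δ)) *
        extML α β δ lam p q x := by
  have hxC : (x:ℂ) ≠ 0 := Complex.ofReal_ne_zero.mpr (ne_of_gt hx)
  have hld : 0 < (lam - δ).re := by
    rw [Complex.sub_re]; linarith
  have hΓld : Complex.Gamma (lam - δ) ≠ 0 := Complex.Gamma_ne_zero_of_re_pos hld
  have hre : ∀ n : ℕ, (α * n + β).re = α.re * n + β.re := fun n => by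
    simp [Complex.add_re, Complex.mul_re]
  have hΓn : ∀ n : ℕ, Complex.Gamma (α * n + β) ≠ 0 := fun n =>
    Complex.Gamma_ne_zero_of_re_pos (by rw [hre n]; positivity)
  have hfacC : ∀ n : ℕ, ((n.factorial : ℂ)) ≠ 0 := fun n =>
    Nat.cast_ne_zero.mpr n.factorial_ne_zero
  have hcB : cBeta δ (lam - δ) ≠ 0 := by
    rw [cBeta]
    apply div_ne_zero
    · exact mul_ne_zero (Complex.Gamma_ne_zero_of_re_pos hδ)
        (Complex.Gamma_ne_zero_of_re_pos hld)
    · apply Complex.Gamma_ne_zero_of_re_pos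
      rw [show δ + (lam - δ) = lam by ring]
      linarith
  set c : ℕ → ℂ := fun n => poch lam n / (Complex.Gamma (α * n + β) * n.factorial) with hc
  set W : ℝ → ℂ := fun τ => (τ:ℂ) ^ (δ - 1) * ((x:ℂ) - τ) ^ (lam - δ - 1) *
      Complex.exp (-((p:ℂ) * x / τ) - (q:ℂ) * x / ((x:ℂ) - τ)) with hW
  set H : ℕ → ℝ → ℂ := fun n τ => c n * ((τ:ℂ) ^ n * W τ) with hH
  set a : ℕ → ℝ := fun n => ‖poch lam n‖ * x ^ n /
      (‖Complex.Gamma (α * n + β)‖ * n.factorial) with ha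
  -- Step 1: integrand = ∑' n, H n τ
  have key : ∀ τ : ℝ, (τ:ℂ) ^ (δ - 1) * prabhakarML α β lam τ * ((x:ℂ) - τ) ^ (lam - δ - 1) *
      Complex.exp (-((p:ℂ) * x / τ) - (q:ℂ) * x / ((x:ℂ) - τ)) = ∑' n : ℕ, H n τ := by
    intro τ
    have step : (τ:ℂ) ^ (δ - 1) * prabhakarML α β lam τ * ((x:ℂ) - τ) ^ (lam - δ - 1) *
        Complex.exp (-((p:ℂ) * x / τ) - (q:ℂ) * x / ((x:ℂ) - τ)) =
        (∑' n : ℕ, poch lam n * (τ:ℂ) ^ n / (Complex.Gamma (α * n + β) * n.factorial)) * W τ := by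
      rw [prabhakarML, hW]; ring
    rw [step, ← tsum_mul_right]
    exact tsum_congr fun n => by rw [hH, hc]; ring
  -- integrability of the dominating kernel
  have hKint : IntegrableOn (fun τ : ℝ => (τ:ℂ) ^ (δ - 1) * ((x:ℂ) - τ) ^ (lam - δ - 1))
      (Ioc 0 x) := integrableOn_core hδ hld hx
  have hKnorm : IntegrableOn (fun τ : ℝ => ‖(τ:ℂ) ^ (δ - 1) * ((x:ℂ) - τ) ^ (lam - δ - 1)‖)
      (Ioc 0 x) := hKint.norm
  -- pointwise bound
  have hWbound : ∀ n : ℕ, ∀ τ ∈ Ioc (0:ℝ) x, ‖H n τ‖ ≤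
      a n * ‖(τ:ℂ) ^ (δ - 1) * ((x:ℂ) - τ) ^ (lam - δ - 1)‖ := by
    intro n τ hτ
    obtain ⟨hτ0, hτx⟩ := hτ
    have hexp : ‖Complex.exp (-((p:ℂ) * x / τ) - (q:ℂ) * x / ((x:ℂ) - τ))‖ ≤ 1 := by
      have harg : (-((p:ℂ) * x / τ) - (q:ℂ) * x / ((x:ℂ) - τ)) =
          (((-(p * x / τ) - q * x / (x - τ) : ℝ)) : ℂ) := by push_cast; ring
      rw [harg, Complex.norm_exp, Complex.ofReal_re]
      rw [Real.exp_le_one_iff]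
      have h1 : 0 ≤ p * x / τ := by positivity
      have h2 : 0 ≤ q * x / (x - τ) := by
        apply div_nonneg (by positivity)
        linarith
      linarith
    have h1 : ‖H n τ‖ = ‖c n‖ * ‖(τ:ℂ) ^ n‖ *
        ‖(τ:ℂ) ^ (δ - 1) * ((x:ℂ) - τ) ^ (lam - δ - 1)‖ *
        ‖Complex.exp (-((p:ℂ) * x / τ) - (q:ℂ) * x / ((x:ℂ) - τ))‖ := by
      rw [hH, hW]
      simp only [norm_mul]
      ring
    have h2 : ‖(τ:ℂ) ^ n‖ ≤ x ^ n := by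
      rw [norm_pow, Complex.norm_real, Real.norm_eq_abs, abs_of_pos hτ0]
      exact pow_le_pow_left₀ hτ0.le hτx n
    have h3 : ‖c n‖ = ‖poch lam n‖ /
        (‖Complex.Gamma (α * n + β)‖ * n.factorial) := by
      rw [hc]
      simp only [norm_div, norm_mul, Complex.norm_natCast]
    rw [h1, h3, ha]
    have hKn : 0 ≤ ‖(τ:ℂ) ^ (δ - 1) * ((x:ℂ) - τ) ^ (lam - δ - 1)‖ := norm_nonneg _
    have hcn : 0 ≤ ‖poch lam n‖ /
        (‖Complex.Gamma (α * n + β)‖ * n.factorial) := by positivity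
    calc ‖poch lam n‖ / (‖Complex.Gamma (α * n + β)‖ * n.factorial) *
          ‖(τ:ℂ) ^ n‖ * ‖(τ:ℂ) ^ (δ - 1) * ((x:ℂ) - τ) ^ (lam - δ - 1)‖ *
          ‖Complex.exp (-((p:ℂ) * x / τ) - (q:ℂ) * x / ((x:ℂ) - τ))‖
        ≤ ‖poch lam n‖ / (‖Complex.Gamma (α * n + β)‖ * n.factorial) *
          (x ^ n) * ‖(τ:ℂ) ^ (δ - 1) * ((x:ℂ) - τ) ^ (lam - δ - 1)‖ * 1 := by
          gcongr
      _ = ‖poch lam n‖ * x ^ n /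
            (‖Complex.Gamma (α * n + β)‖ * n.factorial) *
          ‖(τ:ℂ) ^ (δ - 1) * ((x:ℂ) - τ) ^ (lam - δ - 1)‖ := by ring
  -- integrability of H n
  have hHint : ∀ n : ℕ, IntegrableOn (H n) (Ioc 0 x) := by
    intro n
    rw [integrableOn_Ioc_iff_integrableOn_Ioo]
    have hmeas : AEStronglyMeasurable (H n) (volume.restrict (Ioo 0 x)) := by
      apply ContinuousOn.aestronglyMeasurable _ measurableSet_Ioo
      intro τ hτ
      obtain ⟨hτ0, hτx⟩ := hτ
      apply ContinuousAt.continuousWithinAt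
      have hτC : (τ:ℂ) ≠ 0 := Complex.ofReal_ne_zero.mpr hτ0.ne'
      have hxτC : (x:ℂ) - τ ≠ 0 :=
        sub_ne_zero.mpr (by exact_mod_cast hτx.ne')
      have c1 : ContinuousAt (fun τ : ℝ => (τ:ℂ) ^ (δ - 1)) τ :=
        continuousAt_ofReal_cpow_const τ _ (Or.inr hτ0.ne')
      have c2 : ContinuousAt (fun τ : ℝ => ((x:ℂ) - τ) ^ (lam - δ - 1)) τ := by
        apply ContinuousAt.cpow
          ((continuous_const.sub Complex.continuous_ofReal).continuousAt) continuousAt_const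
        change (x:ℂ) - τ ∈ Complex.slitPlane
        rw [show (x:ℂ) - τ = ((x - τ : ℝ) : ℂ) by push_cast; ring]
        exact Complex.ofReal_mem_slitPlane.mpr (by linarith)
      have c3 : ContinuousAt (fun τ : ℝ =>
          Complex.exp (-((p:ℂ) * x / τ) - (q:ℂ) * x / ((x:ℂ) - τ))) τ := by
        apply ContinuousAt.cexp
        apply ContinuousAt.sub
        · apply ContinuousAt.neg
          exact (continuousAt_const.div Complex.continuous_ofReal.continuousAt hτC)
        · exact (continuousAt_const.div
            (continuous_const.sub Complex.continuous_ofReal).continuousAt hxτC)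
      rw [hH, hW]
      exact continuousAt_const.mul ((Complex.continuous_ofReal.continuousAt.pow n).mul
        ((c1.mul c2).mul c3))
    apply Integrable.mono' (((hKnorm.mono_set Ioo_subset_Ioc_self).const_mul (a n))) hmeas
    rw [ae_restrict_iff' measurableSet_Ioo]
    exact ae_of_all _ (fun τ hτ => hWbound n τ (Ioo_subset_Ioc_self hτ))
  -- summability of norms of integrals
  have hnormsum : Summable (fun n : ℕ => ∫ τ in Ioc (0:ℝ) x, ‖H n τ‖) := by
    apply Summable.of_nonneg_of_le
      (fun n => integral_nonneg (fun τ => norm_nonneg _)) (fun n => ?_)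
      (((summable_aux α β lam hα hβ hx).mul_right
        (∫ τ in Ioc (0:ℝ) x, ‖(τ:ℂ) ^ (δ - 1) * ((x:ℂ) - τ) ^ (lam - δ - 1)‖)))
    calc (∫ τ in Ioc (0:ℝ) x, ‖H n τ‖)
        ≤ ∫ τ in Ioc (0:ℝ) x, a n * ‖(τ:ℂ) ^ (δ - 1) * ((x:ℂ) - τ) ^ (lam - δ - 1)‖ := by
          apply integral_mono_ae (hHint n).norm (hKnorm.const_mul _)
          rw [EventuallyLE, ae_restrict_iff' measurableSet_Ioc]
          exact ae_of_all _ (hWbound n)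
      _ = a n * ∫ τ in Ioc (0:ℝ) x, ‖(τ:ℂ) ^ (δ - 1) * ((x:ℂ) - τ) ^ (lam - δ - 1)‖ :=
          integral_const_mul _ _
  -- interchange
  have interchange : (∫ τ in (0:ℝ)..x, ∑' n : ℕ, H n τ) =
      ∑' n : ℕ, ∫ τ in Ioc (0:ℝ) x, H n τ := by
    rw [intervalIntegral.integral_of_le hx.le]
    exact (integral_tsum_of_summable_integral_norm hHint hnormsum).symm
  -- per-n evaluation
  have hJ : ∀ n : ℕ, (∫ τ in Ioc (0:ℝ) x, H n τ) =
      c n * ((x:ℂ) ^ (lam + n - 1) * extBeta p q (δ + n) (lam - δ)) := by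
    intro n
    rw [← intervalIntegral.integral_of_le hx.le]
    have hHn : ∀ τ : ℝ, H n τ = c n * ((τ:ℂ) ^ n * W τ) := fun τ => by rw [hH]
    rw [intervalIntegral.integral_congr (fun τ _ => hHn τ)]
    rw [intervalIntegral.integral_const_mul]
    congr 1
    have hsub := intervalIntegral.smul_integral_comp_mul_left
      (f := fun τ : ℝ => (τ:ℂ) ^ n * W τ) (a := 0) (b := 1) x
    rw [mul_zero, mul_one] at hsub
    rw [← hsub]
    have hcong : (∫ t in (0:ℝ)..1, ((x * t : ℝ) : ℂ) ^ n * W (x * t)) =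
        ∫ t in (0:ℝ)..1, ((x:ℂ) ^ n * (x:ℂ) ^ (δ - 1) * (x:ℂ) ^ (lam - δ - 1)) *
          ((t:ℂ) ^ (δ + n - 1) * (1 - (t:ℂ)) ^ (lam - δ - 1) *
            Complex.exp (-((p:ℂ) / t) - (q:ℂ) / (1 - (t:ℂ)))) := by
      apply intervalIntegral.integral_congr_ae
      apply ae_of_all
      intro t ht
      rw [uIoc_of_le (by norm_num : (0:ℝ) ≤ 1)] at ht
      obtain ⟨ht0, ht1⟩ := ht
      have htC : (t:ℂ) ≠ 0 := Complex.ofReal_ne_zero.mpr ht0.ne'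
      have h1t : (0:ℝ) ≤ 1 - t := by linarith
      simp only [hW]
      have eA : ((x * t : ℝ) : ℂ) ^ n = (x:ℂ) ^ n * (t:ℂ) ^ n := by
        push_cast; rw [mul_pow]
      have eB : ((x * t : ℝ) : ℂ) ^ (δ - 1) = (x:ℂ) ^ (δ - 1) * (t:ℂ) ^ (δ - 1) := by
        rw [Complex.ofReal_mul]
        exact Complex.mul_cpow_ofReal_nonneg hx.le ht0.le _
      have eC : (x:ℂ) - ((x * t : ℝ) : ℂ) = ((x * (1 - t) : ℝ) : ℂ) := by
        push_cast; ring
      have eD : ((x * (1 - t) : ℝ) : ℂ) ^ (lam - δ - 1) =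
          (x:ℂ) ^ (lam - δ - 1) * (1 - (t:ℂ)) ^ (lam - δ - 1) := by
        rw [Complex.ofReal_mul, Complex.mul_cpow_ofReal_nonneg hx.le h1t]
        norm_cast
      have eE : (p:ℂ) * x / ((x * t : ℝ) : ℂ) = (p:ℂ) / t := by
        push_cast
        rw [show (p:ℂ) * x = (x:ℂ) * p by ring]
        exact mul_div_mul_left _ _ hxC
      have eF : (q:ℂ) * x / ((x * (1 - t) : ℝ) : ℂ) = (q:ℂ) / (1 - (t:ℂ)) := by
        push_cast
        rw [show (q:ℂ) * x = (x:ℂ) * q by ring]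
        exact mul_div_mul_left _ _ hxC
      have eG : (t:ℂ) ^ (δ - 1) * (t:ℂ) ^ n = (t:ℂ) ^ (δ + n - 1) := by
        rw [← Complex.cpow_natCast (t:ℂ) n, ← Complex.cpow_add _ _ htC]
        congr 1; ring
      rw [eA, eB, eC, eD, eE, eF, ← eG]
      ring
    rw [hcong, intervalIntegral.integral_const_mul, extBeta]
    have hpow : (x:ℂ) ^ (lam + n - 1) =
        (x:ℂ) * ((x:ℂ) ^ n * ((x:ℂ) ^ (δ - 1) * (x:ℂ) ^ (lam - δ - 1))) := by
      have e : lam + (n:ℂ) - 1 = 1 + ((n:ℂ) + ((δ - 1) + (lam - δ - 1))) := by ring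
      rw [e, Complex.cpow_add _ _ hxC, Complex.cpow_add _ _ hxC, Complex.cpow_add _ _ hxC,
        Complex.cpow_one, Complex.cpow_natCast]
    rw [Complex.real_smul, hpow]
    have ePQ : ((δ:ℂ) + n - 1) = δ + (n:ℂ) - 1 := rfl
    ring_nf
  -- final assembly
  calc (1 / Complex.Gamma (lam - δ)) *
        ∫ τ in (0:ℝ)..x, (τ:ℂ) ^ (δ - 1) * prabhakarML α β lam τ *
          ((x:ℂ) - τ) ^ (lam - δ - 1) *
          Complex.exp (-((p:ℂ) * x / τ) - (q:ℂ) * x / ((x:ℂ) - τ))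
      = (1 / Complex.Gamma (lam - δ)) * ∑' n : ℕ, ∫ τ in Ioc (0:ℝ) x, H n τ := by
        rw [intervalIntegral.integral_congr (fun τ _ => key τ), interchange]
    _ = ∑' n : ℕ, (1 / Complex.Gamma (lam - δ)) *
          (c n * ((x:ℂ) ^ (lam + n - 1) * extBeta p q (δ + n) (lam - δ))) := by
        rw [← tsum_mul_left]
        exact tsum_congr fun n => by rw [hJ n]
    _ = (x:ℂ) ^ (lam - 1) * (cBeta δ (lam - δ) / Complex.Gamma (lam - δ)) *
          extML α β δ lam p q x := by
        rw [extML, ← tsum_mul_left]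
        apply tsum_congr
        intro n
        have hpow : (x:ℂ) ^ (lam + n - 1) = (x:ℂ) ^ (lam - 1) * (x:ℂ) ^ n := by
          rw [← Complex.cpow_natCast (x:ℂ) n, ← Complex.cpow_add _ _ hxC]
          congr 1; ring
        rw [hc, hpow]
        field_simp [hΓld, hΓn n, hfacC n, hcB]
end
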